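/- arXiv:1910.10074 — 5 statements merged into one kernel-verified Lean document; each statement's English description precedes it below -/
import Mathlib

section
/- For every integer k ≥ 3 and every ε ∈ (0, 1/12], setting N = ⌊1/(12ε)⌋, one has d(k,ε) ≥ log(r_k(N)) / log(12N). -/
open Set MeasureTheory
open scoped ENNReal

/-- A set `E ⊆ ℝ` `ε`-avoids `k`-term arithmetic progressions: for every `k`-AP
`P = {a + i·lam : 0 ≤ i < k}` with gap `lam > 0`, `sup_{p ∈ P} inf_{x ∈ E} |x - p| ≥ ε·lam`,
i.e. some point of `P` is at distance at least `ε·lam` from every point of `E`. -/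
def Avoids (k : ℕ) (ε : ℝ) (E : Set ℝ) : Prop :=
  ∀ a lam : ℝ, 0 < lam → ∃ i : ℕ, i < k ∧ ∀ x ∈ E, ε * lam ≤ |x - (a + i * lam)|

/-- `A` contains a `k`-term arithmetic progression of integers (gap `d ≥ 1`). -/
def ContainsAPNat (k : ℕ) (A : Finset ℕ) : Prop :=
  ∃ a d : ℕ, 1 ≤ d ∧ ∀ i : ℕ, i < k → a + i * d ∈ A

/-- `rk k N` is the maximal cardinality of a subset of `{1, …, N}` without
`k`-term arithmetic progressions. -/
noncomputable def rk (k N : ℕ) : ℕ :=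
  sSup {m : ℕ | ∃ A : Finset ℕ, A ⊆ Finset.Icc 1 N ∧ ¬ ContainsAPNat k A ∧ A.card = m}

/-- `d(k, ε)`: the supremum of Hausdorff dimensions of bounded sets `ε`-avoiding `k`-APs. -/
noncomputable def dAvoid (k : ℕ) (ε : ℝ) : ℝ≥0∞ :=
  ⨆ (E : Set ℝ) (_ : Bornology.IsBounded E ∧ Avoids k ε E), dimH E

/-- value of a digit sequence in base M with digits 12*σ j - 6 -/
noncomputable def capVal (M : ℕ) (σ : ℕ → ℕ) : ℝ :=
  ∑' j : ℕ, (12 * (σ j : ℝ) - 6) * ((M : ℝ)⁻¹) ^ (j + 1)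

def capPref (M : ℕ) (σ : ℕ → ℕ) : ℕ → ℤ
  | 0 => 0
  | (n + 1) => M * capPref M σ n + (12 * (σ n : ℤ) - 6)

section C

variable {N : ℕ} {σ : ℕ → ℕ}

lemma hMgt1 (hN : 1 ≤ N) : (1 : ℝ) < (12 * N : ℕ) := by
  have : (1:ℕ) < 12 * N := by omega
  exact_mod_cast this

lemma hMinv_lt1 (hN : 1 ≤ N) : ((12 * N : ℕ) : ℝ)⁻¹ < 1 := by
  rw [inv_lt_one_iff₀]; right; exact hMgt1 hN

lemma hMinv_nonneg : (0:ℝ) ≤ ((12 * N : ℕ) : ℝ)⁻¹ := by positivity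

lemma capSummable (hN : 1 ≤ N) (hσ1 : ∀ j, 1 ≤ σ j) (hσN : ∀ j, σ j ≤ N) :
    Summable (fun j : ℕ => (12 * (σ j : ℝ) - 6) * (((12 * N : ℕ) : ℝ)⁻¹) ^ (j + 1)) := by
  set r : ℝ := ((12 * N : ℕ) : ℝ)⁻¹ with hr
  have hr0 : 0 ≤ r := hMinv_nonneg
  have hr1 : r < 1 := hMinv_lt1 hN
  have hgeo : Summable (fun j : ℕ => ((12 * N : ℕ) : ℝ) * r ^ (j + 1)) := by
    have : Summable (fun j : ℕ => r ^ j) := summable_geometric_of_lt_one hr0 hr1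
    exact ((this.mul_right r).mul_left _).congr (fun j => by ring)
  refine Summable.of_nonneg_of_le (fun j => ?_) (fun j => ?_) hgeo
  · have h1 : (1:ℝ) ≤ (σ j : ℝ) := by exact_mod_cast hσ1 j
    have h2 : (0:ℝ) ≤ 12 * (σ j : ℝ) - 6 := by linarith
    exact mul_nonneg h2 (by positivity)
  · have h2 : (σ j : ℝ) ≤ (N : ℝ) := by exact_mod_cast hσN j
    have : (12 * (σ j : ℝ) - 6) ≤ ((12 * N : ℕ) : ℝ) := by push_cast; linarith
    exact mul_le_mul_of_nonneg_right this (by positivity)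

lemma geom_tail (hN : 1 ≤ N) :
    ∑' j : ℕ, (((12 * N : ℕ) : ℝ)⁻¹) ^ (j + 1) = (((12 * N : ℕ) : ℝ) - 1)⁻¹ := by
  set r : ℝ := ((12 * N : ℕ) : ℝ)⁻¹ with hr
  have hr0 : 0 ≤ r := hMinv_nonneg
  have hr1 : r < 1 := hMinv_lt1 hN
  have hM1 : (1:ℝ) < ((12 * N : ℕ) : ℝ) := hMgt1 hN
  have : ∑' j : ℕ, r ^ (j + 1) = (∑' j : ℕ, r ^ j) * r := by
    rw [← tsum_mul_right]; exact tsum_congr fun j => by ring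
  have hM0 : ((12 * N : ℕ) : ℝ) ≠ 0 := by linarith
  have hMm1 : ((12 * N : ℕ) : ℝ) - 1 ≠ 0 := by linarith
  have h1r : (1:ℝ) - r ≠ 0 := by rw [hr]; intro h; apply hMm1; field_simp at h ⊢; linarith [h]
  rw [this, tsum_geometric_of_lt_one hr0 hr1, hr]
  have e1 : (1:ℝ) - (↑(12 * N))⁻¹ = (↑(12 * N) - 1) / (↑(12 * N) : ℝ) := by field_simp
  rw [e1, inv_div, div_mul_eq_mul_div, mul_inv_cancel₀ hM0, one_div]

lemma capVal_le (hN : 1 ≤ N) (hσ1 : ∀ j, 1 ≤ σ j) (hσN : ∀ j, σ j ≤ N) :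
    capVal (12 * N) σ ≤ (((12 * N : ℕ) : ℝ) - 6) / (((12 * N : ℕ) : ℝ) - 1) := by
  have hs := capSummable hN hσ1 hσN
  set r : ℝ := ((12 * N : ℕ) : ℝ)⁻¹ with hr
  have hgeo : Summable (fun j : ℕ => (((12 * N : ℕ) : ℝ) - 6) * r ^ (j + 1)) := by
    have : Summable (fun j : ℕ => r ^ j) := summable_geometric_of_lt_one hMinv_nonneg (hMinv_lt1 hN)
    exact ((this.mul_right r).mul_left (((12 * N : ℕ) : ℝ) - 6)).congr (fun j => by ring)
  have hle : capVal (12 * N) σ ≤ ∑' j : ℕ, (((12 * N : ℕ) : ℝ) - 6) * r ^ (j + 1) := by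
    refine Summable.tsum_le_tsum (fun j => ?_) hs hgeo
    have h2 : (σ j : ℝ) ≤ (N : ℝ) := by exact_mod_cast hσN j
    have : (12 * (σ j : ℝ) - 6) ≤ ((12 * N : ℕ) : ℝ) - 6 := by push_cast; linarith
    exact mul_le_mul_of_nonneg_right this (by positivity)
  calc capVal (12 * N) σ ≤ _ := hle
    _ = (((12 * N : ℕ) : ℝ) - 6) * (((12 * N : ℕ) : ℝ) - 1)⁻¹ := by
        rw [tsum_mul_left, geom_tail hN]
    _ = _ := by rw [div_eq_mul_inv]

lemma capVal_ge (hN : 1 ≤ N) (hσ1 : ∀ j, 1 ≤ σ j) (hσN : ∀ j, σ j ≤ N) :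
    6 / (((12 * N : ℕ) : ℝ) - 1) ≤ capVal (12 * N) σ := by
  have hs := capSummable hN hσ1 hσN
  set r : ℝ := ((12 * N : ℕ) : ℝ)⁻¹ with hr
  have hgeo : Summable (fun j : ℕ => (6:ℝ) * r ^ (j + 1)) := by
    have : Summable (fun j : ℕ => r ^ j) := summable_geometric_of_lt_one hMinv_nonneg (hMinv_lt1 hN)
    exact ((this.mul_right r).mul_left (6:ℝ)).congr (fun j => by ring)
  have hle : ∑' j : ℕ, (6:ℝ) * r ^ (j + 1) ≤ capVal (12 * N) σ := by
    refine Summable.tsum_le_tsum (fun j => ?_) hgeo hs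
    have h1 : (1:ℝ) ≤ (σ j : ℝ) := by exact_mod_cast hσ1 j
    have : (6:ℝ) ≤ 12 * (σ j : ℝ) - 6 := by linarith
    exact mul_le_mul_of_nonneg_right this (by positivity)
  calc (6:ℝ) / (((12 * N : ℕ) : ℝ) - 1)
      = 6 * (((12 * N : ℕ) : ℝ) - 1)⁻¹ := by rw [div_eq_mul_inv]
    _ = ∑' j : ℕ, (6:ℝ) * r ^ (j + 1) := by rw [tsum_mul_left, geom_tail hN]
    _ ≤ _ := hle

lemma capVal_mem_Ioo (hN : 1 ≤ N) (hσ1 : ∀ j, 1 ≤ σ j) (hσN : ∀ j, σ j ≤ N) :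
    capVal (12 * N) σ ∈ Set.Ioo (0:ℝ) 1 := by
  have hM : (12:ℝ) ≤ ((12 * N : ℕ) : ℝ) := by
    have : (12:ℕ) ≤ 12 * N := by omega
    exact_mod_cast this
  constructor
  · have := capVal_ge hN hσ1 hσN
    have h6 : (0:ℝ) < 6 / (((12 * N : ℕ) : ℝ) - 1) := by
      apply div_pos (by norm_num); linarith
    linarith
  · have := capVal_le hN hσ1 hσN
    have : (((12 * N : ℕ) : ℝ) - 6) / (((12 * N : ℕ) : ℝ) - 1) < 1 := by
      rw [div_lt_one (by linarith)]; linarith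
    linarith [capVal_le hN hσ1 hσN]

/-- base shift identity -/
lemma capVal_shift_one (hN : 1 ≤ N) (hσ1 : ∀ j, 1 ≤ σ j) (hσN : ∀ j, σ j ≤ N) :
    ((12 * N : ℕ) : ℝ) * capVal (12 * N) σ
      = (12 * (σ 0 : ℝ) - 6) + capVal (12 * N) (fun j => σ (j + 1)) := by
  have hs := capSummable hN hσ1 hσN
  set M : ℕ := 12 * N with hM
  have hM0 : ((M : ℕ) : ℝ) ≠ 0 := by
    have := hMgt1 (N := N) hN; rw [← hM] at this; linarith
  have key : ((M : ℕ) : ℝ) * capVal M σ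
      = ∑' j : ℕ, ((M:ℝ) * ((12 * (σ j : ℝ) - 6) * ((M : ℝ)⁻¹) ^ (j + 1))) := by
    rw [capVal, ← tsum_mul_left]
  rw [key]
  have hs2 : Summable (fun j : ℕ => ((M:ℝ) * ((12 * (σ j : ℝ) - 6) * ((M : ℝ)⁻¹) ^ (j + 1)))) :=
    hs.mul_left _
  rw [Summable.tsum_eq_zero_add hs2]
  congr 1
  · simp only [zero_add, pow_one]
    field_simp
  · rw [capVal]
    refine tsum_congr fun j => ?_
    have : ((M:ℝ)⁻¹) ^ (j + 1 + 1) = ((M:ℝ)⁻¹) ^ (j + 1) * (M:ℝ)⁻¹ := by ring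
    rw [this]
    field_simp

lemma capVal_split (hN : 1 ≤ N) (hσ1 : ∀ j, 1 ≤ σ j) (hσN : ∀ j, σ j ≤ N) (n : ℕ) :
    ((12 * N : ℕ) : ℝ) ^ n * capVal (12 * N) σ
      = (capPref (12 * N) σ n : ℝ) + capVal (12 * N) (fun j => σ (j + n)) := by
  induction n with
  | zero => simp [capPref]
  | succ n ih =>
    have hσ1' : ∀ j, 1 ≤ (fun j => σ (j + n)) j := fun j => hσ1 _
    have hσN' : ∀ j, (fun j => σ (j + n)) j ≤ N := fun j => hσN _
    have base := capVal_shift_one (σ := fun j => σ (j + n)) hN hσ1' hσN'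
    have heq : (fun j => σ (j + 1 + n)) = (fun j => σ (j + (n + 1))) := by
      funext j; congr 1; omega
    calc ((12 * N : ℕ) : ℝ) ^ (n+1) * capVal (12 * N) σ
        = ((12 * N : ℕ) : ℝ) * (((12 * N : ℕ) : ℝ) ^ n * capVal (12 * N) σ) := by ring
      _ = ((12 * N : ℕ) : ℝ) * ((capPref (12 * N) σ n : ℝ) + capVal (12 * N) (fun j => σ (j + n))) := by rw [ih]
      _ = ((12 * N : ℕ) : ℝ) * (capPref (12 * N) σ n : ℝ) + (((12 * N : ℕ) : ℝ) * capVal (12 * N) (fun j => σ (j + n))) := by ring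
      _ = (capPref (12 * N) σ (n+1) : ℝ) + capVal (12 * N) (fun j => σ (j + (n+1))) := by
          rw [base]
          simp only [Nat.zero_add, heq, capPref]
          push_cast
          ring

end C

section C2

variable {N : ℕ} {σ σ' : ℕ → ℕ}

lemma capPref_succ_form (n : ℕ) :
    capPref (12 * N) σ (n + 1) = 12 * (N * capPref (12 * N) σ n + (σ n : ℤ) - 1) + 6 := by
  simp only [capPref]
  push_cast
  ring

lemma capPref_sep (n : ℕ)
    (hne : capPref (12 * N) σ n ≠ capPref (12 * N) σ' n) :
    (12 : ℤ) ≤ |capPref (12 * N) σ n - capPref (12 * N) σ' n| := by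
  cases n with
  | zero => simp [capPref] at hne
  | succ n =>
    rw [capPref_succ_form (σ := σ), capPref_succ_form (σ := σ')] at *
    refine Int.le_of_dvd (abs_pos.2 (sub_ne_zero.2 hne)) ((dvd_abs _ _).mpr ?_)
    exact ⟨(N * capPref (12 * N) σ n + (σ n : ℤ) - 1) - (N * capPref (12 * N) σ' n + (σ' n : ℤ) - 1), by ring⟩

/-- uniqueness of division step -/
lemma capPref_step_inj (hN : 1 ≤ N) (hσ1 : ∀ j, 1 ≤ σ j) (hσN : ∀ j, σ j ≤ N)
    (hσ1' : ∀ j, 1 ≤ σ' j) (hσN' : ∀ j, σ' j ≤ N) (n : ℕ)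
    (h : capPref (12 * N) σ (n + 1) = capPref (12 * N) σ' (n + 1)) :
    capPref (12 * N) σ n = capPref (12 * N) σ' n ∧ σ n = σ' n := by
  simp only [capPref] at h
  have hd : (6 : ℤ) ≤ 12 * (σ n : ℤ) - 6 ∧ 12 * (σ n : ℤ) - 6 ≤ 12 * N - 6 := by
    constructor
    · have := hσ1 n; have : (1:ℤ) ≤ (σ n : ℤ) := by exact_mod_cast this
      linarith
    · have := hσN n; have : ((σ n : ℤ)) ≤ (N:ℤ) := by exact_mod_cast this
      linarith
  have hd' : (6 : ℤ) ≤ 12 * (σ' n : ℤ) - 6 ∧ 12 * (σ' n : ℤ) - 6 ≤ 12 * N - 6 := by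
    constructor
    · have := hσ1' n; have : (1:ℤ) ≤ (σ' n : ℤ) := by exact_mod_cast this
      linarith
    · have := hσN' n; have : ((σ' n : ℤ)) ≤ (N:ℤ) := by exact_mod_cast this
      linarith
  have hM : ((12 * N : ℕ) : ℤ) = 12 * (N : ℤ) := by push_cast; ring
  rw [hM] at h
  have hpp : capPref (12 * N) σ n = capPref (12 * N) σ' n := by
    by_contra hne
    have hsep := capPref_sep (σ := σ) (σ' := σ') n hne
    have h12 : 12 * (N:ℤ) * |capPref (12 * N) σ n - capPref (12 * N) σ' n| =
        |12 * (σ' n : ℤ) - 6 - (12 * (σ n : ℤ) - 6)| := by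
      rw [← abs_of_nonneg (a := 12 * (N:ℤ)) (by positivity), ← abs_mul]
      congr 1
      linarith
    have hNz : (1:ℤ) ≤ (N:ℤ) := by exact_mod_cast hN
    have hlt : |12 * (σ' n : ℤ) - 6 - (12 * (σ n : ℤ) - 6)| ≤ 12 * N - 12 := by
      rw [abs_le]; omega
    nlinarith [hsep, hlt, h12]
  constructor
  · exact hpp
  · rw [hpp] at h
    have : 12 * (σ n : ℤ) = 12 * (σ' n : ℤ) := by linarith
    have : (σ n : ℤ) = (σ' n : ℤ) := by linarith
    exact_mod_cast this

lemma capPref_inj_down (hN : 1 ≤ N) (hσ1 : ∀ j, 1 ≤ σ j) (hσN : ∀ j, σ j ≤ N)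
    (hσ1' : ∀ j, 1 ≤ σ' j) (hσN' : ∀ j, σ' j ≤ N) (n : ℕ)
    (h : capPref (12 * N) σ n = capPref (12 * N) σ' n) :
    ∀ j, j < n → σ j = σ' j := by
  induction n with
  | zero => intro j hj; omega
  | succ n ih =>
    obtain ⟨hp, hd⟩ := capPref_step_inj hN hσ1 hσN hσ1' hσN' n h
    intro j hj
    rcases Nat.lt_succ_iff_lt_or_eq.mp hj with hj' | rfl
    · exact ih hp j hj'
    · exact hd

lemma capFloor (hN : 1 ≤ N) (hσ1 : ∀ j, 1 ≤ σ j) (hσN : ∀ j, σ j ≤ N) (n : ℕ) :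
    ⌊((12 * N : ℕ) : ℝ) ^ n * capVal (12 * N) σ⌋ = capPref (12 * N) σ n := by
  rw [capVal_split hN hσ1 hσN n]
  have hmem := capVal_mem_Ioo (σ := fun j => σ (j + n)) hN (fun j => hσ1 _) (fun j => hσN _)
  rw [Int.floor_eq_iff]
  constructor
  · linarith [hmem.1]
  · push_cast; linarith [hmem.2]

/-- points closer than `11 / M^n` have the same level-`n` prefix -/
lemma capClose_pref_eq (hN : 1 ≤ N) (hσ1 : ∀ j, 1 ≤ σ j) (hσN : ∀ j, σ j ≤ N)
    (hσ1' : ∀ j, 1 ≤ σ' j) (hσN' : ∀ j, σ' j ≤ N) (n : ℕ)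
    (hclose : |capVal (12 * N) σ - capVal (12 * N) σ'| < 11 * (((12 * N : ℕ) : ℝ) ^ n)⁻¹) :
    capPref (12 * N) σ n = capPref (12 * N) σ' n := by
  by_contra hne
  have hsep := capPref_sep (σ := σ) (σ' := σ') n hne
  have hsepR : (12 : ℝ) ≤ |(capPref (12 * N) σ n : ℝ) - (capPref (12 * N) σ' n : ℝ)| := by
    have : ((12:ℤ) : ℝ) ≤ |((capPref (12 * N) σ n - capPref (12 * N) σ' n : ℤ) : ℝ)| := by
      rw [← Int.cast_abs]; exact_mod_cast hsep
    push_cast at this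
    convert this using 2
  have hMpos : (0:ℝ) < ((12 * N : ℕ) : ℝ) := by linarith [hMgt1 (N := N) hN]
  have hMn : (0:ℝ) < ((12 * N : ℕ) : ℝ) ^ n := by positivity
  have h1 := capVal_split hN hσ1 hσN n
  have h2 := capVal_split hN hσ1' hσN' n
  set e := capVal (12 * N) (fun j => σ (j + n)) with he
  set e' := capVal (12 * N) (fun j => σ' (j + n)) with he'
  have hee : |e - e'| < 1 := by
    have hu := capVal_le (σ := fun j => σ (j + n)) hN (fun j => hσ1 _) (fun j => hσN _)
    have hl := capVal_ge (σ := fun j => σ (j + n)) hN (fun j => hσ1 _) (fun j => hσN _)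
    have hu' := capVal_le (σ := fun j => σ' (j + n)) hN (fun j => hσ1' _) (fun j => hσN' _)
    have hl' := capVal_ge (σ := fun j => σ' (j + n)) hN (fun j => hσ1' _) (fun j => hσN' _)
    have hM12 : (12:ℝ) ≤ ((12 * N : ℕ) : ℝ) := by
      have : (12:ℕ) ≤ 12 * N := by omega
      exact_mod_cast this
    rw [abs_sub_lt_iff]
    have key : (((12 * N : ℕ) : ℝ) - 6) / (((12 * N : ℕ) : ℝ) - 1) - 6 / (((12 * N : ℕ) : ℝ) - 1) < 1 := by
      rw [div_sub_div_same, div_lt_one (by linarith)]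
      linarith
    constructor <;> linarith
  have hscaled : |(capPref (12 * N) σ n : ℝ) - (capPref (12 * N) σ' n : ℝ)|
      ≤ ((12 * N : ℕ) : ℝ) ^ n * |capVal (12 * N) σ - capVal (12 * N) σ'| + |e - e'| := by
    have : (capPref (12 * N) σ n : ℝ) - (capPref (12 * N) σ' n : ℝ)
        = ((12 * N : ℕ) : ℝ) ^ n * (capVal (12 * N) σ - capVal (12 * N) σ') - (e - e') := by
      have := h1; have := h2; linarith
    rw [this]
    refine (abs_sub _ _).trans ?_
    rw [abs_mul, abs_of_nonneg hMn.le]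
  have hlt : ((12 * N : ℕ) : ℝ) ^ n * |capVal (12 * N) σ - capVal (12 * N) σ'| < 11 := by
    have := mul_lt_mul_of_pos_left hclose hMn
    rw [mul_comm (11:ℝ), ← mul_assoc, mul_inv_cancel₀ hMn.ne', one_mul] at this
    linarith [this]
  linarith [hsepR, hscaled, hlt, hee]

end C2

section C3

theorem capAvoids (k N : ℕ) (hk : 3 ≤ k) (hN : 1 ≤ N) (A : Finset ℕ)
    (hA : A ⊆ Finset.Icc 1 N) (hAP : ¬ ContainsAPNat k A) (ε : ℝ) (hε0 : 0 < ε)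
    (hεM : ε * ((12 * N : ℕ) : ℝ) ≤ 1) :
    Avoids k ε {x | ∃ σ : ℕ → ℕ, (∀ j, σ j ∈ A) ∧ x = capVal (12 * N) σ} := by
  classical
  intro a lam hlam
  by_contra hcon
  push_neg at hcon
  set Mr : ℝ := ((12 * N : ℕ) : ℝ) with hMr
  have hM12 : (12:ℝ) ≤ Mr := by
    rw [hMr]; have : (12:ℕ) ≤ 12 * N := by omega
    exact_mod_cast this
  have hMpos : (0:ℝ) < Mr := by linarith
  -- select digit sequences
  have hsel : ∀ i : ℕ, ∃ σ : ℕ → ℕ, (∀ j, σ j ∈ A) ∧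
      (i < k → |capVal (12 * N) σ - (a + i * lam)| < ε * lam) := by
    intro i
    by_cases hik : i < k
    · obtain ⟨x, hxE, hxd⟩ := hcon i hik
      obtain ⟨σ0, hσ0, rfl⟩ := hxE
      exact ⟨σ0, hσ0, fun _ => hxd⟩
    · obtain ⟨x, hxE, _⟩ := hcon 0 (by omega)
      obtain ⟨σ0, hσ0, rfl⟩ := hxE
      exact ⟨σ0, hσ0, fun h => absurd h hik⟩
  choose σ hσA hσd using hsel
  have hσ1 : ∀ i j, 1 ≤ σ i j := fun i j => (Finset.mem_Icc.1 (hA (hσA i j))).1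
  have hσN : ∀ i j, σ i j ≤ N := fun i j => (Finset.mem_Icc.1 (hA (hσA i j))).2
  have hval : ∀ i, capVal (12 * N) (σ i) ∈ Set.Ioo (0:ℝ) 1 :=
    fun i => capVal_mem_Ioo hN (hσ1 i) (hσN i)
  have hεl : ε * lam ≤ lam / Mr := by
    rw [div_eq_mul_inv, mul_comm lam]
    rw [← mul_le_mul_iff_of_pos_right hMpos]
    have : Mr⁻¹ * lam * Mr = lam := by field_simp
    rw [this]
    calc ε * lam * Mr = (ε * Mr) * lam := by ring
      _ ≤ 1 * lam := by
          apply mul_le_mul_of_nonneg_right _ hlam.le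
          exact hεM
      _ = lam := one_mul lam
  -- lam is small
  have hlam65 : lam < 6/5 := by
    have h0 := hσd 0 (by omega)
    have h1 := hσd 1 (by omega)
    rw [abs_lt] at h0 h1
    push_cast at h0 h1
    have hv0 := hval 0
    have hv1 := hval 1
    obtain ⟨h0a, h0b⟩ := h0
    obtain ⟨h1a, h1b⟩ := h1
    have : lam < 1 + 2 * (ε * lam) := by
      have := hv0.1; have := hv0.2; have := hv1.1; have := hv1.2
      nlinarith [hv0.1, hv0.2, hv1.1, hv1.2]
    have h2 : 2 * (ε * lam) ≤ 2 * (lam / Mr) := by linarith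
    have h3 : lam / Mr ≤ lam / 12 := by
      apply div_le_div_of_nonneg_left hlam.le (by norm_num) hM12
    linarith
  -- choose the scale
  have hP : ∃ n : ℕ, 2 < Mr ^ n * lam := by
    obtain ⟨n1, hn1⟩ := pow_unbounded_of_one_lt (2 / lam) (by linarith : (1:ℝ) < Mr)
    exact ⟨n1, by rw [div_lt_iff₀ hlam] at hn1; linarith⟩
  obtain ⟨n, hμgt, hprevle⟩ : ∃ n : ℕ, 2 < Mr ^ (n+1) * lam ∧ Mr ^ n * lam ≤ 2 := by
    have h0 : ¬ (2 < Mr ^ 0 * lam) := by simp; linarith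
    have hfpos : Nat.find hP ≠ 0 := by
      intro h
      apply h0
      have hsp := Nat.find_spec hP
      rwa [h] at hsp
    refine ⟨Nat.find hP - 1, ?_, ?_⟩
    · have := Nat.find_spec hP
      rwa [show Nat.find hP - 1 + 1 = Nat.find hP by omega]
    · have := Nat.find_min hP (m := Nat.find hP - 1) (by omega)
      linarith [not_lt.1 this]
  set μ : ℝ := Mr ^ (n+1) * lam with hμ
  have hμpos : 0 < μ := by positivity
  have hμ2Mr : μ ≤ 2 * Mr := by
    rw [hμ, pow_succ, mul_comm (Mr ^ n) Mr, mul_assoc]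
    nlinarith [hprevle, hMpos]
  have hμMr2 : μ / Mr ≤ 2 := by
    rw [div_le_iff₀ hMpos]; linarith
  have hμMrpos : 0 < μ / Mr := by positivity
  -- the prefixes
  set m : ℕ → ℤ := fun i => capPref (12 * N) (σ i) (n+1) with hm
  clear_value m
  set δ : ℕ → ℝ := fun i => (m i : ℝ) - Mr ^ (n+1) * (a + i * lam) with hδdef
  clear_value δ
  have hpow : (0:ℝ) < Mr ^ (n+1) := by positivity
  have hδ : ∀ i, i < k → |δ i| < μ / Mr + 1 := by
    intro i hik
    have hd := hσd i hik
    have hsplit := capVal_split (σ := σ i) hN (hσ1 i) (hσN i) (n+1)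
    have hei := capVal_mem_Ioo (σ := fun j => σ i (j + (n+1))) hN
      (fun j => hσ1 i _) (fun j => hσN i _)
    have heq : δ i = Mr ^ (n+1) * (capVal (12 * N) (σ i) - (a + i * lam))
        - capVal (12 * N) (fun j => σ i (j + (n+1))) := by
      rw [hδdef]
      simp only
      rw [hm]
      simp only
      rw [← hMr] at hsplit
      linarith [hsplit]
    have habs : |Mr ^ (n+1) * (capVal (12 * N) (σ i) - (a + i * lam))| < μ / Mr := by
      rw [abs_mul, abs_of_pos hpow]
      have h1 : Mr ^ (n+1) * |capVal (12 * N) (σ i) - (a + i * lam)| < Mr ^ (n+1) * (ε * lam) := by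
        apply mul_lt_mul_of_pos_left hd hpow
      have h2 : Mr ^ (n+1) * (ε * lam) ≤ Mr ^ (n+1) * (lam / Mr) := by
        apply mul_le_mul_of_nonneg_left hεl hpow.le
      have h3 : Mr ^ (n+1) * (lam / Mr) = μ / Mr := by
        rw [hμ]; ring
      linarith
    rw [heq]
    rw [abs_lt] at habs ⊢
    constructor
    · have := hei.2; cases habs with | intro l r => linarith
    · have := hei.1; cases habs with | intro l r => linarith
  -- mod-12 forms
  set T : ℕ → ℤ := fun i => N * capPref (12 * N) (σ i) n + (σ i n : ℤ) - 1 with hT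
  clear_value T
  have hTm : ∀ i, m i = 12 * T i + 6 := by
    intro i
    rw [hm, hT]
    simp only
    exact capPref_succ_form n
  -- second differences vanish
  have hsd : ∀ i, i + 2 < k → m (i+2) - 2 * m (i+1) + m i = 0 := by
    intro i hik
    have hreal : ((m (i+2) : ℝ)) - 2 * (m (i+1) : ℝ) + (m i : ℝ)
        = δ (i+2) - 2 * δ (i+1) + δ i := by
      rw [hδdef]
      simp only
      push_cast
      ring
    have hb0 := hδ i (by omega)
    have hb1 := hδ (i+1) (by omega)
    have hb2 := hδ (i+2) (by omega)
    rw [abs_lt] at hb0 hb1 hb2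
    obtain ⟨a0, b0⟩ := hb0
    obtain ⟨a1, b1⟩ := hb1
    obtain ⟨a2, b2⟩ := hb2
    have h3 : μ / Mr + 1 ≤ 3 := by linarith
    have habs : |((m (i+2) : ℝ)) - 2 * (m (i+1) : ℝ) + (m i : ℝ)| < 12 := by
      rw [hreal, abs_lt]
      constructor <;> linarith
    have hZr : ((m (i+2) - 2 * m (i+1) + m i : ℤ) : ℝ) < 12 ∧
        (-12 : ℝ) < ((m (i+2) - 2 * m (i+1) + m i : ℤ) : ℝ) := by
      rw [abs_lt] at habs
      constructor <;> [push_cast; push_cast] <;> linarith [habs.1, habs.2]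
    have hZ : m (i+2) - 2 * m (i+1) + m i < 12 ∧ (-12:ℤ) < m (i+2) - 2 * m (i+1) + m i := by
      constructor
      · exact_mod_cast hZr.1
      · exact_mod_cast hZr.2
    have hdvd : (12:ℤ) ∣ (m (i+2) - 2 * m (i+1) + m i) := by
      refine ⟨T (i+2) - 2 * T (i+1) + T i, ?_⟩
      rw [hTm (i+2), hTm (i+1), hTm i]; ring
    obtain ⟨c, hc⟩ := hdvd
    rw [hc] at hZ ⊢
    have : c = 0 := by omega
    rw [this, mul_zero]
  -- consecutive differences are constant
  set g : ℤ := m 1 - m 0 with hg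
  clear_value g
  have hkey : ∀ i, i + 1 < k → m (i+1) = m i + g := by
    intro i
    induction i with
    | zero => intro _; rw [hg]; ring
    | succ i ih =>
      intro hik
      have h1 := ih (by omega)
      have h2 := hsd i (by omega)
      have : i + 1 + 1 = i + 2 := by ring
      rw [this]
      linarith [h2, h1]
  have hmi : ∀ i, i < k → m i = m 0 + i * g := by
    intro i
    induction i with
    | zero => intro _; simp
    | succ i ih =>
      intro hik
      have h1 := ih (by omega)
      have h2 := hkey i (by omega)
      rw [h2, h1]
      push_cast
      ring
  -- g bounds
  have hgreal : (g : ℝ) = δ 1 - δ 0 + μ := by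
    rw [hg, hδdef]
    simp only
    push_cast
    rw [hμ]
    ring
  have hgb : |(g:ℝ) - μ| < 2 * (μ / Mr + 1) := by
    have h0 := hδ 0 (by omega)
    have h1 := hδ 1 (by omega)
    rw [abs_lt] at h0 h1 ⊢
    obtain ⟨a0, b0⟩ := h0
    obtain ⟨a1, b1⟩ := h1
    rw [hgreal]
    constructor <;> linarith
  have hgnonneg : 0 ≤ g := by
    by_contra hneg
    push_neg at hneg
    have hgm1 : g ≤ -1 := by omega
    have : (g:ℝ) ≤ -1 := by exact_mod_cast hgm1
    rw [abs_lt] at hgb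
    have hh : μ - 2 * (μ / Mr + 1) ≤ -1 := by linarith [hgb.1]
    have : μ / Mr ≤ μ / 12 := by
      apply div_le_div_of_nonneg_left hμpos.le (by norm_num) hM12
    nlinarith
  have hgdvd : (12:ℤ) ∣ g := ⟨T 1 - T 0, by rw [hg, hTm 1, hTm 0]; ring⟩
  obtain ⟨t, hgt⟩ := hgdvd
  have htnn : 0 ≤ t := by omega
  rcases eq_or_lt_of_le htnn with ht0 | htpos
  · -- g = 0 : all m equal, contradiction with span
    have hgz : g = 0 := by omega
    have hmk := hmi (k-1) (by omega)
    rw [hgz, mul_zero, add_zero] at hmk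
    have hδk := hδ (k-1) (by omega)
    have hδ0 := hδ 0 (by omega)
    have hspan : ((k:ℝ) - 1) * μ = δ 0 - δ (k-1) := by
      have : ((k-1:ℕ):ℝ) = (k:ℝ) - 1 := by
        have : (1:ℕ) ≤ k := by omega
        push_cast [Nat.cast_sub this]
        ring
      rw [hδdef]
      simp only
      rw [hmk, this, hμ]
      push_cast
      ring
    rw [abs_lt] at hδk hδ0
    have hk2 : (2:ℝ) ≤ (k:ℝ) - 1 := by
      have : (3:ℕ) ≤ k := hk
      have : (3:ℝ) ≤ (k:ℝ) := by exact_mod_cast this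
      linarith
    have h2μ : 2 * μ ≤ ((k:ℝ) - 1) * μ := mul_le_mul_of_nonneg_right hk2 hμpos.le
    have hdiv : μ / Mr ≤ μ / 12 := div_le_div_of_nonneg_left hμpos.le (by norm_num) hM12
    linarith [hδk.1, hδk.2, hδ0.1, hδ0.2, hspan, h2μ, hdiv, hμgt]
  · -- g ≥ 12 : extract an AP in A
    have hg12 : (12:ℤ) ≤ g := by omega
    -- upper bound on g
    have hgub : (g : ℤ) < 24 * N + 6 := by
      have : ((g : ℤ) : ℝ) < μ + 2 * (μ / Mr + 1) := by
        rw [abs_lt] at hgb; linarith [hgb.2]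
      have h2 : μ + 2 * (μ / Mr + 1) ≤ 2 * Mr + 2 * (2 + 1) := by linarith [hμ2Mr, hμMr2]
      have h3 : ((g : ℤ) : ℝ) < 2 * Mr + 6 := by linarith
      have h4 : (2 * Mr + 6 : ℝ) = ((24 * N + 6 : ℤ) : ℝ) := by
        rw [hMr]; push_cast; ring
      rw [h4] at h3
      exact_mod_cast h3
    -- decomposition of m i
    set s : ℕ → ℤ := fun i => capPref (12 * N) (σ i) n with hs
    clear_value s
    have hdecomp : ∀ i, m i = (12 * N : ℤ) * s i + (12 * (σ i n : ℤ) - 6) := by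
      intro i
      rw [hm, hs]
      simp only [capPref]
      push_cast
      ring
    have hdigb : ∀ i, (6:ℤ) ≤ 12 * (σ i n : ℤ) - 6 ∧ 12 * (σ i n : ℤ) - 6 ≤ 12 * N - 6 := by
      intro i
      have h1 : (1:ℤ) ≤ (σ i n : ℤ) := by exact_mod_cast hσ1 i n
      have h2 : ((σ i n : ℤ)) ≤ (N:ℤ) := by exact_mod_cast hσN i n
      omega
    have hNZ : (1:ℤ) ≤ (N:ℤ) := by exact_mod_cast hN
    have hsconst : ∀ i, i + 1 < k → s (i+1) = s i := by
      intro i hik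
      by_contra hne
      rw [hs] at hne
      simp only at hne
      have hsep : (12:ℤ) ≤ |s (i+1) - s i| := by
        rw [hs]
        simp only
        exact capPref_sep n hne
      have hdiff : m (i+1) - m i = g := by rw [hkey i hik]; ring
      have hdd : m (i+1) - m i = (12 * N : ℤ) * (s (i+1) - s i)
          + ((12 * (σ (i+1) n : ℤ) - 6) - (12 * (σ i n : ℤ) - 6)) := by
        rw [hdecomp (i+1), hdecomp i]; ring
      have hb1 := hdigb (i+1)
      have hb2 := hdigb i
      rw [hdiff] at hdd
      have hD : (12:ℤ) ≤ s (i+1) - s i ∨ s (i+1) - s i ≤ -12 := by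
        rcases le_abs.mp hsep with h | h
        · left; exact h
        · right; linarith
      have hNn : (0:ℤ) ≤ 12 * (N:ℤ) := by positivity
      rcases hD with hD | hD
      · have hmul : 12 * (N:ℤ) * 12 ≤ 12 * (N:ℤ) * (s (i+1) - s i) :=
          mul_le_mul_of_nonneg_left hD hNn
        have hcast : (12 * N : ℤ) = 12 * (N:ℤ) := by push_cast; ring
        rw [hcast] at hdd
        linarith [hb1.1, hb1.2, hb2.1, hb2.2, hgub, hNZ]
      · have hmul : 12 * (N:ℤ) * (s (i+1) - s i) ≤ 12 * (N:ℤ) * (-12) :=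
          mul_le_mul_of_nonneg_left hD hNn
        have hcast : (12 * N : ℤ) = 12 * (N:ℤ) := by push_cast; ring
        rw [hcast] at hdd
        linarith [hb1.1, hb1.2, hb2.1, hb2.2, hg12, hNZ]
    -- consecutive digits increase by t
    have hstep : ∀ i, i + 1 < k → (σ (i+1) n : ℤ) = σ i n + t := by
      intro i hik
      have h1 := hdecomp (i+1)
      have h2 := hdecomp i
      have h3 := hkey i hik
      have h4 := hsconst i hik
      rw [h4] at h1
      have : (12:ℤ) * (σ (i+1) n : ℤ) = 12 * (σ i n : ℤ) + 12 * t := by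
        rw [hgt] at h3
        linarith [h1, h2, h3]
      linarith
    have hAPσ : ∀ i, i < k → (σ i n : ℤ) = σ 0 n + i * t := by
      intro i
      induction i with
      | zero => intro _; simp
      | succ i ih =>
        intro hik
        have h1 := ih (by omega)
        have h2 := hstep i (by omega)
        rw [h2, h1]
        push_cast
        ring
    apply hAP
    refine ⟨σ 0 n, t.toNat, by omega, fun i hik => ?_⟩
    have hcast : ((σ 0 n + i * t.toNat : ℕ) : ℤ) = ((σ i n : ℕ) : ℤ) := by
      push_cast
      rw [Int.toNat_of_nonneg htnn]
      linarith [hAPσ i hik]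
    have : σ 0 n + i * t.toNat = σ i n := by exact_mod_cast hcast
    rw [this]
    exact hσA i n

end C3

section D

lemma geom_tail' {x : ℝ} (h1 : 1 < x) : ∑' j : ℕ, (x⁻¹)^(j+1) = (x - 1)⁻¹ := by
  have hx0 : (0:ℝ) < x := by linarith
  have hr0 : (0:ℝ) ≤ x⁻¹ := by positivity
  have hr1 : x⁻¹ < 1 := by rw [inv_lt_one_iff₀]; right; exact h1
  have hstep : ∑' j : ℕ, (x⁻¹)^(j+1) = (∑' j : ℕ, (x⁻¹)^j) * x⁻¹ := by
    rw [← tsum_mul_right]; exact tsum_congr fun j => by ring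
  rw [hstep, tsum_geometric_of_lt_one hr0 hr1]
  have e1 : (1:ℝ) - x⁻¹ = (x - 1) / x := by field_simp
  rw [e1, inv_div, div_mul_eq_mul_div, mul_inv_cancel₀ (by linarith : x ≠ 0), one_div]

variable {R : ℕ} {c : ℕ → ℕ}

lemma digSummable (hR : 2 ≤ R) (hc : ∀ j, (c j : ℝ) ≤ (R:ℝ) - 1) :
    Summable (fun j : ℕ => (c j : ℝ) * ((R:ℝ)⁻¹)^(j+1)) := by
  have hR1 : (1:ℝ) < (R:ℝ) := by exact_mod_cast hR
  have hgeo : Summable (fun j : ℕ => ((R:ℝ) - 1) * ((R:ℝ)⁻¹)^(j+1)) := by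
    have : Summable (fun j : ℕ => ((R:ℝ)⁻¹)^j) :=
      summable_geometric_of_lt_one (by positivity) (by rw [inv_lt_one_iff₀]; right; exact hR1)
    exact ((this.mul_right ((R:ℝ)⁻¹)).mul_left ((R:ℝ) - 1)).congr (fun j => by ring)
  refine Summable.of_nonneg_of_le (fun j => by positivity) (fun j => ?_) hgeo
  exact mul_le_mul_of_nonneg_right (hc j) (by positivity)

lemma digTsum_nonneg (hR : 2 ≤ R) (hc : ∀ j, (c j : ℝ) ≤ (R:ℝ) - 1) :
    0 ≤ ∑' j : ℕ, (c j : ℝ) * ((R:ℝ)⁻¹)^(j+1) :=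
  tsum_nonneg (fun j => by positivity)

lemma digTsum_le_one (hR : 2 ≤ R) (hc : ∀ j, (c j : ℝ) ≤ (R:ℝ) - 1) :
    ∑' j : ℕ, (c j : ℝ) * ((R:ℝ)⁻¹)^(j+1) ≤ 1 := by
  have hR1 : (1:ℝ) < (R:ℝ) := by exact_mod_cast hR
  have hgeo : Summable (fun j : ℕ => ((R:ℝ) - 1) * ((R:ℝ)⁻¹)^(j+1)) := by
    have : Summable (fun j : ℕ => ((R:ℝ)⁻¹)^j) :=
      summable_geometric_of_lt_one (by positivity) (by rw [inv_lt_one_iff₀]; right; exact hR1)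
    exact ((this.mul_right ((R:ℝ)⁻¹)).mul_left ((R:ℝ) - 1)).congr (fun j => by ring)
  have h1 : ∑' j : ℕ, (c j : ℝ) * ((R:ℝ)⁻¹)^(j+1)
      ≤ ∑' j : ℕ, ((R:ℝ) - 1) * ((R:ℝ)⁻¹)^(j+1) := by
    refine Summable.tsum_le_tsum (fun j => mul_le_mul_of_nonneg_right (hc j) (by positivity))
      (digSummable hR hc) hgeo
  have h2 : ∑' j : ℕ, ((R:ℝ) - 1) * ((R:ℝ)⁻¹)^(j+1) = 1 := by
    rw [tsum_mul_left, geom_tail' hR1, mul_inv_cancel₀ (by linarith)]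
  linarith

lemma digSplit (hR : 2 ≤ R) (hc : ∀ j, (c j : ℝ) ≤ (R:ℝ) - 1) (n : ℕ) :
    ∑' j : ℕ, (c j : ℝ) * ((R:ℝ)⁻¹)^(j+1)
      = (∑ j ∈ Finset.range n, (c j : ℝ) * ((R:ℝ)⁻¹)^(j+1))
        + ((R:ℝ)⁻¹)^n * ∑' j : ℕ, (c (j+n) : ℝ) * ((R:ℝ)⁻¹)^(j+1) := by
  have hs := digSummable hR hc
  rw [← Summable.sum_add_tsum_nat_add (f := fun j : ℕ => (c j : ℝ) * ((R:ℝ)⁻¹)^(j+1)) n hs]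
  congr 1
  rw [← tsum_mul_left]
  exact tsum_congr fun j => by ring

/-- every `y ∈ [0,1]` has a base-`R` expansion with digits `≤ R - 1` -/
lemma exists_expansion {R : ℕ} (hR : 2 ≤ R) {y : ℝ} (hy : y ∈ Set.Icc (0:ℝ) 1) :
    ∃ c : ℕ → ℕ, (∀ j, (c j : ℝ) ≤ (R:ℝ) - 1)
      ∧ y = ∑' j : ℕ, (c j : ℝ) * ((R:ℝ)⁻¹)^(j+1) := by
  have hR1 : (1:ℝ) < (R:ℝ) := by exact_mod_cast hR
  have hR0 : (0:ℝ) < (R:ℝ) := by linarith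
  rcases eq_or_lt_of_le hy.2 with h1 | hlt
  · -- y = 1 : take all digits R - 1
    refine ⟨fun _ => R - 1, fun j => ?_, ?_⟩
    · have : ((R - 1 : ℕ) : ℝ) = (R:ℝ) - 1 := by
        have : (1:ℕ) ≤ R := by omega
        push_cast [Nat.cast_sub this]; ring
      rw [this]
    · have hcast : ((R - 1 : ℕ) : ℝ) = (R:ℝ) - 1 := by
        have : (1:ℕ) ≤ R := by omega
        push_cast [Nat.cast_sub this]; ring
      rw [h1]
      rw [tsum_congr (fun j => by rw [hcast])]
      rw [tsum_mul_left, geom_tail' hR1, mul_inv_cancel₀ (by linarith)]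
  · -- y < 1
    set cZ : ℕ → ℤ := fun j => ⌊(R:ℝ)^(j+1) * y⌋ - R * ⌊(R:ℝ)^j * y⌋ with hcZ
    have hfl : ∀ j : ℕ, (0:ℤ) ≤ cZ j ∧ cZ j ≤ R - 1 := by
      intro j
      have h1 : ((R:ℤ) : ℝ) * (⌊(R:ℝ)^j * y⌋ : ℝ) ≤ (R:ℝ)^(j+1) * y := by
        push_cast
        have := Int.floor_le ((R:ℝ)^j * y)
        calc (R:ℝ) * (⌊(R:ℝ)^j * y⌋ : ℝ) ≤ (R:ℝ) * ((R:ℝ)^j * y) :=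
              mul_le_mul_of_nonneg_left this hR0.le
          _ = (R:ℝ)^(j+1) * y := by ring
      have h2 : (R:ℝ)^(j+1) * y < (R:ℝ) * ((⌊(R:ℝ)^j * y⌋ : ℝ) + 1) := by
        have := Int.lt_floor_add_one ((R:ℝ)^j * y)
        calc (R:ℝ)^(j+1) * y = (R:ℝ) * ((R:ℝ)^j * y) := by ring
          _ < (R:ℝ) * ((⌊(R:ℝ)^j * y⌋ : ℝ) + 1) := by
              apply mul_lt_mul_of_pos_left this hR0
      constructor
      · have : (R:ℤ) * ⌊(R:ℝ)^j * y⌋ ≤ ⌊(R:ℝ)^(j+1) * y⌋ := by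
          apply Int.le_floor.2
          push_cast
          push_cast at h1
          linarith
        rw [hcZ]; simp only; omega
      · have : ⌊(R:ℝ)^(j+1) * y⌋ < (R:ℤ) * ⌊(R:ℝ)^j * y⌋ + R := by
          apply Int.floor_lt.2
          push_cast
          push_cast at h2
          linarith
        rw [hcZ]; simp only; omega
    set c : ℕ → ℕ := fun j => (cZ j).toNat with hc
    have hcR : ∀ j, (c j : ℝ) ≤ (R:ℝ) - 1 := by
      intro j
      have h := hfl j
      have : ((c j : ℕ) : ℤ) ≤ (R:ℤ) - 1 := by rw [hc]; simp only; omega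
      have : ((c j : ℕ) : ℝ) ≤ ((R:ℤ) - 1 : ℤ) := by exact_mod_cast this
      push_cast at this
      linarith
    refine ⟨c, hcR, ?_⟩
    have hcast : ∀ j, ((c j : ℕ) : ℝ) = ((cZ j : ℤ) : ℝ) := by
      intro j
      have h1 := (hfl j).1
      rw [hc]
      simp only
      have h2 : ((cZ j).toNat : ℤ) = cZ j := Int.toNat_of_nonneg h1
      exact_mod_cast h2
    -- partial sums telescope
    have hpartial : ∀ n : ℕ, (∑ j ∈ Finset.range n, (c j : ℝ) * ((R:ℝ)⁻¹)^(j+1))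
        = (⌊(R:ℝ)^n * y⌋ : ℝ) * ((R:ℝ)⁻¹)^n := by
      intro n
      induction n with
      | zero =>
        have h0 : ⌊(R:ℝ)^0 * y⌋ = 0 := by
          rw [pow_zero, one_mul]
          exact Int.floor_eq_zero_iff.2 ⟨hy.1, hlt⟩
        rw [h0]
        simp
      | succ n ih =>
        rw [Finset.sum_range_succ, ih, hcast n, hcZ]
        simp only
        push_cast
        have hpow : ((R:ℝ)⁻¹)^n = (R:ℝ) * ((R:ℝ)⁻¹)^(n+1) := by
          rw [pow_succ]
          field_simp
        rw [hpow]
        ring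
    -- convergence
    have hd : ∀ n : ℕ, |(∑ j ∈ Finset.range n, (c j : ℝ) * ((R:ℝ)⁻¹)^(j+1)) - y|
        ≤ ((R:ℝ)⁻¹)^n := by
      intro n
      rw [hpartial n]
      have hpw : (0:ℝ) < (R:ℝ)^n := by positivity
      have hfl1 : (⌊(R:ℝ)^n * y⌋ : ℝ) ≤ (R:ℝ)^n * y := Int.floor_le _
      have hfl2 : (R:ℝ)^n * y - 1 < (⌊(R:ℝ)^n * y⌋ : ℝ) := by
        linarith [Int.lt_floor_add_one ((R:ℝ)^n * y)]
      have hinv : ((R:ℝ)⁻¹)^n = ((R:ℝ)^n)⁻¹ := by rw [inv_pow]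
      have e : (⌊(R:ℝ)^n * y⌋ : ℝ) * ((R:ℝ)^n)⁻¹ - y
          = ((⌊(R:ℝ)^n * y⌋ : ℝ) - (R:ℝ)^n * y) / (R:ℝ)^n := by
        field_simp
      have hnum : |(⌊(R:ℝ)^n * y⌋ : ℝ) - (R:ℝ)^n * y| ≤ 1 := by
        rw [abs_le]; constructor <;> linarith
      rw [hinv, e, abs_div, abs_of_pos hpw, div_le_iff₀ hpw, inv_mul_cancel₀ hpw.ne']
      exact hnum
    have hsum : Summable (fun j : ℕ => (c j : ℝ) * ((R:ℝ)⁻¹)^(j+1)) := digSummable hR hcR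
    have htend : Filter.Tendsto (fun n => ∑ j ∈ Finset.range n, (c j : ℝ) * ((R:ℝ)⁻¹)^(j+1))
        Filter.atTop (nhds y) := by
      rw [tendsto_iff_dist_tendsto_zero]
      have hb : ∀ n : ℕ, dist (∑ j ∈ Finset.range n, (c j : ℝ) * ((R:ℝ)⁻¹)^(j+1)) y
          ≤ ((R:ℝ)⁻¹)^n := by
        intro n
        rw [Real.dist_eq]
        exact hd n
      refine squeeze_zero (fun n => dist_nonneg) hb ?_
      exact tendsto_pow_atTop_nhds_zero_of_lt_one (by positivity)
        (by rw [inv_lt_one_iff₀]; right; exact hR1)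
    exact tendsto_nhds_unique htend hsum.hasSum.tendsto_sum_nat

end D

noncomputable def capDig (M : ℕ) (j : ℕ) (x : ℝ) : ℤ :=
  ⌊(M:ℝ)^(j+1) * x⌋ - M * ⌊(M:ℝ)^j * x⌋

noncomputable def capMap (M : ℕ) (A : Finset ℕ) (x : ℝ) : ℝ :=
  ∑' j : ℕ, (((A.filter (fun a : ℕ => 12*(a:ℤ) - 6 < capDig M j x)).card : ℝ))
    * ((A.card : ℝ)⁻¹)^(j+1)

section E

variable {N : ℕ} {A : Finset ℕ} {σ σ' : ℕ → ℕ}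

lemma capDig_val (hN : 1 ≤ N) (hσ1 : ∀ j, 1 ≤ σ j) (hσN : ∀ j, σ j ≤ N) (j : ℕ) :
    capDig (12 * N) j (capVal (12 * N) σ) = 12 * (σ j : ℤ) - 6 := by
  unfold capDig
  rw [capFloor hN hσ1 hσN (j+1), capFloor hN hσ1 hσN j]
  simp only [capPref]
  push_cast
  ring

lemma cnt_lt_card {b : ℕ} (hb : b ∈ A) :
    ((A.filter (fun a => a < b)).card : ℝ) ≤ (A.card : ℝ) - 1 := by
  have hsub : A.filter (fun a => a < b) ⊆ A.erase b := by
    intro a ha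
    rw [Finset.mem_filter] at ha
    exact Finset.mem_erase.2 ⟨by omega, ha.1⟩
  have h1 : (A.filter (fun a => a < b)).card ≤ (A.erase b).card := Finset.card_le_card hsub
  have h2 : (A.erase b).card = A.card - 1 := Finset.card_erase_of_mem hb
  have h3 : 1 ≤ A.card := Finset.card_pos.2 ⟨b, hb⟩
  have : (A.filter (fun a => a < b)).card ≤ A.card - 1 := h2 ▸ h1
  have hcast : ((A.card - 1 : ℕ) : ℝ) = (A.card : ℝ) - 1 := by
    push_cast [Nat.cast_sub h3]; ring
  rw [← hcast]
  exact_mod_cast this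

lemma capMap_val (hN : 1 ≤ N) (hA : A ⊆ Finset.Icc 1 N)
    (hσA : ∀ j, σ j ∈ A) :
    capMap (12 * N) A (capVal (12 * N) σ)
      = ∑' j : ℕ, (((A.filter (fun a => a < σ j)).card : ℝ)) * ((A.card : ℝ)⁻¹)^(j+1) := by
  unfold capMap
  refine tsum_congr fun j => ?_
  rw [capDig_val hN (fun j => (Finset.mem_Icc.1 (hA (hσA j))).1)
    (fun j => (Finset.mem_Icc.1 (hA (hσA j))).2) j]
  have hfe : (A.filter (fun a : ℕ => 12*(a:ℤ) - 6 < 12 * (σ j : ℤ) - 6))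
      = A.filter (fun a : ℕ => a < σ j) := by
    apply Finset.filter_congr
    intro a _
    constructor
    · intro h; omega
    · intro h; omega
  rw [hfe]

/-- the key Hölder-type estimate for `capMap` -/
lemma capMap_holder (hN : 1 ≤ N) (hA : A ⊆ Finset.Icc 1 N) (hcard : 2 ≤ A.card)
    (hσA : ∀ j, σ j ∈ A) (hσA' : ∀ j, σ' j ∈ A) :
    |capMap (12 * N) A (capVal (12 * N) σ) - capMap (12 * N) A (capVal (12 * N) σ')|
      ≤ ((12 * N : ℕ) : ℝ) * |capVal (12 * N) σ - capVal (12 * N) σ'|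
          ^ (Real.log (A.card) / Real.log ((12 * N : ℕ) : ℝ)) := by
  have hσ1 : ∀ j, 1 ≤ σ j := fun j => (Finset.mem_Icc.1 (hA (hσA j))).1
  have hσN : ∀ j, σ j ≤ N := fun j => (Finset.mem_Icc.1 (hA (hσA j))).2
  have hσ1' : ∀ j, 1 ≤ σ' j := fun j => (Finset.mem_Icc.1 (hA (hσA' j))).1
  have hσN' : ∀ j, σ' j ≤ N := fun j => (Finset.mem_Icc.1 (hA (hσA' j))).2
  set Mr : ℝ := ((12 * N : ℕ) : ℝ) with hMrdef
  have hM12 : (12:ℝ) ≤ Mr := by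
    rw [hMrdef]; have : (12:ℕ) ≤ 12 * N := by omega
    exact_mod_cast this
  have hMr1 : (1:ℝ) < Mr := by linarith
  have hMr0 : (0:ℝ) < Mr := by linarith
  set rr : ℝ := (A.card : ℝ) with hrrdef
  have hrr2 : (2:ℝ) ≤ rr := by rw [hrrdef]; exact_mod_cast hcard
  have hrr0 : (0:ℝ) < rr := by linarith
  set α : ℝ := Real.log rr / Real.log Mr with hα
  have hlogM : 0 < Real.log Mr := Real.log_pos hMr1
  have hlogr : 0 < Real.log rr := Real.log_pos (by linarith)
  have hα0 : 0 < α := by rw [hα]; positivity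
  have hα1 : α ≤ 1 := by
    rw [hα, div_le_one hlogM]
    apply Real.log_le_log hrr0
    rw [hrrdef, hMrdef]
    have h1 : A.card ≤ N := by
      have := Finset.card_le_card hA
      rwa [Nat.card_Icc, Nat.add_sub_cancel] at this
    have : A.card ≤ 12 * N := by omega
    exact_mod_cast this
  set x : ℝ := capVal (12 * N) σ with hx
  set y : ℝ := capVal (12 * N) σ' with hy
  clear_value x y
  rcases eq_or_ne x y with heq | hne
  · rw [heq]
    simp only [sub_self, abs_zero]
    positivity
  · set d : ℝ := |x - y| with hd
    have hd0 : 0 < d := abs_pos.2 (sub_ne_zero.2 hne)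
    have hd1 : d < 1 := by
      have h1 := capVal_mem_Ioo (σ := σ) hN hσ1 hσN
      have h2 := capVal_mem_Ioo (σ := σ') hN hσ1' hσN'
      rw [hd, abs_lt]
      rw [← hx] at h1
      rw [← hy] at h2
      constructor <;> linarith [h1.1, h1.2, h2.1, h2.2]
    -- choose the scale n0
    have hex : ∃ n : ℕ, 11 * ((Mr ^ (n+1))⁻¹) ≤ d := by
      obtain ⟨n1, hn1⟩ := pow_unbounded_of_one_lt (11 / d) hMr1
      refine ⟨n1, ?_⟩
      rw [div_lt_iff₀ hd0] at hn1
      have hp1 : Mr ^ n1 ≤ Mr ^ (n1+1) := by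
        apply pow_le_pow_right₀ (by linarith) (by omega)
      have hpos : (0:ℝ) < Mr ^ (n1+1) := by positivity
      rw [mul_inv_le_iff₀ hpos]
      calc (11:ℝ) ≤ Mr ^ n1 * d := hn1.le
        _ ≤ Mr ^ (n1+1) * d := by nlinarith
        _ = d * Mr ^ (n1+1) := by ring
    classical
    obtain ⟨n0, hspec0, hmin0⟩ : ∃ n0 : ℕ, (11 * ((Mr ^ (n0+1))⁻¹) ≤ d) ∧
        (∀ m : ℕ, m < n0 → ¬ (11 * ((Mr ^ (m+1))⁻¹) ≤ d)) :=
      ⟨Nat.find hex, Nat.find_spec hex, fun m hm => Nat.find_min hex hm⟩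
    have hspec : 11 * ((Mr ^ (n0+1))⁻¹) ≤ d := hspec0
    have hclose : d < 11 * ((Mr ^ n0)⁻¹) := by
      rcases Nat.eq_zero_or_pos n0 with h0 | hpos
      · rw [h0]
        simp only [pow_zero, inv_one, mul_one]
        linarith
      · have := hmin0 (n0 - 1) (by omega)
        push_neg at this
        rwa [show n0 - 1 + 1 = n0 by omega] at this
    -- prefixes at level n0 agree
    have hpref : capPref (12 * N) σ n0 = capPref (12 * N) σ' n0 := by
      apply capClose_pref_eq hN hσ1 hσN hσ1' hσN' n0
      rw [← hMrdef, ← hx, ← hy, ← hd]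
      calc d < 11 * ((Mr ^ n0)⁻¹) := hclose
        _ = 11 * (Mr ^ n0)⁻¹ := by ring
    have hdig : ∀ j, j < n0 → σ j = σ' j :=
      capPref_inj_down hN hσ1 hσN hσ1' hσN' n0 hpref
    -- split the two series at n0
    have hcR : ∀ j, (((A.filter (fun a => a < σ j)).card : ℕ) : ℝ) ≤ rr - 1 :=
      fun j => cnt_lt_card (hσA j)
    have hcR' : ∀ j, (((A.filter (fun a => a < σ' j)).card : ℕ) : ℝ) ≤ rr - 1 :=
      fun j => cnt_lt_card (hσA' j)
    have hfx := capMap_val hN hA hσA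
    have hfy := capMap_val hN hA hσA'
    rw [← hx] at hfx
    rw [← hy] at hfy
    have hsplitx := digSplit (c := fun j => (A.filter (fun a => a < σ j)).card) hcard hcR n0
    have hsplity := digSplit (c := fun j => (A.filter (fun a => a < σ' j)).card) hcard hcR' n0
    have hpeq : (∑ j ∈ Finset.range n0, (((A.filter (fun a => a < σ j)).card : ℕ) : ℝ) * ((A.card : ℝ)⁻¹)^(j+1))
        = (∑ j ∈ Finset.range n0, (((A.filter (fun a => a < σ' j)).card : ℕ) : ℝ) * ((A.card : ℝ)⁻¹)^(j+1)) := by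
      apply Finset.sum_congr rfl
      intro j hj
      rw [Finset.mem_range] at hj
      rw [hdig j hj]
    have htx0 := digTsum_nonneg (c := fun j => (A.filter (fun a => a < σ (j + n0))).card) hcard (fun j => hcR (j + n0))
    have htx1 := digTsum_le_one (c := fun j => (A.filter (fun a => a < σ (j + n0))).card) hcard (fun j => hcR (j + n0))
    have hty0 := digTsum_nonneg (c := fun j => (A.filter (fun a => a < σ' (j + n0))).card) hcard (fun j => hcR' (j + n0))
    have hty1 := digTsum_le_one (c := fun j => (A.filter (fun a => a < σ' (j + n0))).card) hcard (fun j => hcR' (j + n0))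
    have hrinvpos : (0:ℝ) < ((A.card : ℝ)⁻¹)^n0 := by
      have : (0:ℝ) < (A.card : ℝ) := hrr0
      positivity
    have hbound : |capMap (12 * N) A x - capMap (12 * N) A y| ≤ ((A.card : ℝ)⁻¹)^n0 := by
      rw [hfx, hfy, hsplitx, hsplity, hpeq]
      rw [add_sub_add_left_eq_sub, ← mul_sub, abs_mul, abs_of_pos hrinvpos]
      have : |(∑' j : ℕ, (((A.filter (fun a => a < σ (j + n0))).card : ℕ) : ℝ) * ((A.card : ℝ)⁻¹)^(j+1))
          - (∑' j : ℕ, (((A.filter (fun a => a < σ' (j + n0))).card : ℕ) : ℝ) * ((A.card : ℝ)⁻¹)^(j+1))| ≤ 1 := by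
        rw [abs_le]
        constructor <;> linarith
      nlinarith [hrinvpos]
    -- rpow computation
    have hrralt : Mr ^ α = rr := by
      rw [Real.rpow_def_of_pos hMr0, hα]
      rw [mul_div_assoc']  -- log Mr * (log rr / log Mr)? fix below
      rw [mul_comm (Real.log Mr) (Real.log rr), mul_div_assoc, div_self hlogM.ne', mul_one]
      exact Real.exp_log hrr0
    have he1 : ((rr)⁻¹)^n0 = ((Mr ^ n0 : ℝ)⁻¹) ^ α := by
      have hL : (0:ℝ) < (rr⁻¹)^n0 := by positivity
      have hMn0 : (0:ℝ) < (Mr ^ n0 : ℝ) := by positivity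
      have hR : (0:ℝ) < ((Mr ^ n0 : ℝ)⁻¹) ^ α := Real.rpow_pos_of_pos (by positivity) _
      apply Real.log_injOn_pos (Set.mem_Ioi.2 hL) (Set.mem_Ioi.2 hR)
      rw [Real.log_pow, Real.log_rpow (by positivity), Real.log_inv, Real.log_inv, Real.log_pow]
      rw [hα]
      field_simp
    have hstep : (Mr ^ n0 : ℝ)⁻¹ ≤ Mr * d := by
      have hpos : (0:ℝ) < Mr ^ (n0+1) := by positivity
      have h1 : (Mr ^ (n0+1))⁻¹ ≤ d / 11 := by
        rw [le_div_iff₀ (by norm_num : (0:ℝ) < 11)]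
        linarith [hspec]
      have h2 : (Mr ^ n0 : ℝ)⁻¹ = Mr * (Mr ^ (n0+1))⁻¹ := by
        rw [pow_succ]
        field_simp
      rw [h2]
      calc Mr * (Mr ^ (n0+1))⁻¹ ≤ Mr * (d / 11) := by
            apply mul_le_mul_of_nonneg_left h1 hMr0.le
        _ ≤ Mr * d := by
            apply mul_le_mul_of_nonneg_left _ hMr0.le
            linarith
    have hfinal : ((rr)⁻¹)^n0 ≤ Mr * d ^ α := by
      rw [he1]
      calc ((Mr ^ n0 : ℝ)⁻¹) ^ α ≤ (Mr * d) ^ α := by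
            apply Real.rpow_le_rpow (by positivity) hstep hα0.le
        _ = Mr ^ α * d ^ α := Real.mul_rpow hMr0.le hd0.le
        _ ≤ Mr ^ (1:ℝ) * d ^ α := by
            apply mul_le_mul_of_nonneg_right _ (Real.rpow_nonneg hd0.le _)
            exact Real.rpow_le_rpow_of_exponent_le (by linarith) hα1
        _ = Mr * d ^ α := by rw [Real.rpow_one]
    calc |capMap (12 * N) A x - capMap (12 * N) A y| ≤ ((A.card : ℝ)⁻¹)^n0 := hbound
      _ = ((rr)⁻¹)^n0 := by rw [hrrdef]
      _ ≤ Mr * d ^ α := hfinal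

end E

section F

variable {N : ℕ} {A : Finset ℕ}

lemma cnt_surj (hcard : 1 ≤ A.card) :
    ∀ v, v < A.card → ∃ b ∈ A, (A.filter (fun a : ℕ => a < b)).card = v := by
  classical
  have hf : ∀ (a : ℕ) (_ : a ∈ A),
      (A.filter (fun x : ℕ => x < a)).card ∈ Finset.range A.card := by
    intro a ha
    rw [Finset.mem_range]
    have hsub : A.filter (fun x : ℕ => x < a) ⊆ A.erase a := by
      intro x hx
      rw [Finset.mem_filter] at hx
      exact Finset.mem_erase.2 ⟨by omega, hx.1⟩
    have h1 := Finset.card_le_card hsub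
    rw [Finset.card_erase_of_mem ha] at h1
    omega
  have hinj : ∀ (a₁ a₂ : ℕ) (ha₁ : a₁ ∈ A) (ha₂ : a₂ ∈ A),
      (A.filter (fun x : ℕ => x < a₁)).card = (A.filter (fun x : ℕ => x < a₂)).card
        → a₁ = a₂ := by
    have key : ∀ a₁ a₂ : ℕ, a₁ ∈ A → a₂ ∈ A → a₁ < a₂ →
        (A.filter (fun x : ℕ => x < a₁)).card < (A.filter (fun x : ℕ => x < a₂)).card := by
      intro a₁ a₂ ha₁ _ hlt
      have hins : insert a₁ (A.filter (fun x : ℕ => x < a₁)) ⊆ A.filter (fun x : ℕ => x < a₂) := by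
        intro x hx
        rw [Finset.mem_insert] at hx
        rw [Finset.mem_filter]
        rcases hx with rfl | hx
        · exact ⟨ha₁, hlt⟩
        · rw [Finset.mem_filter] at hx
          exact ⟨hx.1, by omega⟩
      have hnot : a₁ ∉ A.filter (fun x : ℕ => x < a₁) := by
        rw [Finset.mem_filter]
        push_neg
        intro _
        omega
      have := Finset.card_le_card hins
      rw [Finset.card_insert_of_notMem hnot] at this
      omega
    intro a₁ a₂ ha₁ ha₂ heq
    by_contra hne
    rcases Nat.lt_or_ge a₁ a₂ with h | h
    · have := key a₁ a₂ ha₁ ha₂ h; omega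
    · have h' : a₂ < a₁ := by omega
      have := key a₂ a₁ ha₂ ha₁ h'; omega
  intro v hv
  have := Finset.surj_on_of_inj_on_of_card_le
    (s := A) (t := Finset.range A.card)
    (fun a _ => (A.filter (fun x : ℕ => x < a)).card) hf hinj
    (by rw [Finset.card_range])
    v (Finset.mem_range.2 hv)
  obtain ⟨a, ha, hva⟩ := this
  exact ⟨a, ha, hva.symm⟩

lemma capMap_surj (hN : 1 ≤ N) (hA : A ⊆ Finset.Icc 1 N) (hcard : 2 ≤ A.card) :
    Set.Icc (0:ℝ) 1 ⊆
      capMap (12 * N) A '' {x | ∃ σ : ℕ → ℕ, (∀ j, σ j ∈ A) ∧ x = capVal (12 * N) σ} := by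
  intro y hy
  obtain ⟨c, hcb, hcy⟩ := exists_expansion hcard hy
  have hclt : ∀ j, c j < A.card := by
    intro j
    have h1 := hcb j
    have h2 : ((c j : ℕ) : ℝ) < (A.card : ℝ) := by linarith
    exact_mod_cast h2
  have hsel : ∀ j : ℕ, ∃ b ∈ A, (A.filter (fun a : ℕ => a < b)).card = c j :=
    fun j => cnt_surj (by omega) (c j) (hclt j)
  choose σ hσA hσc using hsel
  refine ⟨capVal (12 * N) σ, ⟨σ, hσA, rfl⟩, ?_⟩
  rw [capMap_val hN hA hσA]
  rw [hcy]
  exact tsum_congr fun j => by rw [hσc j]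

theorem capDim (hN : 1 ≤ N) (hA : A ⊆ Finset.Icc 1 N) (hcard : 2 ≤ A.card) :
    ENNReal.ofReal (Real.log (A.card) / Real.log ((12 * N : ℕ) : ℝ))
      ≤ dimH {x | ∃ σ : ℕ → ℕ, (∀ j, σ j ∈ A) ∧ x = capVal (12 * N) σ} := by
  classical
  set E := {x | ∃ σ : ℕ → ℕ, (∀ j, σ j ∈ A) ∧ x = capVal (12 * N) σ} with hE
  set Mr : ℝ := ((12 * N : ℕ) : ℝ) with hMrdef
  have hM12 : (12:ℝ) ≤ Mr := by
    rw [hMrdef]; have : (12:ℕ) ≤ 12 * N := by omega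
    exact_mod_cast this
  have hMr0 : (0:ℝ) < Mr := by linarith
  set al : ℝ := Real.log (A.card) / Real.log Mr with hal
  have hlogM : 0 < Real.log Mr := Real.log_pos (by linarith)
  have hrr2 : (2:ℝ) ≤ (A.card : ℝ) := by exact_mod_cast hcard
  have hlogr : 0 < Real.log (A.card) := Real.log_pos (by linarith)
  have hal0 : 0 < al := by rw [hal]; positivity
  set aln : NNReal := Real.toNNReal al with haln
  have haln0 : 0 < aln := Real.toNNReal_pos.2 hal0
  have halncoe : (aln : ℝ) = al := Real.coe_toNNReal al hal0.le
  set C : NNReal := Real.toNNReal Mr with hC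
  have hHolder : HolderOnWith C aln (capMap (12 * N) A) E := by
    intro x hx y hy
    obtain ⟨σ, hσA, rfl⟩ := hx
    obtain ⟨σ', hσA', rfl⟩ := hy
    have key := capMap_holder hN hA hcard hσA hσA'
    rw [edist_dist, edist_dist, Real.dist_eq, Real.dist_eq]
    rw [← hMrdef, ← hal] at key
    calc ENNReal.ofReal |capMap (12 * N) A (capVal (12 * N) σ)
          - capMap (12 * N) A (capVal (12 * N) σ')|
        ≤ ENNReal.ofReal (Mr * |capVal (12 * N) σ - capVal (12 * N) σ'| ^ al) :=
          ENNReal.ofReal_le_ofReal key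
      _ = ENNReal.ofReal Mr * ENNReal.ofReal (|capVal (12 * N) σ - capVal (12 * N) σ'| ^ al) :=
          ENNReal.ofReal_mul hMr0.le
      _ = (C : ℝ≥0∞) * ENNReal.ofReal (|capVal (12 * N) σ - capVal (12 * N) σ'|) ^ (aln : ℝ) := by
          congr 1
          rw [halncoe]
          rw [← ENNReal.ofReal_rpow_of_nonneg (abs_nonneg _) hal0.le]
  have himg : Set.Icc (0:ℝ) 1 ⊆ capMap (12 * N) A '' E := capMap_surj hN hA hcard
  have hIcc : dimH (Set.Icc (0:ℝ) 1) = 1 := by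
    rw [Real.dimH_of_nonempty_interior]
    · simp
    · rw [interior_Icc]
      exact ⟨1/2, by norm_num⟩
  have h3 : (1 : ℝ≥0∞) ≤ dimH (capMap (12 * N) A '' E) := by
    rw [← hIcc]
    exact dimH_mono himg
  have h2 : dimH (capMap (12 * N) A '' E) ≤ dimH E / aln :=
    hHolder.dimH_image_le haln0
  have h4 : (1 : ℝ≥0∞) ≤ dimH E / (aln : ℝ≥0∞) := le_trans h3 h2
  have h5 : (aln : ℝ≥0∞) ≤ dimH E := by
    rw [ENNReal.le_div_iff_mul_le (Or.inl (by exact_mod_cast haln0.ne'))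
      (Or.inl ENNReal.coe_ne_top), one_mul] at h4
    exact h4
  calc ENNReal.ofReal (Real.log (A.card) / Real.log ((12 * N : ℕ) : ℝ))
      = (aln : ℝ≥0∞) := by rw [haln, ENNReal.ofReal, hal, hMrdef]
    _ ≤ dimH E := h5

end F

theorem stmt0 (k : ℕ) (hk : 3 ≤ k) (ε : ℝ) (hε0 : 0 < ε) (hε : ε ≤ 1 / 12) :
    ENNReal.ofReal
        (Real.log (rk k ⌊1 / (12 * ε)⌋₊) / Real.log (12 * ⌊1 / (12 * ε)⌋₊)) ≤
      dAvoid k ε := by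
  classical
  set X : ℕ := ⌊1 / (12 * ε)⌋₊ with hX
  have hXpos : 1 ≤ X := by
    rw [hX]
    apply Nat.le_floor
    rw [Nat.cast_one, le_div_iff₀ (by linarith : (0:ℝ) < 12 * ε)]
    linarith
  -- extract an extremal AP-free set A
  have hSne : {m : ℕ | ∃ A : Finset ℕ, A ⊆ Finset.Icc 1 X ∧ ¬ ContainsAPNat k A ∧ A.card = m}.Nonempty := by
    refine ⟨0, ∅, Finset.empty_subset _, ?_, Finset.card_empty⟩
    rintro ⟨a, d, hd, hmem⟩
    exact absurd (hmem 0 (by omega)) (Finset.notMem_empty _)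
  have hSbdd : BddAbove {m : ℕ | ∃ A : Finset ℕ, A ⊆ Finset.Icc 1 X ∧ ¬ ContainsAPNat k A ∧ A.card = m} := by
    refine ⟨X, fun m hm => ?_⟩
    obtain ⟨A, hA, _, rfl⟩ := hm
    have := Finset.card_le_card hA
    rwa [Nat.card_Icc, Nat.add_sub_cancel] at this
  have hmem : rk k X ∈ {m : ℕ | ∃ A : Finset ℕ, A ⊆ Finset.Icc 1 X ∧ ¬ ContainsAPNat k A ∧ A.card = m} := by
    rw [rk]
    exact Nat.sSup_mem hSne hSbdd
  obtain ⟨A, hA, hAP, hcard⟩ := hmem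
  by_cases hr2 : 2 ≤ rk k X
  · -- main case
    have hcard2 : 2 ≤ A.card := by omega
    set E := {x | ∃ σ : ℕ → ℕ, (∀ j, σ j ∈ A) ∧ x = capVal (12 * X) σ} with hE
    have hbd : Bornology.IsBounded E := by
      apply (Metric.isBounded_Icc (0:ℝ) 1).subset
      rintro x ⟨σ, hσA, rfl⟩
      have := capVal_mem_Ioo (σ := σ) hXpos
        (fun j => (Finset.mem_Icc.1 (hA (hσA j))).1)
        (fun j => (Finset.mem_Icc.1 (hA (hσA j))).2)
      exact ⟨this.1.le, this.2.le⟩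
    have hεM : ε * ((12 * X : ℕ) : ℝ) ≤ 1 := by
      have hfl : (X:ℝ) ≤ 1 / (12 * ε) := by
        rw [hX]
        exact Nat.floor_le (by positivity)
      rw [le_div_iff₀ (by linarith : (0:ℝ) < 12 * ε)] at hfl
      push_cast
      nlinarith
    have hav : Avoids k ε E := capAvoids k X hk hXpos A hA hAP ε hε0 hεM
    have hdim := capDim hXpos hA hcard2
    have hle : dimH E ≤ dAvoid k ε := by
      rw [dAvoid]
      exact le_iSup₂ (f := fun (E : Set ℝ) (_ : Bornology.IsBounded E ∧ Avoids k ε E) => dimH E)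
        E ⟨hbd, hav⟩
    refine le_trans ?_ (le_trans hdim hle)
    apply le_of_eq
    congr 2
    · rw [hcard]
    · push_cast
      ring
  · -- degenerate case : rk ≤ 1, LHS = 0
    have h01 : rk k X = 0 ∨ rk k X = 1 := by omega
    have hlog0 : Real.log (rk k X) = 0 := by
      rcases h01 with h | h <;> rw [h] <;> simp
    rw [hlog0, zero_div, ENNReal.ofReal_zero]
    exact zero_le
end

section
/- For every integer k ≥ 3 and every ε > 0 with 1/ε > k, one has d(k,ε) ≤ (1/2)·( log(r_k(⌊1/ε + 1⌋) + 1) / log(⌊1/ε + 1⌋) + 1 ). -/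
open Set MeasureTheory
open scoped ENNReal

/-! ### Auxiliary lemmas -/

open Filter Metric Bornology
open scoped NNReal Topology

lemma card_le_rk {k N : ℕ} {A : Finset ℕ} (hA : A ⊆ Finset.Icc 1 N)
    (hAP : ¬ ContainsAPNat k A) : A.card ≤ rk k N := by
  apply le_csSup
  · refine ⟨N, ?_⟩
    rintro m ⟨B, hB, -, rfl⟩
    calc B.card ≤ (Finset.Icc 1 N).card := Finset.card_le_card hB
      _ = N := by simp [Nat.card_Icc]
  · exact ⟨A, hA, hAP, rfl⟩

lemma one_le_rk {k N : ℕ} (hk : 2 ≤ k) (hN : 1 ≤ N) : 1 ≤ rk k N := by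
  have h : ¬ ContainsAPNat k {1} := by
    rintro ⟨a, d, hd, h⟩
    have h0 := h 0 (by omega)
    have h1 := h 1 (by omega)
    simp only [Finset.mem_singleton] at h0 h1
    omega
  have := card_le_rk (k := k) (N := N) (A := {1}) (by simp [hN]) h
  simpa using this

/-- The fine subintervals (of length `δ'`) of `[c, c + N^2 δ']` meeting `E`. -/
noncomputable def childSet (E : Set ℝ) (N : ℕ) (c δ' : ℝ) : Finset ℕ := by
  classical
  exact (Finset.range (N ^ 2)).filter
    (fun t => (E ∩ Icc (c + t * δ') (c + (t + 1) * δ')).Nonempty)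

lemma mem_childSet {E : Set ℝ} {N : ℕ} {c δ' : ℝ} {t : ℕ} :
    t ∈ childSet E N c δ' ↔
      t < N ^ 2 ∧ (E ∩ Icc (c + t * δ') (c + (t + 1) * δ')).Nonempty := by
  classical
  simp [childSet]

/-- Key combinatorial step: an `ε`-avoiding set meets at most `N * rk k N` of the
`N^2` fine subintervals. -/
lemma childSet_card_le {k N : ℕ} {ε : ℝ} (hεN : 1 ≤ ε * N)
    {E : Set ℝ} (hA : Avoids k ε E) {c δ' : ℝ} (hδ' : 0 < δ') :
    (childSet E N c δ').card ≤ N * rk k N := by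
  classical
  have hN0 : 0 < N := by
    rcases Nat.eq_zero_or_pos N with h | h
    · exfalso; rw [h] at hεN; simp at hεN; linarith
    · exact h
  set V : ℕ → Finset ℕ := fun u =>
    (Finset.range N).filter (fun v => u + N * v ∈ childSet E N c δ') with hV
  have hVfree : ∀ u, ¬ ContainsAPNat k ((V u).image (· + 1)) := by
    intro u
    rintro ⟨a, d, hd, hmem⟩
    have hget : ∀ i, i < k → a + i * d - 1 ∈ V u ∧ 1 ≤ a + i * d := by
      intro i hi
      rcases Finset.mem_image.1 (hmem i hi) with ⟨v, hv, hveq⟩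
      constructor
      · have : a + i * d - 1 = v := by omega
        rwa [this]
      · omega
    set lam : ℝ := (N * d : ℕ) * δ' with hlam
    have hlam0 : 0 < lam := by
      have : (0:ℝ) < (N * d : ℕ) := by
        have : 0 < N * d := Nat.mul_pos hN0 hd
        exact_mod_cast this
      positivity
    obtain ⟨i, hik, hfar⟩ := hA (c + (u + N * (a - 1)) * δ' + δ' / 2) lam hlam0
    obtain ⟨hVi, hai1⟩ := hget i hik
    have htmem : u + N * (a + i * d - 1) ∈ childSet E N c δ' := by
      have := (Finset.mem_filter.1 hVi).2
      simpa using this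
    obtain ⟨x, hxE, hxI⟩ := (mem_childSet.1 htmem).2
    have hfx := hfar x hxE
    set T : ℝ := ((u + N * (a + i * d - 1) : ℕ) : ℝ) with hT
    have hpt : c + (u + N * (a - 1)) * δ' + δ' / 2 + i * lam = c + T * δ' + δ' / 2 := by
      have hTval : T = (u : ℝ) + (N : ℝ) * ((a : ℝ) - 1 + (i : ℝ) * (d : ℝ)) := by
        rw [hT]
        have h1 : (((a + i * d - 1 : ℕ)) : ℝ) = (a : ℝ) + (i : ℝ) * (d : ℝ) - 1 := by
          push_cast [Nat.cast_sub hai1]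
          ring
        push_cast [h1]
        ring
      rw [hTval, hlam]
      push_cast
      ring
    have hxlo : c + T * δ' ≤ x := hxI.1
    have hxhi : x ≤ c + T * δ' + δ' := by
      have h2 := hxI.2
      have : c + (T + 1) * δ' = c + T * δ' + δ' := by ring
      linarith [hxI.2, this.symm ▸ hxI.2]
    have habs : |x - (c + (u + N * (a - 1)) * δ' + δ' / 2 + i * lam)| ≤ δ' / 2 := by
      rw [hpt, abs_le]
      constructor <;> linarith
    have hbig : δ' / 2 < ε * lam := by
      have hd1 : (1:ℝ) ≤ (d:ℝ) := by exact_mod_cast hd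
      have hεlam : ε * lam = (ε * N) * d * δ' := by rw [hlam]; push_cast; ring
      have h1 : (1:ℝ) ≤ ε * N * d := by nlinarith
      have h2 : δ' ≤ ε * N * (d:ℝ) * δ' := by nlinarith
      rw [hεlam]; linarith
    have : ε * lam ≤ δ' / 2 := le_trans hfx habs
    linarith
  have hsub : childSet E N c δ' ⊆ (Finset.range N).biUnion
      (fun u => (V u).image (fun v => u + N * v)) := by
    intro t ht
    have htr : t < N ^ 2 := (mem_childSet.1 ht).1
    refine Finset.mem_biUnion.2 ⟨t % N, Finset.mem_range.2 (Nat.mod_lt _ hN0), ?_⟩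
    refine Finset.mem_image.2 ⟨t / N, ?_, Nat.mod_add_div t N⟩
    refine Finset.mem_filter.2 ⟨Finset.mem_range.2 ?_, ?_⟩
    · rw [Nat.div_lt_iff_lt_mul hN0]
      calc t < N ^ 2 := htr
        _ = N * N := sq N
    · rwa [Nat.mod_add_div t N]
  calc (childSet E N c δ').card
      ≤ ((Finset.range N).biUnion (fun u => (V u).image (fun v => u + N * v))).card :=
        Finset.card_le_card hsub
    _ ≤ ∑ u ∈ Finset.range N, ((V u).image (fun v => u + N * v)).card :=
        Finset.card_biUnion_le
    _ ≤ ∑ u ∈ Finset.range N, rk k N := by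
        refine Finset.sum_le_sum fun u _ => ?_
        calc ((V u).image (fun v => u + N * v)).card ≤ (V u).card := Finset.card_image_le
          _ = ((V u).image (· + 1)).card :=
            (Finset.card_image_of_injective _ (add_left_injective 1)).symm
          _ ≤ rk k N := by
            refine card_le_rk ?_ (hVfree u)
            intro w hw
            rcases Finset.mem_image.1 hw with ⟨v, hv, rfl⟩
            have : v < N := Finset.mem_range.1 (Finset.mem_filter.1 hv).1
            simp only [Finset.mem_Icc]
            omega
    _ = N * rk k N := by simp [Finset.sum_const, mul_comm]

open scoped Classical in
/-- Iterated covers of `E` by intervals of length `L / N ^ (2m)`. -/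
noncomputable def cover (E : Set ℝ) (N : ℕ) (c₀ L : ℝ) : ℕ → Finset ℝ
  | 0 => {c₀}
  | (m+1) => (cover E N c₀ L m).biUnion (fun c =>
      (childSet E N c (L / N ^ (2*m+2))).image
        (fun t : ℕ => c + (t : ℝ) * (L / N ^ (2*m+2))))

lemma cover_card {E : Set ℝ} {N : ℕ} {c₀ L : ℝ} {M : ℕ}
    (hcs : ∀ (c δ' : ℝ), 0 < δ' → (childSet E N c δ').card ≤ M)
    (hL : 0 < L) (hN : 0 < N) (m : ℕ) :
    (cover E N c₀ L m).card ≤ M ^ m := by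
  classical
  induction m with
  | zero => simp [cover]
  | succ m ih =>
    have hδ' : (0:ℝ) < L / N ^ (2*m+2) := by positivity
    calc (cover E N c₀ L (m+1)).card
        ≤ ∑ c ∈ cover E N c₀ L m,
            ((childSet E N c (L / N ^ (2*m+2))).image
              (fun t : ℕ => c + (t : ℝ) * (L / N ^ (2*m+2)))).card := by
          rw [cover]; exact Finset.card_biUnion_le
      _ ≤ ∑ c ∈ cover E N c₀ L m, M := by
          refine Finset.sum_le_sum fun c _ => ?_
          calc ((childSet E N c (L / N ^ (2*m+2))).image
              (fun t : ℕ => c + (t : ℝ) * (L / N ^ (2*m+2)))).card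
              ≤ (childSet E N c (L / N ^ (2*m+2))).card := Finset.card_image_le
            _ ≤ M := hcs c _ hδ'
      _ = (cover E N c₀ L m).card * M := by simp [Finset.sum_const, mul_comm]
      _ ≤ M ^ m * M := Nat.mul_le_mul_right _ ih
      _ = M ^ (m+1) := (pow_succ M m).symm

lemma cover_covers {E : Set ℝ} {N : ℕ} {c₀ L : ℝ}
    (hE : E ⊆ Icc c₀ (c₀ + L)) (hL : 0 < L) (hN : 0 < N) :
    ∀ m, ∀ x ∈ E, ∃ c ∈ cover E N c₀ L m, x ∈ Icc c (c + L / N ^ (2*m)) := by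
  classical
  intro m
  induction m with
  | zero =>
    intro x hx
    refine ⟨c₀, by simp [cover], ?_⟩
    simpa using hE hx
  | succ m ih =>
    intro x hx
    obtain ⟨c, hc, hxc⟩ := ih x hx
    set δ' : ℝ := L / N ^ (2*m+2) with hδ'def
    have hδ' : (0:ℝ) < δ' := by positivity
    have hNR : (0:ℝ) < (N:ℝ) ^ 2 := by positivity
    have hδeq : L / N ^ (2*m) = (N:ℝ) ^ 2 * δ' := by
      rw [hδ'def]
      field_simp
      ring
    set t : ℕ := min ⌊(x - c) / δ'⌋₊ (N ^ 2 - 1) with ht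
    have hN2 : 1 ≤ N ^ 2 := by have : 0 < N ^ 2 := pow_pos hN 2; omega
    have htlt : t < N ^ 2 := by omega
    have hxc1 : c ≤ x := hxc.1
    have hfl : (⌊(x - c) / δ'⌋₊ : ℝ) ≤ (x - c) / δ' :=
      Nat.floor_le (div_nonneg (by linarith) hδ'.le)
    have hlo : c + t * δ' ≤ x := by
      have h1 : (t : ℝ) ≤ (x - c) / δ' := by
        refine le_trans ?_ hfl
        exact_mod_cast Nat.cast_le.2 (min_le_left _ _)
      have := (le_div_iff₀ hδ').1 h1
      linarith
    have hhi : x ≤ c + (t + 1 : ℝ) * δ' := by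
      rcases le_or_gt ⌊(x - c) / δ'⌋₊ (N ^ 2 - 1) with h | h
      · have hteq : t = ⌊(x - c) / δ'⌋₊ := min_eq_left h
        have := Nat.lt_floor_add_one ((x - c) / δ')
        have h2 : (x - c) / δ' < (t : ℝ) + 1 := by rw [hteq]; exact_mod_cast this
        have := (div_lt_iff₀ hδ').1 h2
        nlinarith
      · have hteq : t = N ^ 2 - 1 := min_eq_right h.le
        have htN : (t : ℝ) + 1 = ((N:ℝ)) ^ 2 := by
          have : t + 1 = N ^ 2 := by omega
          have := congrArg (fun n : ℕ => (n : ℝ)) this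
          push_cast at this
          linarith
        rw [htN]
        have := hxc.2
        rw [hδeq] at this
        linarith
    have htc : t ∈ childSet E N c δ' := by
      refine mem_childSet.2 ⟨htlt, ⟨x, hx, hlo, ?_⟩⟩
      exact_mod_cast hhi
    refine ⟨c + t * δ', ?_, ?_⟩
    · rw [cover]
      refine Finset.mem_biUnion.2 ⟨c, hc, ?_⟩
      rw [hδ'def] at htc
      exact Finset.mem_image_of_mem _ htc
    · have h2 : 2 * (m + 1) = 2 * m + 2 := by omega
      rw [h2]
      exact ⟨hlo, by rw [← hδ'def]; linarith⟩

/-- Main estimate for a single bounded avoiding set. -/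
lemma dimH_le_of_avoids {k N : ℕ} {ε : ℝ} (hε0 : 0 < ε) (hεN : 1 ≤ ε * N) (hN2 : 2 ≤ N)
    {E : Set ℝ} (hB : Bornology.IsBounded E) (hA : Avoids k ε E) (hr1 : 1 ≤ rk k N) :
    dimH E ≤ ENNReal.ofReal ((1/2) * (Real.log (rk k N + 1) / Real.log N + 1)) := by
  classical
  set r : ℕ := rk k N with hr
  set s₀ : ℝ := (1/2) * (Real.log (r + 1) / Real.log N + 1) with hs₀
  have hN1R : (1:ℝ) < N := by exact_mod_cast hN2
  have hlogN : 0 < Real.log N := Real.log_pos hN1R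
  have hrR : (1:ℝ) ≤ (r:ℝ) := by exact_mod_cast hr1
  have hlogr : 0 ≤ Real.log ((r:ℝ) + 1) := Real.log_nonneg (by linarith)
  have hs₀pos : 0 < s₀ := by
    rw [hs₀]
    have : 0 ≤ Real.log ((r:ℝ)+1) / Real.log N := div_nonneg hlogr hlogN.le
    nlinarith
  have hNR0 : (0:ℝ) < N := by linarith
  have hN0 : 0 < N := by omega
  have hD0 : (0:ℝ) < (N:ℝ) * ((r:ℝ)+1) := by nlinarith
  have hkey : ((N:ℝ)^2) ^ s₀ = (N:ℝ) * ((r:ℝ)+1) := by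
    have hq : (0:ℝ) < (N:ℝ)^2 := by positivity
    rw [Real.rpow_def_of_pos hq, Real.log_pow]
    push_cast
    have harg : 2 * Real.log N * s₀ = Real.log ((r:ℝ)+1) + Real.log N := by
      rw [hs₀]
      field_simp
    rw [harg, Real.exp_add, Real.exp_log (by linarith : (0:ℝ) < (r:ℝ)+1),
      Real.exp_log hNR0]
    ring
  obtain ⟨R, hR0, hRE⟩ := hB.subset_closedBall_lt 0 0
  set c₀ : ℝ := -R with hc₀
  set L : ℝ := 2 * R with hLdef
  have hL : 0 < L := by rw [hLdef]; linarith
  have hEIcc : E ⊆ Icc c₀ (c₀ + L) := by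
    intro x hx
    have := hRE hx
    rw [Real.closedBall_eq_Icc] at this
    constructor
    · simpa [hc₀] using this.1
    · have := this.2; rw [hc₀, hLdef]; simp at this; linarith
  set M : ℕ := N * r with hM
  have hcs : ∀ (c δ' : ℝ), 0 < δ' → (childSet E N c δ').card ≤ M :=
    fun c δ' hδ' => childSet_card_le hεN hA hδ'
  have hδpow : ∀ m : ℕ, (L / N ^ (2*m)) ^ s₀
      = L ^ s₀ * ((((N:ℝ) * ((r:ℝ)+1)))⁻¹) ^ m := by
    intro m
    have hq0 : (0:ℝ) ≤ (N:ℝ)^2 := by positivity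
    have h1 : (N:ℝ) ^ (2*m) = ((N:ℝ)^2) ^ m := by rw [pow_mul]
    rw [h1, Real.div_rpow hL.le (pow_nonneg hq0 m)]
    have h2 : (((N:ℝ)^2) ^ m) ^ s₀ = (((N:ℝ)^2) ^ s₀) ^ m := by
      rw [← Real.rpow_natCast ((N:ℝ)^2) m, ← Real.rpow_mul hq0, mul_comm,
        Real.rpow_mul hq0, Real.rpow_natCast]
    rw [h2, hkey, div_eq_mul_inv, inv_pow]
  have hμ : μH[s₀] E = 0 := by
    refine le_antisymm ?_ zero_le
    have hcover := MeasureTheory.Measure.hausdorffMeasure_le_liminf_sum (d := s₀) (s := E)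
      (l := atTop) (ι := fun m => ↥(cover E N c₀ L m))
      (fun m => ENNReal.ofReal (L / N ^ (2*m)))
      ?_ (fun m i => Icc (i:ℝ) ((i:ℝ) + L / N ^ (2*m))) ?_ ?_
    · refine le_trans hcover ?_
      have hterm : ∀ m, (∑ i : ↥(cover E N c₀ L m),
          EMetric.diam (Icc (i:ℝ) ((i:ℝ) + L / N ^ (2*m))) ^ s₀)
          ≤ ENNReal.ofReal (L ^ s₀) * ENNReal.ofReal ((M:ℝ) / ((N:ℝ)*((r:ℝ)+1))) ^ m := by
        intro m
        have hδm : (0:ℝ) < L / N ^ (2*m) := by positivity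
        have hdiam : ∀ i : ↥(cover E N c₀ L m),
            EMetric.diam (Icc (i:ℝ) ((i:ℝ) + L / N ^ (2*m))) ^ s₀
              = ENNReal.ofReal ((L / N ^ (2*m)) ^ s₀) := by
          intro i
          rw [EMetric.diam, Real.ediam_Icc, add_sub_cancel_left, ENNReal.ofReal_rpow_of_pos hδm]
        calc (∑ i : ↥(cover E N c₀ L m),
              EMetric.diam (Icc (i:ℝ) ((i:ℝ) + L / N ^ (2*m))) ^ s₀)
            = ∑ _i : ↥(cover E N c₀ L m),
                ENNReal.ofReal ((L / N ^ (2*m)) ^ s₀) :=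
              Finset.sum_congr rfl (fun i _ => hdiam i)
          _ = ((cover E N c₀ L m).card : ℝ≥0∞)
                * ENNReal.ofReal ((L / N ^ (2*m)) ^ s₀) := by
              rw [Finset.sum_const, Finset.card_univ, Fintype.card_coe, nsmul_eq_mul]
          _ ≤ ((M ^ m : ℕ) : ℝ≥0∞) * ENNReal.ofReal ((L / N ^ (2*m)) ^ s₀) := by
              gcongr
              exact_mod_cast Nat.cast_le.2 (cover_card hcs hL hN0 m)
          _ = ENNReal.ofReal (L ^ s₀) * ENNReal.ofReal ((M:ℝ) / ((N:ℝ)*((r:ℝ)+1))) ^ m := by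
              rw [hδpow m,
                show ((M ^ m : ℕ) : ℝ≥0∞) = ENNReal.ofReal ((M ^ m : ℕ) : ℝ) from
                  (ENNReal.ofReal_natCast _).symm,
                ← ENNReal.ofReal_mul (by positivity),
                ← ENNReal.ofReal_pow (by positivity),
                ← ENNReal.ofReal_mul (by positivity)]
              congr 1
              push_cast
              rw [div_eq_mul_inv, mul_pow]
              ring
      have hρ : ENNReal.ofReal ((M:ℝ) / ((N:ℝ)*((r:ℝ)+1))) < 1 := by
        rw [ENNReal.ofReal_lt_one]
        rw [div_lt_one hD0]
        rw [hM]
        push_cast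
        nlinarith
      have htend : Tendsto (fun m => ENNReal.ofReal (L ^ s₀)
          * ENNReal.ofReal ((M:ℝ) / ((N:ℝ)*((r:ℝ)+1))) ^ m) atTop (𝓝 0) := by
        have h0 := ENNReal.tendsto_pow_atTop_nhds_zero_of_lt_one hρ
        have := ENNReal.Tendsto.const_mul h0
          (Or.inr (ENNReal.ofReal_ne_top : ENNReal.ofReal (L ^ s₀) ≠ ⊤))
        simpa using this
      calc liminf (fun m => ∑ i : ↥(cover E N c₀ L m),
              EMetric.diam (Icc (i:ℝ) ((i:ℝ) + L / N ^ (2*m))) ^ s₀) atTop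
          ≤ liminf (fun m => ENNReal.ofReal (L ^ s₀)
              * ENNReal.ofReal ((M:ℝ) / ((N:ℝ)*((r:ℝ)+1))) ^ m) atTop :=
            liminf_le_liminf (Eventually.of_forall hterm)
        _ = 0 := htend.liminf_eq
    · have hreal : Tendsto (fun m : ℕ => L / N ^ (2*m)) atTop (𝓝 0) := by
        have h1 : ∀ m : ℕ, L / N ^ (2*m) = L * (((N:ℝ)^2)⁻¹) ^ m := by
          intro m
          rw [pow_mul, div_eq_mul_inv, inv_pow]
        rw [funext h1]
        have hq1 : ((N:ℝ)^2)⁻¹ < 1 := by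
          rw [inv_lt_one_iff₀]
          right; nlinarith
        have hq2 : (0:ℝ) ≤ ((N:ℝ)^2)⁻¹ := by positivity
        simpa using (tendsto_pow_atTop_nhds_zero_of_lt_one hq2 hq1).const_mul L
      have := ENNReal.tendsto_ofReal hreal
      simpa using this
    · refine Eventually.of_forall fun m => fun i => ?_
      rw [Real.ediam_Icc, add_sub_cancel_left]
    · refine Eventually.of_forall fun m => fun x hx => ?_
      obtain ⟨c, hc, hxc⟩ := cover_covers hEIcc hL hN0 m x hx
      exact mem_iUnion.2 ⟨⟨c, hc⟩, hxc⟩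
  set d₀ : ℝ≥0 := ⟨s₀, hs₀pos.le⟩ with hd₀
  have hcoe : ((d₀ : ℝ≥0∞)) = ENNReal.ofReal s₀ := by
    rw [ENNReal.ofReal, Real.toNNReal_of_nonneg hs₀pos.le]
    rfl
  have hdim : dimH E ≤ (d₀ : ℝ≥0∞) := by
    refine dimH_le_of_hausdorffMeasure_ne_top ?_
    have : ((d₀ : ℝ≥0) : ℝ) = s₀ := rfl
    rw [this, hμ]
    exact ENNReal.zero_ne_top
  rw [hcoe] at hdim
  exact hdim

theorem stmt2 (k : ℕ) (hk : 3 ≤ k) (ε : ℝ) (hε0 : 0 < ε) (hkε : (k : ℝ) < 1 / ε) :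
    dAvoid k ε ≤
      ENNReal.ofReal ((1 / 2) *
        (Real.log (rk k ⌊1 / ε + 1⌋₊ + 1) / Real.log (⌊1 / ε + 1⌋₊) + 1)) := by
  set N : ℕ := ⌊1 / ε + 1⌋₊ with hN
  have hflr : 1 / ε < (N : ℝ) := by
    have := Nat.sub_one_lt_floor (1 / ε + 1)
    rw [hN]
    linarith [this]
  have hεN : 1 ≤ ε * N := by
    have h1 : 1 / ε ≤ (N : ℝ) := hflr.le
    rw [div_le_iff₀ hε0] at h1
    linarith [h1]
  have hkN : (k : ℝ) < (N : ℝ) := lt_trans hkε hflr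
  have hN2 : 2 ≤ N := by
    have hk3 : (3 : ℝ) ≤ (k : ℝ) := by exact_mod_cast hk
    have : (2 : ℝ) < (N : ℝ) := by linarith
    exact_mod_cast this.le
  have hr1 : 1 ≤ rk k N := one_le_rk (by omega) (by omega)
  refine iSup_le fun E => iSup_le fun hE => ?_
  exact dimH_le_of_avoids hε0 hεN hN2 hE.1 hE.2 hr1
end

section
/- For every fixed integer k ≥ 3, d(k,ε) tends to 1 as ε → 0⁺; that is, for every δ > 0 there exists ε₀ > 0 such that d(k,ε) > 1 − δ for all ε ∈ (0, ε₀). -/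
open Set MeasureTheory
open scoped ENNReal

open scoped NNReal

namespace APAvoid

section SummableLemmas

lemma summable_geom_succ (A x : ℝ) (hx0 : 0 ≤ x) (hx1 : x < 1) :
    Summable (fun j : ℕ => A * x ^ (j+1)) := by
  have h : Summable (fun j : ℕ => x ^ j) := summable_geometric_of_lt_one hx0 hx1
  exact (h.mul_left (A * x)).congr (fun j => by ring)

lemma summable_aux {x A : ℝ} (hx0 : 0 ≤ x) (hx1 : x < 1) {u : ℕ → ℝ}
    (hu : ∀ j, |u j| ≤ A) : Summable (fun j => u j * x ^ (j+1)) := by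
  apply Summable.of_norm
  refine Summable.of_nonneg_of_le (fun j => norm_nonneg _) (fun j => ?_)
    (summable_geom_succ A x hx0 hx1)
  rw [Real.norm_eq_abs, abs_mul, abs_pow, abs_of_nonneg hx0]
  exact mul_le_mul_of_nonneg_right (hu j) (pow_nonneg hx0 _)

lemma tsum_geom_succ {x : ℝ} (hx0 : 0 ≤ x) (hx1 : x < 1) :
    ∑' j : ℕ, x ^ (j+1) = x / (1 - x) := by
  have h : Summable (fun j : ℕ => x ^ j) := summable_geometric_of_lt_one hx0 hx1
  calc ∑' j : ℕ, x ^ (j+1) = ∑' j : ℕ, x * x ^ j := by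
        apply tsum_congr; intro j; ring
    _ = x * (1 - x)⁻¹ := by rw [tsum_mul_left, tsum_geometric_of_lt_one hx0 hx1]
    _ = x / (1 - x) := by rw [div_eq_mul_inv]

lemma geom_upper {x A : ℝ} (hx0 : 0 ≤ x) (hx1 : x < 1) {u : ℕ → ℝ}
    (hu : ∀ j, |u j| ≤ A) : |∑' j, u j * x ^ (j+1)| ≤ A * x / (1 - x) := by
  have hs := summable_aux hx0 hx1 hu
  calc |∑' j, u j * x ^ (j+1)| ≤ ∑' j, ‖u j * x ^ (j+1)‖ := by
        rw [← Real.norm_eq_abs]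
        exact norm_tsum_le_tsum_norm hs.norm
    _ ≤ ∑' j, A * x ^ (j+1) := by
        refine hs.norm.tsum_le_tsum (fun j => ?_) (summable_geom_succ A x hx0 hx1)
        rw [Real.norm_eq_abs, abs_mul, abs_pow, abs_of_nonneg hx0]
        exact mul_le_mul_of_nonneg_right (hu j) (pow_nonneg hx0 _)
    _ = A * (x / (1-x)) := by rw [tsum_mul_left, tsum_geom_succ hx0 hx1]
    _ = A * x / (1 - x) := by ring

lemma geom_shift {x A : ℝ} (hx0 : 0 ≤ x) (hx1 : x < 1) {u : ℕ → ℝ}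
    (hu : ∀ j, |u j| ≤ A) (m : ℕ) (hm : ∀ j < m, u j = 0) :
    ∑' j, u j * x ^ (j+1) = x ^ m * ∑' j, u (j+m) * x ^ (j+1) := by
  have hs := summable_aux hx0 hx1 hu
  have h1 := hs.sum_add_tsum_nat_add m
  have h2 : ∑ j ∈ Finset.range m, u j * x ^ (j+1) = 0 := by
    apply Finset.sum_eq_zero
    intro j hj
    rw [hm j (Finset.mem_range.mp hj), zero_mul]
  rw [← h1, h2, zero_add, ← tsum_mul_left]
  apply tsum_congr
  intro j
  ring

lemma geom_lower {x A : ℝ} (hx0 : 0 ≤ x) (hx1 : x < 1) {u : ℕ → ℝ}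
    (hu : ∀ j, |u j| ≤ A) (h0 : 1 ≤ |u 0|) :
    x - A * x ^ 2 / (1 - x) ≤ |∑' j, u j * x ^ (j+1)| := by
  have hs := summable_aux hx0 hx1 hu
  have hsplit := hs.tsum_eq_zero_add
  have htail : |∑' j, u (j+1) * x ^ ((j+1)+1)| ≤ A * x ^ 2 / (1 - x) := by
    have hu' : ∀ j, |u (j+1) * x| ≤ A * x := by
      intro j
      rw [abs_mul, abs_of_nonneg hx0]
      exact mul_le_mul_of_nonneg_right (hu _) hx0
    have h := geom_upper hx0 hx1 hu'
    calc |∑' j, u (j+1) * x ^ ((j+1)+1)| = |∑' j, (u (j+1) * x) * x ^ (j+1)| := by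
          apply congrArg; apply tsum_congr; intro j; ring
      _ ≤ (A * x) * x / (1-x) := h
      _ = A * x ^ 2 / (1 - x) := by ring
  have h0x : x ≤ |u 0 * x ^ (0+1)| := by
    rw [abs_mul, abs_pow, abs_of_nonneg hx0, pow_one]
    nlinarith [abs_nonneg (u 0)]
  rw [hsplit]
  have habs : |u 0 * x ^ (0+1)| - |∑' j, u (j+1) * x ^ ((j+1)+1)| ≤
      |u 0 * x ^ (0+1) + ∑' j, u (j+1) * x ^ ((j+1)+1)| := by
    have h := abs_sub_abs_le_abs_sub (u 0 * x ^ (0+1)) (-(∑' j, u (j+1) * x ^ ((j+1)+1)))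
    simpa [sub_neg_eq_add] using h
  linarith

end SummableLemmas

section Casts

lemma one_le_abs_sub_of_ne {p q : ℕ} (h : p ≠ q) : 1 ≤ |(p:ℝ) - q| := by
  have h1 : ((p:ℤ) - q) ≠ 0 := sub_ne_zero.mpr (by exact_mod_cast h)
  have h2 : 1 ≤ |(p:ℤ) - q| := Int.one_le_abs h1
  have h3 : (p:ℝ) - q = (((p:ℤ) - q : ℤ) : ℝ) := by push_cast; ring
  rw [h3, ← Int.cast_abs]
  exact_mod_cast h2

lemma one_le_abs_comb_of_ne {p q r : ℕ} (h : p + q ≠ 2 * r) :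
    1 ≤ |(p:ℝ) + q - 2 * r| := by
  have h1 : ((p:ℤ) + q - 2 * r) ≠ 0 := by
    intro hc
    apply h
    have : (p:ℤ) + q = 2 * r := by linarith
    exact_mod_cast this
  have h2 : 1 ≤ |(p:ℤ) + q - 2 * r| := Int.one_le_abs h1
  have h3 : (p:ℝ) + q - 2 * r = (((p:ℤ) + q - 2 * r : ℤ) : ℝ) := by push_cast; ring
  rw [h3, ← Int.cast_abs]
  exact_mod_cast h2

end Casts

section Cantor

variable {b : ℕ} (M : ℕ) (dig : Fin b → ℕ)

/-- The Cantor-type map sending digit sequences to reals. -/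
noncomputable def lamC (c : ℕ → Fin b) : ℝ :=
  ∑' j, (dig (c j) : ℝ) * ((M:ℝ)⁻¹) ^ (j+1)

variable {M dig}

lemma xM_pos (hM : 2 ≤ M) : 0 < ((M:ℝ))⁻¹ := by
  have : (0:ℝ) < M := by exact_mod_cast Nat.lt_of_lt_of_le (by norm_num) hM
  positivity

lemma xM_mul (hM : 2 ≤ M) : (M:ℝ) * (M:ℝ)⁻¹ = 1 := by
  have : (0:ℝ) < M := by exact_mod_cast Nat.lt_of_lt_of_le (by norm_num) hM
  field_simp

lemma xM_le_half (hM : 2 ≤ M) : ((M:ℝ))⁻¹ ≤ 1/2 := by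
  have h2 : (2:ℝ) ≤ M := by exact_mod_cast hM
  rw [inv_le_comm₀ (by linarith) (by norm_num)]
  simpa using h2

lemma xM_lt_one (hM : 2 ≤ M) : ((M:ℝ))⁻¹ < 1 :=
  lt_of_le_of_lt (xM_le_half hM) (by norm_num)

lemma dig_le_real (hdig : ∀ i, 8 * dig i ≤ M) (i : Fin b) :
    (dig i : ℝ) ≤ (M:ℝ)/8 := by
  have h := hdig i
  have h' : (8 * dig i : ℝ) ≤ M := by exact_mod_cast h
  push_cast at h'
  linarith

lemma summable_lamC (hM : 2 ≤ M) (hdig : ∀ i, 8 * dig i ≤ M) (c : ℕ → Fin b) :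
    Summable (fun j => (dig (c j) : ℝ) * ((M:ℝ)⁻¹) ^ (j+1)) := by
  refine summable_aux (le_of_lt (xM_pos hM)) (xM_lt_one hM) (A := (M:ℝ)/8) (fun j => ?_)
  rw [abs_of_nonneg (Nat.cast_nonneg _)]
  exact dig_le_real hdig _

lemma lamC_nonneg (hM : 2 ≤ M) (c : ℕ → Fin b) :
    0 ≤ lamC M dig c :=
  tsum_nonneg (fun j => mul_nonneg (Nat.cast_nonneg _)
    (pow_nonneg (le_of_lt (xM_pos hM)) _))

lemma lamC_le_one (hM : 2 ≤ M) (hdig : ∀ i, 8 * dig i ≤ M) (c : ℕ → Fin b) :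
    lamC M dig c ≤ 1 := by
  set x := ((M:ℝ))⁻¹ with hx
  have hx0 := le_of_lt (xM_pos hM)
  have hx1 := xM_lt_one hM
  have hxh := xM_le_half hM
  have h1 : lamC M dig c ≤ ∑' j : ℕ, (M:ℝ)/8 * x ^ (j+1) := by
    refine (summable_lamC hM hdig c).tsum_le_tsum (fun j => ?_)
      (summable_geom_succ _ _ hx0 hx1)
    exact mul_le_mul_of_nonneg_right (dig_le_real hdig _) (pow_nonneg hx0 _)
  have h2 : ∑' j : ℕ, (M:ℝ)/8 * x ^ (j+1) = (M:ℝ)/8 * (x / (1-x)) := by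
    rw [tsum_mul_left, tsum_geom_succ hx0 hx1]
  have h3 : x / (1-x) ≤ 2 * x := by
    rw [div_le_iff₀ (by linarith)]
    nlinarith
  have h4 : (M:ℝ) * x = 1 := xM_mul hM
  calc lamC M dig c ≤ (M:ℝ)/8 * (x / (1-x)) := by rw [← h2]; exact h1
    _ ≤ (M:ℝ)/8 * (2*x) := by
        apply mul_le_mul_of_nonneg_left h3
        positivity
    _ = ((M:ℝ) * x)/4 := by ring
    _ ≤ 1 := by rw [h4]; norm_num

/-- difference of two `lamC` values written as one series -/
lemma lamC_sub_eq (hM : 2 ≤ M) (hdig : ∀ i, 8 * dig i ≤ M) (c c' : ℕ → Fin b) :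
    lamC M dig c - lamC M dig c'
      = ∑' j, ((dig (c j) : ℝ) - (dig (c' j) : ℝ)) * ((M:ℝ)⁻¹) ^ (j+1) := by
  rw [lamC, lamC, ← Summable.tsum_sub (summable_lamC hM hdig c) (summable_lamC hM hdig c')]
  apply tsum_congr
  intro j
  ring

lemma lamC_diff_upper (hM : 2 ≤ M) (hdig : ∀ i, 8 * dig i ≤ M) {c c' : ℕ → Fin b}
    {m : ℕ} (hm : ∀ j < m, c j = c' j) :
    |lamC M dig c - lamC M dig c'| ≤ (M:ℝ)/4 * ((M:ℝ)⁻¹) ^ (m+1) := by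
  set x := ((M:ℝ))⁻¹ with hx
  have hx0 := le_of_lt (xM_pos hM)
  have hx1 := xM_lt_one hM
  have hxh := xM_le_half hM
  set u : ℕ → ℝ := fun j => (dig (c j) : ℝ) - (dig (c' j) : ℝ) with hu
  have hub : ∀ j, |u j| ≤ (M:ℝ)/8 := by
    intro j
    rw [abs_sub_le_iff]
    constructor
    · have := dig_le_real hdig (c j)
      have h2 : (0:ℝ) ≤ dig (c' j) := Nat.cast_nonneg _
      linarith
    · have := dig_le_real hdig (c' j)
      have h2 : (0:ℝ) ≤ dig (c j) := Nat.cast_nonneg _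
      linarith
  have heq := lamC_sub_eq hM hdig c c' (dig := dig)
  have hvanish : ∀ j < m, u j = 0 := by
    intro j hj
    simp [hu, hm j hj]
  rw [heq, geom_shift hx0 hx1 hub m hvanish]
  rw [abs_mul, abs_pow, abs_of_nonneg hx0]
  have hup : |∑' j, u (j+m) * x ^ (j+1)| ≤ (M:ℝ)/8 * x / (1-x) :=
    geom_upper hx0 hx1 (fun j => hub (j+m))
  have hMx := xM_mul hM
  have h3 : (M:ℝ)/8 * x / (1-x) ≤ (M:ℝ)/4 * x := by
    have e1 : (M:ℝ)/8 * x = 1/8 := by rw [div_mul_eq_mul_div, hMx]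
    have e2 : (M:ℝ)/4 * x = 1/4 := by rw [div_mul_eq_mul_div, hMx]
    rw [e1, e2, div_le_iff₀ (by linarith)]
    linarith
  calc x ^ m * |∑' j, u (j+m) * x ^ (j+1)| ≤ x ^ m * ((M:ℝ)/4 * x) := by
        apply mul_le_mul_of_nonneg_left (le_trans hup h3) (pow_nonneg hx0 _)
    _ = (M:ℝ)/4 * x ^ (m+1) := by ring

lemma lamC_diff_lower (hM : 2 ≤ M) (hdig : ∀ i, 8 * dig i ≤ M) {c c' : ℕ → Fin b}
    {m : ℕ} (hm : ∀ j < m, c j = c' j) (hne : dig (c m) ≠ dig (c' m)) :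
    1/2 * ((M:ℝ)⁻¹) ^ (m+1) ≤ |lamC M dig c - lamC M dig c'| := by
  set x := ((M:ℝ))⁻¹ with hx
  have hx0 := le_of_lt (xM_pos hM)
  have hx1 := xM_lt_one hM
  have hxh := xM_le_half hM
  have hMx := xM_mul hM
  set u : ℕ → ℝ := fun j => (dig (c j) : ℝ) - (dig (c' j) : ℝ) with hu
  have hub : ∀ j, |u j| ≤ (M:ℝ)/8 := by
    intro j
    rw [abs_sub_le_iff]
    constructor
    · have := dig_le_real hdig (c j)
      have h2 : (0:ℝ) ≤ dig (c' j) := Nat.cast_nonneg _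
      linarith
    · have := dig_le_real hdig (c' j)
      have h2 : (0:ℝ) ≤ dig (c j) := Nat.cast_nonneg _
      linarith
  have heq := lamC_sub_eq hM hdig c c' (dig := dig)
  have hvanish : ∀ j < m, u j = 0 := by
    intro j hj
    simp [hu, hm j hj]
  rw [heq, geom_shift hx0 hx1 hub m hvanish]
  rw [abs_mul, abs_pow, abs_of_nonneg hx0]
  have h0 : 1 ≤ |u (0+m)| := by
    simpa [hu] using one_le_abs_sub_of_ne hne
  have hlow : x - (M:ℝ)/8 * x^2 / (1-x) ≤ |∑' j, u (j+m) * x ^ (j+1)| :=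
    geom_lower hx0 hx1 (fun j => hub (j+m)) h0
  have h3 : (M:ℝ)/8 * x^2 / (1-x) ≤ 1/2 * x := by
    have e1 : (M:ℝ)/8 * x^2 = x/8 := by
      have : (M:ℝ)/8 * x^2 = ((M:ℝ)*x)*x/8 := by ring
      rw [this, hMx]; ring
    rw [e1, div_le_iff₀ (by linarith)]
    nlinarith
  have h4 : 1/2 * x ≤ |∑' j, u (j+m) * x ^ (j+1)| := by linarith
  calc 1/2 * x ^ (m+1) = x ^ m * (1/2 * x) := by ring
    _ ≤ x ^ m * |∑' j, u (j+m) * x ^ (j+1)| :=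
        mul_le_mul_of_nonneg_left h4 (pow_nonneg hx0 _)

lemma lamC_comb_eq (hM : 2 ≤ M) (hdig : ∀ i, 8 * dig i ≤ M) (c0 c1 c2 : ℕ → Fin b) :
    lamC M dig c0 + lamC M dig c2 - 2 * lamC M dig c1
      = ∑' j, ((dig (c0 j) : ℝ) + (dig (c2 j) : ℝ) - 2 * (dig (c1 j) : ℝ))
          * ((M:ℝ)⁻¹) ^ (j+1) := by
  have h0 := summable_lamC hM hdig c0
  have h1 := summable_lamC hM hdig c1
  have h2 := summable_lamC hM hdig c2
  rw [lamC, lamC, lamC, ← Summable.tsum_add h0 h2, ← tsum_mul_left, ← Summable.tsum_sub (h0.add h2) (h1.mul_left 2)]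
  apply tsum_congr
  intro j
  ring

lemma lamC_comb_lower (hM : 2 ≤ M) (hdig : ∀ i, 8 * dig i ≤ M) {c0 c1 c2 : ℕ → Fin b}
    {m : ℕ} (hm : ∀ j < m, dig (c0 j) + dig (c2 j) = 2 * dig (c1 j))
    (hne : dig (c0 m) + dig (c2 m) ≠ 2 * dig (c1 m)) :
    1/2 * ((M:ℝ)⁻¹) ^ (m+1) ≤ |lamC M dig c0 + lamC M dig c2 - 2 * lamC M dig c1| := by
  set x := ((M:ℝ))⁻¹ with hx
  have hx0 := le_of_lt (xM_pos hM)
  have hx1 := xM_lt_one hM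
  have hxh := xM_le_half hM
  have hMx := xM_mul hM
  set u : ℕ → ℝ := fun j => (dig (c0 j) : ℝ) + (dig (c2 j) : ℝ) - 2 * (dig (c1 j) : ℝ) with hu
  have hub : ∀ j, |u j| ≤ (M:ℝ)/4 := by
    intro j
    have b0 := dig_le_real hdig (c0 j)
    have b1 := dig_le_real hdig (c1 j)
    have b2 := dig_le_real hdig (c2 j)
    have n0 : (0:ℝ) ≤ dig (c0 j) := Nat.cast_nonneg _
    have n1 : (0:ℝ) ≤ dig (c1 j) := Nat.cast_nonneg _
    have n2 : (0:ℝ) ≤ dig (c2 j) := Nat.cast_nonneg _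
    rw [abs_le]
    constructor <;> simp only [hu] <;> linarith
  have heq := lamC_comb_eq hM hdig c0 c1 c2 (dig := dig)
  have hvanish : ∀ j < m, u j = 0 := by
    intro j hj
    have h := hm j hj
    have h' : ((dig (c0 j) : ℝ)) + ((dig (c2 j)):ℝ) = 2 * ((dig (c1 j)):ℝ) := by
      exact_mod_cast h
    simp only [hu]
    linarith
  rw [heq, geom_shift hx0 hx1 hub m hvanish]
  rw [abs_mul, abs_pow, abs_of_nonneg hx0]
  have h0 : 1 ≤ |u (0+m)| := by
    simpa [hu] using one_le_abs_comb_of_ne hne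
  have hlow : x - (M:ℝ)/4 * x^2 / (1-x) ≤ |∑' j, u (j+m) * x ^ (j+1)| :=
    geom_lower hx0 hx1 (fun j => hub (j+m)) h0
  have h3 : (M:ℝ)/4 * x^2 / (1-x) ≤ 1/2 * x := by
    have e1 : (M:ℝ)/4 * x^2 = x/4 := by
      have e : (M:ℝ)/4 * x^2 = ((M:ℝ)*x)*x/4 := by ring
      rw [e, hMx]; ring
    rw [e1, div_le_iff₀ (by linarith)]
    nlinarith
  have h4 : 1/2 * x ≤ |∑' j, u (j+m) * x ^ (j+1)| := by linarith
  calc 1/2 * x ^ (m+1) = x ^ m * (1/2 * x) := by ring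
    _ ≤ x ^ m * |∑' j, u (j+m) * x ^ (j+1)| :=
        mul_le_mul_of_nonneg_left h4 (pow_nonneg hx0 _)

/-- The Cantor-type set. -/
def cantorSet (M : ℕ) {b : ℕ} (dig : Fin b → ℕ) : Set ℝ := Set.range (lamC M dig)

lemma cantorSet_bounded (hM : 2 ≤ M) (hdig : ∀ i, 8 * dig i ≤ M) :
    Bornology.IsBounded (cantorSet M dig) := by
  apply Bornology.IsBounded.subset (Metric.isBounded_Icc (0:ℝ) 1)
  rintro y ⟨c, rfl⟩
  exact ⟨lamC_nonneg hM c, lamC_le_one hM hdig c⟩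

theorem cantorSet_avoids (hM : 2 ≤ M) (hdig : ∀ i, 8 * dig i ≤ M)
    (hinj : Function.Injective dig)
    (hAP : ∀ i j l : Fin b, dig i + dig j = 2 * dig l → i = j)
    {k : ℕ} (hk : 3 ≤ k) {ε : ℝ} (hε : ε ≤ 1/(2*M)) :
    Avoids k ε (cantorSet M dig) := by
  intro a lam hlam
  by_contra hcon
  push_neg at hcon
  have hMpos : (0:ℝ) < M := by exact_mod_cast Nat.lt_of_lt_of_le (by norm_num) hM
  have hM2 : (2:ℝ) ≤ M := by exact_mod_cast hM
  have hε4 : ε ≤ 1/4 := by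
    refine le_trans hε ?_
    rw [div_le_div_iff₀ (by linarith) (by norm_num)]
    linarith
  obtain ⟨e0, he0E, he0⟩ := hcon 0 (by omega)
  obtain ⟨e1, he1E, he1⟩ := hcon 1 (by omega)
  obtain ⟨e2, he2E, he2⟩ := hcon 2 (by omega)
  obtain ⟨c0, rfl⟩ := he0E
  obtain ⟨c1, rfl⟩ := he1E
  obtain ⟨c2, rfl⟩ := he2E
  rw [show ((0:ℕ):ℝ) = 0 by norm_num] at he0
  rw [show ((1:ℕ):ℝ) = 1 by norm_num] at he1
  rw [show ((2:ℕ):ℝ) = 2 by norm_num] at he2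
  rw [abs_lt] at he0 he1 he2
  have hεlam : ε * lam ≤ lam / 4 := by nlinarith
  by_cases hall : ∀ j, dig (c0 j) + dig (c2 j) = 2 * dig (c1 j)
  · have hc02 : c0 = c2 := by
      funext j
      exact hAP _ _ _ (hall j)
    rw [hc02] at he0
    -- lamC c2 close to both a and a + 2 lam : contradiction
    nlinarith
  · push_neg at hall
    set m := Nat.find hall with hmdef
    have hne : dig (c0 m) + dig (c2 m) ≠ 2 * dig (c1 m) := Nat.find_spec hall
    have hmin : ∀ j < m, dig (c0 j) + dig (c2 j) = 2 * dig (c1 j) := by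
      intro j hj
      exact of_not_not (Nat.find_min hall hj)
    have hlow := lamC_comb_lower hM hdig hmin hne
    have hagree : ∀ j < m, c0 j = c2 j := fun j hj => hAP _ _ _ (hmin j hj)
    have hupper := lamC_diff_upper hM hdig hagree (c := c0) (c' := c2)
    set t := ((M:ℝ)⁻¹) ^ (m+1) with ht
    have ht0 : 0 < t := pow_pos (xM_pos hM) _
    -- combination bound
    have hcomb : |lamC M dig c0 + lamC M dig c2 - 2 * lamC M dig c1| < 4 * (ε * lam) := by
      rw [abs_lt]
      constructor <;> nlinarith
    -- separation bound
    have hsep : 3/2 * lam ≤ |lamC M dig c0 - lamC M dig c2| := by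
      rw [abs_sub_comm]
      refine le_trans ?_ (le_abs_self _)
      nlinarith
    have h1 : t < 8 * ε * lam := by nlinarith
    have h2 : (M:ℝ) * ε ≤ 1/2 := by
      have := mul_le_mul_of_nonneg_left hε (le_of_lt hMpos)
      calc (M:ℝ) * ε ≤ (M:ℝ) * (1/(2*M)) := this
        _ = 1/2 := by field_simp
    have h3 : 6 * lam ≤ (M:ℝ) * t := by nlinarith
    nlinarith [mul_lt_mul_of_pos_left h1 hMpos]

end Cantor

section Phi

variable {b : ℕ}

/-- Base-`b` value of a digit sequence. -/
noncomputable def phiC (b : ℕ) (c : ℕ → Fin b) : ℝ :=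
  ∑' j, ((c j : ℕ) : ℝ) * ((b:ℝ)⁻¹) ^ (j+1)

lemma fin_le_real (hb : 2 ≤ b) (i : Fin b) : ((i : ℕ) : ℝ) ≤ (b:ℝ) - 1 := by
  have h : (i : ℕ) + 1 ≤ b := i.2
  have h' : ((i:ℕ) : ℝ) + 1 ≤ (b:ℝ) := by exact_mod_cast h
  linarith

lemma summable_phiC (hb : 2 ≤ b) (c : ℕ → Fin b) :
    Summable (fun j => ((c j : ℕ) : ℝ) * ((b:ℝ)⁻¹) ^ (j+1)) := by
  refine summable_aux (le_of_lt (xM_pos hb)) (xM_lt_one hb) (A := (b:ℝ) - 1) (fun j => ?_)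
  rw [abs_of_nonneg (Nat.cast_nonneg _)]
  exact fin_le_real hb _

lemma phiC_diff_upper (hb : 2 ≤ b) {c c' : ℕ → Fin b}
    {m : ℕ} (hm : ∀ j < m, c j = c' j) :
    |phiC b c - phiC b c'| ≤ ((b:ℝ)⁻¹) ^ m := by
  set x := ((b:ℝ))⁻¹ with hx
  have hb1 : (1:ℝ) < b := by exact_mod_cast Nat.lt_of_lt_of_le (by norm_num) hb
  have hx0 := le_of_lt (xM_pos hb)
  have hx1 := xM_lt_one hb
  have hbx := xM_mul hb
  set u : ℕ → ℝ := fun j => ((c j : ℕ) : ℝ) - ((c' j : ℕ) : ℝ) with hu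
  have hub : ∀ j, |u j| ≤ (b:ℝ) - 1 := by
    intro j
    rw [abs_sub_le_iff]
    constructor
    · have h1 := fin_le_real hb (c j)
      have h2 : (0:ℝ) ≤ ((c' j : ℕ):ℝ) := Nat.cast_nonneg _
      linarith
    · have h1 := fin_le_real hb (c' j)
      have h2 : (0:ℝ) ≤ ((c j : ℕ):ℝ) := Nat.cast_nonneg _
      linarith
  have heq : phiC b c - phiC b c' = ∑' j, u j * x ^ (j+1) := by
    rw [phiC, phiC, ← Summable.tsum_sub (summable_phiC hb c) (summable_phiC hb c')]
    apply tsum_congr; intro j; ring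
  have hvanish : ∀ j < m, u j = 0 := by
    intro j hj
    simp [hu, hm j hj]
  rw [heq, geom_shift hx0 hx1 hub m hvanish]
  rw [abs_mul, abs_pow, abs_of_nonneg hx0]
  have hup : |∑' j, u (j+m) * x ^ (j+1)| ≤ ((b:ℝ)-1) * x / (1-x) :=
    geom_upper hx0 hx1 (fun j => hub (j+m))
  have hkey : ((b:ℝ)-1) * x / (1-x) = 1 := by
    have hbne : (b:ℝ) ≠ 0 := by linarith
    have h1x : 1 - x = ((b:ℝ)-1) * x := by
      rw [sub_mul, one_mul, hx, hbx]
    rw [h1x, div_self (mul_ne_zero (by linarith) (ne_of_gt (xM_pos hb)))]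
  rw [hkey] at hup
  calc x ^ m * |∑' j, u (j+m) * x ^ (j+1)| ≤ x ^ m * 1 :=
        mul_le_mul_of_nonneg_left hup (pow_nonneg hx0 _)
    _ = x ^ m := by ring

end Phi

section Surj

variable {b : ℕ}

lemma floor_bounds (hb : 2 ≤ b) {y : ℝ} (hy : 0 ≤ y) (j : ℕ) :
    (b:ℤ) * ⌊y * (b:ℝ)^j⌋ ≤ ⌊y * (b:ℝ)^(j+1)⌋ ∧
      ⌊y * (b:ℝ)^(j+1)⌋ < (b:ℤ) * ⌊y * (b:ℝ)^j⌋ + (b:ℤ) := by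
  have hb0 : (0:ℝ) < b := by exact_mod_cast Nat.lt_of_lt_of_le (by norm_num) hb
  set t := y * (b:ℝ)^j with htdef
  have ht0 : 0 ≤ t := mul_nonneg hy (pow_nonneg (le_of_lt hb0) _)
  have hbt : y * (b:ℝ)^(j+1) = (b:ℝ) * t := by rw [htdef]; ring
  constructor
  · rw [hbt]
    apply Int.le_floor.mpr
    push_cast
    calc (b:ℝ) * (⌊t⌋:ℝ) ≤ (b:ℝ) * t :=
          mul_le_mul_of_nonneg_left (Int.floor_le t) (le_of_lt hb0)
      _ = (b:ℝ) * t := rfl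
  · rw [hbt]
    apply Int.floor_lt.mpr
    push_cast
    have := Int.lt_floor_add_one t
    nlinarith

/-- Digit sequence of `y` in base `b`. -/
noncomputable def digSeq (hb : 2 ≤ b) {y : ℝ} (hy : y ∈ Set.Ico (0:ℝ) 1) (j : ℕ) : Fin b :=
  ⟨(⌊y * (b:ℝ)^(j+1)⌋ - (b:ℤ) * ⌊y * (b:ℝ)^j⌋).toNat, by
    obtain ⟨h1, h2⟩ := floor_bounds hb hy.1 j
    omega⟩

lemma digSeq_cast (hb : 2 ≤ b) {y : ℝ} (hy : y ∈ Set.Ico (0:ℝ) 1) (j : ℕ) :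
    (((digSeq hb hy j) : ℕ) : ℝ) = (⌊y * (b:ℝ)^(j+1)⌋ : ℝ) - (b:ℝ) * (⌊y * (b:ℝ)^j⌋ : ℝ) := by
  obtain ⟨h1, h2⟩ := floor_bounds hb hy.1 j
  have : ((⌊y * (b:ℝ)^(j+1)⌋ - (b:ℤ) * ⌊y * (b:ℝ)^j⌋).toNat : ℤ)
      = ⌊y * (b:ℝ)^(j+1)⌋ - (b:ℤ) * ⌊y * (b:ℝ)^j⌋ := Int.toNat_of_nonneg (by omega)
  show (((⌊y * (b:ℝ)^(j+1)⌋ - (b:ℤ) * ⌊y * (b:ℝ)^j⌋).toNat : ℕ) : ℝ) = _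
  rw [← Int.cast_natCast, this]
  push_cast
  ring

lemma digSeq_partial (hb : 2 ≤ b) {y : ℝ} (hy : y ∈ Set.Ico (0:ℝ) 1) (m : ℕ) :
    ∑ j ∈ Finset.range m, (((digSeq hb hy j) : ℕ) : ℝ) * ((b:ℝ)⁻¹) ^ (j+1)
      = (⌊y * (b:ℝ)^m⌋ : ℝ) / (b:ℝ)^m := by
  have hb0 : (0:ℝ) < b := by exact_mod_cast Nat.lt_of_lt_of_le (by norm_num) hb
  induction m with
  | zero =>
      simp only [Finset.range_zero, Finset.sum_empty, pow_zero, mul_one, div_one]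
      rw [Int.floor_eq_zero_iff.mpr ⟨hy.1, by simpa using hy.2⟩]
      simp
  | succ m ih =>
      rw [Finset.sum_range_succ, ih, digSeq_cast hb hy m]
      have hbm : ((b:ℝ)^m) ≠ 0 := by positivity
      have hbm1 : ((b:ℝ)^(m+1)) ≠ 0 := by positivity
      generalize (⌊y * (b:ℝ)^(m+1)⌋ : ℝ) = B
      generalize (⌊y * (b:ℝ)^m⌋ : ℝ) = A
      rw [inv_pow]
      field_simp
      ring

lemma phiC_surj (hb : 2 ≤ b) {y : ℝ} (hy : y ∈ Set.Ico (0:ℝ) 1) :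
    phiC b (digSeq hb hy) = y := by
  have hb0 : (0:ℝ) < b := by exact_mod_cast Nat.lt_of_lt_of_le (by norm_num) hb
  have hx0 := le_of_lt (xM_pos hb)
  have hx1 := xM_lt_one hb
  have hs := summable_phiC hb (digSeq hb hy)
  have h1 : Filter.Tendsto
      (fun m => ∑ j ∈ Finset.range m, (((digSeq hb hy j) : ℕ) : ℝ) * ((b:ℝ)⁻¹) ^ (j+1))
      Filter.atTop (nhds (phiC b (digSeq hb hy))) := hs.hasSum.tendsto_sum_nat
  have h2 : Filter.Tendsto
      (fun m => ∑ j ∈ Finset.range m, (((digSeq hb hy j) : ℕ) : ℝ) * ((b:ℝ)⁻¹) ^ (j+1))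
      Filter.atTop (nhds y) := by
    have hlow : ∀ m : ℕ, y - ((b:ℝ)⁻¹)^m ≤ (⌊y * (b:ℝ)^m⌋ : ℝ) / (b:ℝ)^m := by
      intro m
      have hbm : (0:ℝ) < (b:ℝ)^m := by positivity
      rw [sub_le_iff_le_add, div_add' _ _ _ (ne_of_gt hbm), le_div_iff₀ hbm]
      have h := Int.lt_floor_add_one (y * (b:ℝ)^m)
      have hpow : ((b:ℝ)⁻¹)^m * (b:ℝ)^m = 1 := by
        rw [← mul_pow]
        rw [inv_mul_cancel₀ (ne_of_gt hb0)]
        simp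
      nlinarith
    have hhigh : ∀ m : ℕ, (⌊y * (b:ℝ)^m⌋ : ℝ) / (b:ℝ)^m ≤ y := by
      intro m
      have hbm : (0:ℝ) < (b:ℝ)^m := by positivity
      rw [div_le_iff₀ hbm]
      exact Int.floor_le _
    have hgeo : Filter.Tendsto (fun m : ℕ => y - ((b:ℝ)⁻¹)^m) Filter.atTop (nhds y) := by
      have := tendsto_pow_atTop_nhds_zero_of_lt_one hx0 hx1
      simpa using (tendsto_const_nhds (x := y)).sub this
    have hsq := tendsto_of_tendsto_of_tendsto_of_le_of_le hgeo
      (tendsto_const_nhds (x := y)) hlow hhigh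
    refine Filter.Tendsto.congr (fun m => (digSeq_partial hb hy m).symm) hsq
  exact tendsto_nhds_unique h1 h2

end Surj

section Dim

variable {b M : ℕ} {dig : Fin b → ℕ}

lemma lamC_injective (hM : 2 ≤ M) (hdig : ∀ i, 8 * dig i ≤ M)
    (hinj : Function.Injective dig) : Function.Injective (lamC M dig) := by
  intro c c' h
  by_contra hne
  have hex : ∃ j, c j ≠ c' j := by
    by_contra hc
    push_neg at hc
    exact hne (funext hc)
  set m := Nat.find hex with hmdef
  have hm : c m ≠ c' m := Nat.find_spec hex
  have hmin : ∀ j < m, c j = c' j := fun j hj => of_not_not (Nat.find_min hex hj)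
  have hlow := lamC_diff_lower hM hdig hmin (fun heq => hm (hinj heq))
  rw [h, sub_self, abs_zero] at hlow
  have := pow_pos (xM_pos hM) (m+1)
  linarith

theorem cantor_dimH_ge (hM : 2 ≤ M) (hdig : ∀ i, 8 * dig i ≤ M)
    (hinj : Function.Injective dig) (hb : 2 ≤ b) {r : ℝ≥0} (hr0 : 0 < r)
    (hr1 : (r:ℝ) ≤ 1) (hbr : (M:ℝ) ^ (r:ℝ) ≤ b) :
    (r : ℝ≥0∞) ≤ dimH (cantorSet M dig) := by
  have hbpos : (0:ℝ) < b := by exact_mod_cast Nat.lt_of_lt_of_le (by norm_num) hb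
  have hMpos : (0:ℝ) < M := by exact_mod_cast Nat.lt_of_lt_of_le (by norm_num) hM
  haveI : Nonempty (ℕ → Fin b) := ⟨fun _ => ⟨0, by omega⟩⟩
  have hΛ := lamC_injective hM hdig hinj
  set f : ℝ → ℝ := fun t => phiC b (Function.invFun (lamC M dig) t) with hf
  have hfE : ∀ c, f (lamC M dig c) = phiC b c := by
    intro c
    simp only [hf]
    rw [Function.leftInverse_invFun hΛ c]
  -- the Hölder estimate
  have hhold : HolderOnWith (2 * (b:ℝ≥0)) r f (cantorSet M dig) := by
    rintro x ⟨c, rfl⟩ y ⟨c', rfl⟩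
    rcases eq_or_ne c c' with rfl | hcc
    · simp
    have hex : ∃ j, c j ≠ c' j := by
      by_contra hc
      push_neg at hc
      exact hcc (funext hc)
    set m := Nat.find hex with hmdef
    have hm : c m ≠ c' m := Nat.find_spec hex
    have hmin : ∀ j < m, c j = c' j := fun j hj => of_not_not (Nat.find_min hex hj)
    set d := |lamC M dig c - lamC M dig c'| with hd
    have hdlow : 1/2 * ((M:ℝ)⁻¹) ^ (m+1) ≤ d :=
      lamC_diff_lower hM hdig hmin (fun heq => hm (hinj heq))
    have hd0 : 0 ≤ d := abs_nonneg _
    have hphi : |phiC b c - phiC b c'| ≤ ((b:ℝ)⁻¹) ^ m := phiC_diff_upper hb hmin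
    -- key real inequality
    have hkey : |phiC b c - phiC b c'| ≤ 2 * (b:ℝ) * d ^ (r:ℝ) := by
      have hstep : (b:ℝ)⁻¹ ≤ ((M:ℝ)⁻¹) ^ (r:ℝ) := by
        rw [Real.inv_rpow (le_of_lt hMpos)]
        exact inv_anti₀ (Real.rpow_pos_of_pos hMpos _) hbr
      have hpow : ((b:ℝ)⁻¹) ^ (m+1) ≤ (((M:ℝ)⁻¹) ^ (r:ℝ)) ^ (m+1) :=
        pow_le_pow_left₀ (inv_nonneg.mpr (le_of_lt hbpos)) hstep (m+1)
      have hswap : (((M:ℝ)⁻¹) ^ (r:ℝ)) ^ (m+1) = (((M:ℝ)⁻¹) ^ (m+1)) ^ (r:ℝ) := by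
        rw [← Real.rpow_natCast (((M:ℝ)⁻¹) ^ (r:ℝ)) (m+1), ← Real.rpow_mul
          (inv_nonneg.mpr (le_of_lt hMpos)), mul_comm, Real.rpow_mul
          (inv_nonneg.mpr (le_of_lt hMpos)), Real.rpow_natCast]
      have hxm : (((M:ℝ)⁻¹) ^ (m+1)) ^ (r:ℝ) ≤ (2*d) ^ (r:ℝ) := by
        apply Real.rpow_le_rpow (pow_nonneg (inv_nonneg.mpr (le_of_lt hMpos)) _) _ r.coe_nonneg
        linarith
      have h2d : (2*d) ^ (r:ℝ) ≤ 2 * d ^ (r:ℝ) := by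
        rw [Real.mul_rpow (by norm_num) hd0]
        have h2r : (2:ℝ) ^ (r:ℝ) ≤ 2 := by
          calc (2:ℝ) ^ (r:ℝ) ≤ (2:ℝ) ^ (1:ℝ) :=
                Real.rpow_le_rpow_of_exponent_le one_le_two hr1
            _ = 2 := Real.rpow_one 2
        exact mul_le_mul_of_nonneg_right h2r (Real.rpow_nonneg hd0 _)
      calc |phiC b c - phiC b c'| ≤ ((b:ℝ)⁻¹) ^ m := hphi
        _ = (b:ℝ) * ((b:ℝ)⁻¹) ^ (m+1) := by
            rw [pow_succ]
            field_simp
        _ ≤ (b:ℝ) * (((M:ℝ)⁻¹) ^ (m+1)) ^ (r:ℝ) := by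
            apply mul_le_mul_of_nonneg_left _ (le_of_lt hbpos)
            rw [← hswap]; exact hpow
        _ ≤ (b:ℝ) * (2*d) ^ (r:ℝ) :=
            mul_le_mul_of_nonneg_left hxm (le_of_lt hbpos)
        _ ≤ (b:ℝ) * (2 * d ^ (r:ℝ)) :=
            mul_le_mul_of_nonneg_left h2d (le_of_lt hbpos)
        _ = 2 * (b:ℝ) * d ^ (r:ℝ) := by ring
    -- convert to edist
    rw [hfE, hfE, edist_dist, edist_dist, Real.dist_eq, Real.dist_eq]
    have e1 : (ENNReal.ofReal |lamC M dig c - lamC M dig c'|) ^ (r:ℝ)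
        = ENNReal.ofReal (d ^ (r:ℝ)) :=
      ENNReal.ofReal_rpow_of_nonneg hd0 r.coe_nonneg
    rw [e1]
    have e2 : ((2 * (b:ℝ≥0) : ℝ≥0) : ℝ≥0∞) = ENNReal.ofReal (2 * (b:ℝ)) := by
      rw [← ENNReal.ofReal_coe_nnreal]
      congr 1
    rw [e2, ← ENNReal.ofReal_mul (by positivity)]
    exact ENNReal.ofReal_le_ofReal hkey
  -- image contains [0,1)
  have himg : Set.Ico (0:ℝ) 1 ⊆ f '' (cantorSet M dig) := by
    intro y hy
    exact ⟨lamC M dig (digSeq hb hy), ⟨digSeq hb hy, rfl⟩, by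
      rw [hfE]; exact phiC_surj hb hy⟩
  have h1 : dimH (Set.Ico (0:ℝ) 1) = 1 := by
    rw [Real.dimH_of_nonempty_interior (E := ℝ) (s := Set.Ico (0:ℝ) 1)]
    · simp
    · rw [interior_Ico]
      exact ⟨1/2, by norm_num, by norm_num⟩
  have h2 : (1:ℝ≥0∞) ≤ dimH (f '' (cantorSet M dig)) := by
    rw [← h1]
    exact dimH_mono himg
  have h3 := hhold.dimH_image_le hr0
  have h4 : (1:ℝ≥0∞) ≤ dimH (cantorSet M dig) / r := le_trans h2 h3
  rw [ENNReal.le_div_iff_mul_le (Or.inl (by exact_mod_cast hr0.ne'))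
    (Or.inl ENNReal.coe_ne_top), one_mul] at h4
  exact h4

end Dim

section BaseQ

lemma sumQ_step {nn : ℕ} (Q : ℕ) (x : Fin (nn+1) → ℕ) :
    ∑ i, x i * Q^(i:ℕ) = x 0 + Q * ∑ i : Fin nn, x i.succ * Q^(i:ℕ) := by
  rw [Fin.sum_univ_succ]
  congr 1
  · simp
  · rw [Finset.mul_sum]
    apply Finset.sum_congr rfl
    intro i _
    have : ((i.succ : Fin (nn+1)) : ℕ) = (i:ℕ) + 1 := rfl
    rw [this, pow_succ]
    ring

lemma sumQ_bound (d : ℕ) : ∀ (nn : ℕ) (x : Fin nn → ℕ), (∀ i, x i ≤ d) →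
    2 * (∑ i, x i * (2*d+1)^(i:ℕ)) + 1 ≤ (2*d+1)^nn := by
  intro nn
  induction nn with
  | zero => intro x _; simp
  | succ m ih =>
      intro x hx
      rw [sumQ_step]
      set Q := 2*d+1 with hQdef
      set S := ∑ i : Fin m, x i.succ * Q^(i:ℕ) with hSdef
      have h1 : 2 * S + 1 ≤ Q^m := by
        have := ih (fun i => x i.succ) (fun i => hx i.succ)
        simpa [hSdef] using this
      have hpow : 1 ≤ Q^m := Nat.one_le_pow _ _ (by omega)
      have h3 : 2*S ≤ Q^m - 1 := by omega
      have h4 : 2 * x 0 + 1 ≤ Q := by have := hx 0; omega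
      calc 2 * (x 0 + Q * S) + 1 = (2 * x 0 + 1) + Q*(2*S) := by ring
        _ ≤ Q + Q*(Q^m - 1) := Nat.add_le_add h4 (Nat.mul_le_mul_left _ h3)
        _ = Q^(m+1) := by
            obtain ⟨t, ht⟩ := Nat.exists_eq_add_of_le hpow
            rw [ht, pow_succ, ht]
            have e : 1 + t - 1 = t := by omega
            rw [e]
            ring

lemma sumQ_inj (Q : ℕ) (hQ : 0 < Q) : ∀ (nn : ℕ) (u v : Fin nn → ℕ),
    (∀ i, u i < Q) → (∀ i, v i < Q) →
    (∑ i, u i * Q^(i:ℕ)) = (∑ i, v i * Q^(i:ℕ)) → u = v := by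
  intro nn
  induction nn with
  | zero => intro u v _ _ _; funext i; exact i.elim0
  | succ m ih =>
      intro u v hu hv heq
      rw [sumQ_step, sumQ_step] at heq
      have h0 : u 0 = v 0 := by
        have e1 : (u 0 + Q * ∑ i : Fin m, u i.succ * Q^(i:ℕ)) % Q = u 0 % Q :=
          Nat.add_mul_mod_self_left _ _ _
        have e2 : (v 0 + Q * ∑ i : Fin m, v i.succ * Q^(i:ℕ)) % Q = v 0 % Q :=
          Nat.add_mul_mod_self_left _ _ _
        rw [heq] at e1
        rw [e2] at e1
        rw [Nat.mod_eq_of_lt (hu 0), Nat.mod_eq_of_lt (hv 0)] at e1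
        omega
      have hsum : (∑ i : Fin m, u i.succ * Q^(i:ℕ)) = ∑ i : Fin m, v i.succ * Q^(i:ℕ) := by
        rw [h0] at heq
        have := Nat.add_left_cancel heq
        exact Nat.eq_of_mul_eq_mul_left hQ this
      have htail := ih (fun i => u i.succ) (fun i => v i.succ)
        (fun i => hu i.succ) (fun i => hv i.succ) hsum
      funext i
      refine Fin.cases h0 (fun j => ?_) i
      exact congrFun htail j

end BaseQ

section Behrend

/-- Points on a sphere with coordinates in `Fin (d+1)`. -/
def sphere (n d R : ℕ) : Finset (Fin n → Fin (d+1)) :=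
  Finset.univ.filter (fun x => ∑ i, ((x i : ℕ))^2 = R)

lemma exists_big_sphere (n d b₀ : ℕ) (hcount : (n*d^2+1) * b₀ ≤ (d+1)^n) :
    ∃ R, b₀ ≤ (sphere n d R).card := by
  classical
  have hmaps : ∀ x : Fin n → Fin (d+1), x ∈ (Finset.univ : Finset (Fin n → Fin (d+1))) →
      (∑ i, ((x i : ℕ))^2) ∈ Finset.range (n*d^2+1) := by
    intro x _
    rw [Finset.mem_range, Nat.lt_succ_iff]
    calc ∑ i, ((x i : ℕ))^2 ≤ ∑ _i : Fin n, d^2 := by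
          apply Finset.sum_le_sum
          intro i _
          exact Nat.pow_le_pow_left (Nat.lt_succ_iff.mp (x i).2) 2
      _ = n * d^2 := by simp [Finset.sum_const, Finset.card_univ]
  have hcard : (Finset.univ : Finset (Fin n → Fin (d+1))).card = (d+1)^n := by
    rw [Finset.card_univ]
    simp
  obtain ⟨R, _, hR⟩ := Finset.exists_le_card_fiber_of_mul_le_card_of_maps_to hmaps
    ⟨0, by simp⟩ (by rw [Finset.card_range, hcard]; exact hcount)
  exact ⟨R, hR⟩

theorem exists_good_digits (n : ℕ) (hn : 4 ≤ n) :
    ∃ (M : ℕ) (dig : Fin (2^(n^2-3*n)) → ℕ),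
      2 ≤ M ∧ (∀ i, 8 * dig i ≤ M) ∧ Function.Injective dig ∧
      (∀ i j l, dig i + dig j = 2 * dig l → i = j) ∧
      M ≤ 2^(n^2+n+2) := by
  classical
  set d := 2^n - 1 with hddef
  set b₀ := 2^(n^2-3*n) with hbdef
  have h2n : 1 ≤ 2^n := Nat.one_le_pow _ _ (by norm_num)
  have hd1 : d + 1 = 2^n := by omega
  -- counting
  have hcount : (n*d^2+1) * b₀ ≤ (d+1)^n := by
    have hsq : d^2 < (2^n)^2 := by
      apply Nat.pow_lt_pow_left _ (by norm_num)
      omega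
    have hd2 : d^2 + 1 ≤ 2^(2*n) := by
      rw [← pow_mul, mul_comm n 2] at hsq
      omega
    have hn2 : n ≤ 2^n := Nat.le_of_lt (Nat.lt_two_pow_self (n := n))
    have h2 : 1 ≤ 2^(2*n) := Nat.one_le_pow _ _ (by norm_num)
    have hn1 : 1 ≤ n := by omega
    have h1 : n*d^2+1 ≤ 2^(3*n) := by
      calc n*d^2+1 ≤ n*(2^(2*n) - 1)+1 := by
            have h3 : d^2 ≤ 2^(2*n) - 1 := by omega
            exact Nat.add_le_add_right (Nat.mul_le_mul_left _ h3) 1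
        _ ≤ n * 2^(2*n) := by
            obtain ⟨t, ht⟩ := Nat.exists_eq_add_of_le h2
            rw [ht]
            have e : 1 + t - 1 = t := by omega
            rw [e, mul_add, mul_one]
            linarith
        _ ≤ 2^n * 2^(2*n) := Nat.mul_le_mul_right _ hn2
        _ = 2^(3*n) := by rw [← pow_add]; ring_nf
    calc (n*d^2+1) * b₀ ≤ 2^(3*n) * 2^(n^2-3*n) := Nat.mul_le_mul_right _ h1
      _ = 2^(3*n + (n^2 - 3*n)) := by rw [pow_add]
      _ = 2^(n^2) := by
          congr 1
          have h3 : 3*n ≤ n^2 := by nlinarith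
          omega
      _ = (d+1)^n := by rw [hd1, ← pow_mul]; congr 1; ring
  obtain ⟨R, hR⟩ := exists_big_sphere n d b₀ hcount
  obtain ⟨F, hFsub, hFcard⟩ := Finset.exists_subset_card_eq hR
  -- enumeration of F
  have hcardF : Fintype.card ↥F = b₀ := by rw [Fintype.card_coe]; exact hFcard
  set g : Fin b₀ ≃ ↥F := (Fintype.equivFinOfCardEq hcardF).symm with hgdef
  have hvd : ∀ (m : Fin b₀) (jj : Fin n), (((g m : Fin n → Fin (d+1))) jj : ℕ) ≤ d :=
    fun m jj => Nat.lt_succ_iff.mp ((g m : Fin n → Fin (d+1)) jj).2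
  have hvQ : ∀ (m : Fin b₀) (jj : Fin n), (((g m : Fin n → Fin (d+1))) jj : ℕ) < 2*d+1 := by
    intro m jj
    have := hvd m jj
    omega
  have hsqR : ∀ (m : Fin b₀), ∑ jj, ((((g m : Fin n → Fin (d+1))) jj : ℕ))^2 = R := by
    intro m
    have hmem : (g m : Fin n → Fin (d+1)) ∈ sphere n d R := hFsub (g m).2
    rw [sphere, Finset.mem_filter] at hmem
    exact hmem.2
  refine ⟨4 * (2*d+1)^n,
    fun i => ∑ jj, ((((g i : Fin n → Fin (d+1))) jj : ℕ)) * (2*d+1)^(jj:ℕ),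
    ?_, ?_, ?_, ?_, ?_⟩
  · have : 1 ≤ (2*d+1)^n := Nat.one_le_pow _ _ (by omega)
    omega
  · intro i
    have hb := sumQ_bound d n (fun jj => ((((g i : Fin n → Fin (d+1))) jj : ℕ)))
      (fun jj => hvd i jj)
    simp only at hb ⊢
    omega
  · -- injectivity
    intro i j hij
    simp only at hij
    have hX := sumQ_inj (2*d+1) (by omega) n
      (fun jj => (((g i : Fin n → Fin (d+1))) jj : ℕ))
      (fun jj => (((g j : Fin n → Fin (d+1))) jj : ℕ))
      (fun jj => hvQ i jj) (fun jj => hvQ j jj) hij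
    apply g.injective
    apply Subtype.ext
    funext jj
    exact Fin.ext (congrFun hX jj)
  · -- AP-freeness
    intro i j l hsum
    simp only at hsum
    set X : Fin n → ℕ := fun jj => (((g i : Fin n → Fin (d+1))) jj : ℕ) with hXdef
    set Y : Fin n → ℕ := fun jj => (((g j : Fin n → Fin (d+1))) jj : ℕ) with hYdef
    set Z : Fin n → ℕ := fun jj => (((g l : Fin n → Fin (d+1))) jj : ℕ) with hZdef
    have hcoord : ∀ jj, X jj + Y jj = 2 * Z jj := by
      have hu : ∑ jj, (X jj + Y jj) * (2*d+1)^(jj:ℕ)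
          = ∑ jj, (2 * Z jj) * (2*d+1)^(jj:ℕ) := by
        have e1 : ∑ jj, (X jj + Y jj) * (2*d+1)^(jj:ℕ)
            = (∑ jj, X jj * (2*d+1)^(jj:ℕ)) + ∑ jj, Y jj * (2*d+1)^(jj:ℕ) := by
          rw [← Finset.sum_add_distrib]
          apply Finset.sum_congr rfl
          intro jj _
          ring
        have e2 : ∑ jj, (2 * Z jj) * (2*d+1)^(jj:ℕ)
            = 2 * ∑ jj, Z jj * (2*d+1)^(jj:ℕ) := by
          rw [Finset.mul_sum]
          apply Finset.sum_congr rfl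
          intro jj _
          ring
        rw [e1, e2]
        exact hsum
      have hres := sumQ_inj (2*d+1) (by omega) n (fun jj => X jj + Y jj)
        (fun jj => 2 * Z jj)
        (fun jj => by have := hvd i jj; have := hvd j jj; simp only [hXdef, hYdef]; omega)
        (fun jj => by have := hvd l jj; simp only [hZdef]; omega) hu
      exact fun jj => congrFun hres jj
    have hXR : ∑ jj, (X jj)^2 = R := hsqR i
    have hYR : ∑ jj, (Y jj)^2 = R := hsqR j
    have hZR : ∑ jj, (Z jj)^2 = R := hsqR l
    -- convexity argument over ℤ
    have e2 : ∀ jj : Fin n, ((X jj:ℤ) + (Y jj:ℤ)) = 2*(Z jj:ℤ) := by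
      intro jj
      exact_mod_cast congrArg (Nat.cast : ℕ → ℤ) (hcoord jj)
    have e3 : ∀ jj : Fin n, ((X jj : ℤ) - (Y jj : ℤ))^2
        = 2*(X jj:ℤ)^2 + 2*(Y jj:ℤ)^2 - 4*(Z jj:ℤ)^2 := by
      intro jj
      linear_combination (-((X jj:ℤ) + (Y jj:ℤ) + 2*(Z jj:ℤ))) * (e2 jj)
    have hzero : ∑ jj, ((X jj : ℤ) - (Y jj : ℤ))^2 = 0 := by
      have cX : (∑ jj, (X jj:ℤ)^2) = (R:ℤ) := by exact_mod_cast congrArg (Nat.cast : ℕ → ℤ) hXR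
      have cY : (∑ jj, (Y jj:ℤ)^2) = (R:ℤ) := by exact_mod_cast congrArg (Nat.cast : ℕ → ℤ) hYR
      have cZ : (∑ jj, (Z jj:ℤ)^2) = (R:ℤ) := by exact_mod_cast congrArg (Nat.cast : ℕ → ℤ) hZR
      calc ∑ jj, ((X jj : ℤ) - (Y jj : ℤ))^2
          = ∑ jj, (2*(X jj:ℤ)^2 + 2*(Y jj:ℤ)^2 - 4*(Z jj:ℤ)^2) :=
            Finset.sum_congr rfl (fun jj _ => e3 jj)
        _ = (∑ jj, (2*(X jj:ℤ)^2 + 2*(Y jj:ℤ)^2)) - ∑ jj, 4*(Z jj:ℤ)^2 :=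
            Finset.sum_sub_distrib _ _
        _ = 2*(∑ jj, (X jj:ℤ)^2) + 2*(∑ jj, (Y jj:ℤ)^2) - 4*(∑ jj, (Z jj:ℤ)^2) := by
            rw [Finset.sum_add_distrib, ← Finset.mul_sum, ← Finset.mul_sum, ← Finset.mul_sum]
        _ = 0 := by rw [cX, cY, cZ]; ring
    have hXY : ∀ jj, X jj = Y jj := by
      intro jj
      have hnn : ∀ m ∈ (Finset.univ : Finset (Fin n)), 0 ≤ ((X m : ℤ) - (Y m : ℤ))^2 :=
        fun m _ => sq_nonneg _
      have hterm := (Finset.sum_eq_zero_iff_of_nonneg hnn).mp hzero jj (Finset.mem_univ _)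
      have := sub_eq_zero.mp (pow_eq_zero_iff (n := 2) (by norm_num) |>.mp hterm)
      exact_mod_cast this
    apply g.injective
    apply Subtype.ext
    funext jj
    exact Fin.ext (hXY jj)
  · -- size of M
    have hp : 2^(n+1) = 2*2^n := by rw [pow_succ]; ring
    have hQle : 2*d+1 ≤ 2^(n+1) := by omega
    calc 4 * (2*d+1)^n ≤ 4 * (2^(n+1))^n :=
          Nat.mul_le_mul_left _ (Nat.pow_le_pow_left hQle n)
      _ = 2^(n^2+n+2) := by
          rw [show (4:ℕ) = 2^2 from rfl, ← pow_mul, ← pow_add]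
          congr 1
          ring

end Behrend

end APAvoid

open APAvoid

theorem stmt5 (k : ℕ) (hk : 3 ≤ k) :
    ∀ δ : ℝ, 0 < δ → ∃ ε₀ : ℝ, 0 < ε₀ ∧ ∀ ε : ℝ, 0 < ε → ε < ε₀ →
      ENNReal.ofReal (1 - δ) < dAvoid k ε := by
  intro δ hδ
  obtain ⟨n₀, hn₀⟩ := exists_nat_gt (5/δ)
  set n := n₀ + 4 with hndef
  have hn4 : 4 ≤ n := by omega
  have hnR : (4:ℝ) ≤ n := by exact_mod_cast hn4
  have hnpos : (0:ℝ) < n := by linarith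
  have hnδ : 5 < (n:ℝ) * δ := by
    have h1 : (5:ℝ)/δ < n₀ := hn₀
    have h2 : (n₀:ℝ) ≤ n := by exact_mod_cast Nat.le_add_right n₀ 4
    have h3 : (5:ℝ)/δ < n := lt_of_lt_of_le h1 h2
    rw [div_lt_iff₀ hδ] at h3
    linarith [mul_comm (n:ℝ) δ]
  have h3n : 3*n ≤ n^2 := by
    have : 4*n ≤ n*n := Nat.mul_le_mul_right n hn4
    have hsq : n^2 = n*n := sq n
    omega
  -- the exponent
  set N₁ := n^2+n+2 with hN1def
  set N₂ := n^2-3*n with hN2def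
  obtain ⟨M, dig, hM2, hdig8, hinj, hAP, hMle⟩ := exists_good_digits n hn4
  have hb : 2 ≤ 2^N₂ := by
    have h1 : 1 ≤ N₂ := by
      rw [hN2def]
      have : 4*n ≤ n*n := Nat.mul_le_mul_right n hn4
      have hsq : n^2 = n*n := sq n
      omega
    calc 2 = 2^1 := rfl
      _ ≤ 2^N₂ := Nat.pow_le_pow_right (by norm_num) h1
  have hN₂cast : ((N₂:ℕ):ℝ) = (n:ℝ)^2 - 3*n := by
    rw [hN2def, Nat.cast_sub h3n]
    push_cast
    ring
  have hN₁cast : ((N₁:ℕ):ℝ) = (n:ℝ)^2 + n + 2 := by rw [hN1def]; push_cast; ring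
  set ρ : ℝ := (N₂:ℝ) / (N₁:ℝ) with hρdef
  have hN₁pos : (0:ℝ) < N₁ := by rw [hN₁cast]; nlinarith
  have hN₂pos : (0:ℝ) < N₂ := by rw [hN₂cast]; nlinarith
  have hρpos : 0 < ρ := div_pos hN₂pos hN₁pos
  have hρ1 : ρ ≤ 1 := by
    rw [hρdef, div_le_one hN₁pos, hN₂cast, hN₁cast]
    nlinarith
  set r : ℝ≥0 := Real.toNNReal ρ with hrdef
  have hr0 : 0 < r := Real.toNNReal_pos.mpr hρpos
  have hrcoe : (r:ℝ) = ρ := Real.coe_toNNReal _ (le_of_lt hρpos)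
  have hr1 : (r:ℝ) ≤ 1 := by rw [hrcoe]; exact hρ1
  -- M^r ≤ b
  have hbr : (M:ℝ) ^ (r:ℝ) ≤ (2^N₂ : ℕ) := by
    have hM0 : (0:ℝ) ≤ M := Nat.cast_nonneg _
    have hMle' : (M:ℝ) ≤ (2:ℝ)^(N₁:ℕ) := by
      calc (M:ℝ) ≤ ((2^N₁ : ℕ):ℝ) := by exact_mod_cast hMle
        _ = (2:ℝ)^(N₁:ℕ) := by push_cast; ring
    calc (M:ℝ) ^ (r:ℝ) ≤ ((2:ℝ)^(N₁:ℕ)) ^ (r:ℝ) :=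
          Real.rpow_le_rpow hM0 hMle' r.coe_nonneg
      _ = (2:ℝ) ^ ((N₁:ℝ) * (r:ℝ)) := by
          rw [← Real.rpow_natCast (2:ℝ) N₁, ← Real.rpow_mul (by norm_num)]
      _ = (2:ℝ) ^ ((N₂:ℝ)) := by
          congr 1
          rw [hrcoe, hρdef]
          field_simp
      _ = ((2^N₂ : ℕ):ℝ) := by
          rw [Real.rpow_natCast]
          push_cast
          ring
  -- the set
  have hbound := cantorSet_bounded hM2 hdig8
  have hdim : (r : ℝ≥0∞) ≤ dimH (cantorSet M dig) :=
    cantor_dimH_ge hM2 hdig8 hinj hb hr0 hr1 hbr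
  have hMposR : (0:ℝ) < M := by exact_mod_cast Nat.lt_of_lt_of_le (by norm_num) hM2
  refine ⟨1/(2*(M:ℝ)), by positivity, ?_⟩
  intro ε hε0 hεlt
  have havoid : Avoids k ε (cantorSet M dig) :=
    cantorSet_avoids hM2 hdig8 hinj hAP hk (le_of_lt hεlt)
  have hle : dimH (cantorSet M dig) ≤ dAvoid k ε :=
    le_iSup_of_le (cantorSet M dig) (le_iSup_of_le ⟨hbound, havoid⟩ le_rfl)
  -- numeric comparison
  have hlt : 1 - δ < ρ := by
    rw [hρdef, lt_div_iff₀ hN₁pos, hN₂cast, hN₁cast]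
    nlinarith [mul_lt_mul_of_pos_right hnδ hnpos, hδ.le, hnR]
  calc ENNReal.ofReal (1 - δ) < ENNReal.ofReal (r:ℝ) := by
        rw [ENNReal.ofReal_lt_ofReal_iff (by rw [hrcoe]; exact hρpos)]
        rw [hrcoe]
        exact hlt
    _ = (r : ℝ≥0∞) := ENNReal.ofReal_coe_nnreal
    _ ≤ dimH (cantorSet M dig) := hdim
    _ ≤ dAvoid k ε := hle
end

section
/- For every integer k ≥ 3 and every ε ∈ (0,1), the supremum defining d(k,ε) is attained: there exists a compact set E ⊆ [0,1] that ε-avoids k-APs and satisfies dim_H(E) = d(k,ε). -/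
open Set MeasureTheory
open scoped ENNReal

open Filter Bornology Topology

theorem avoids_closure {k ε E} (h : Avoids k ε E) : Avoids k ε (closure E) := by
  intro a lam hlam
  obtain ⟨i, hik, hi⟩ := h a lam hlam
  refine ⟨i, hik, fun x hx => ?_⟩
  have hcl : IsClosed {x : ℝ | ε * lam ≤ |x - (a + i * lam)|} := by
    have : Continuous fun x : ℝ => |x - (a + i * lam)| := by continuity
    exact isClosed_le continuous_const this
  exact hcl.closure_subset_iff.mpr hi hx

theorem avoids_affine {k ε E} (h : Avoids k ε E) {c d : ℝ} (hc : 0 < c) :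
    Avoids k ε ((fun x => c * x + d) '' E) := by
  intro a lam hlam
  obtain ⟨i, hik, hi⟩ := h ((a - d) / c) (lam / c) (by positivity)
  refine ⟨i, hik, fun y hy => ?_⟩
  obtain ⟨x, hx, rfl⟩ := hy
  have := hi x hx
  have h2 : c * |x - ((a - d) / c + i * (lam / c))| = |c * x + d - (a + i * lam)| := by
    have h3 : c * (x - ((a - d) / c + i * (lam / c))) = c * x + d - (a + i * lam) := by
      field_simp
      ring
    rw [← h3, abs_mul, abs_of_pos hc]
  calc ε * lam = c * (ε * (lam / c)) := by field_simp
    _ ≤ c * |x - ((a - d) / c + i * (lam / c))| := by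
        apply mul_le_mul_of_nonneg_left this hc.le
    _ = _ := h2

theorem dimH_affine (E : Set ℝ) {c d : ℝ} (hc : 0 < c) :
    dimH ((fun x => c * x + d) '' E) = dimH E := by
  have hlip : LipschitzWith ⟨c, hc.le⟩ (fun x : ℝ => c * x + d) := by
    apply LipschitzWith.of_dist_le_mul
    intro x y
    simp only [Real.dist_eq]
    rw [show c * x + d - (c * y + d) = c * (x - y) by ring, abs_mul, abs_of_pos hc]
    rfl
  have hanti : AntilipschitzWith ⟨c, hc.le⟩⁻¹ (fun x : ℝ => c * x + d) := by
    apply AntilipschitzWith.of_le_mul_dist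
    intro x y
    simp only [Real.dist_eq]
    rw [show c * x + d - (c * y + d) = c * (x - y) by ring, abs_mul, abs_of_pos hc]
    change |x - y| ≤ (c)⁻¹ * (c * |x - y|)
    have : (0:ℝ) < c := hc
    field_simp
    exact le_rfl
  exact le_antisymm (hlip.dimH_image_le E) (hanti.le_dimH_image E)

theorem count_in_interval (a lam : ℝ) (hlam : 0 < lam) (k m : ℕ) (hm : 1 ≤ m)
    (u v : ℝ) (hL : v - u ≤ m * lam) :
    ((Finset.range k).filter (fun i : ℕ => a + (i:ℝ) * lam ∈ Set.Ioo u v)).card ≤ m := by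
  set T := (Finset.range k).filter (fun i : ℕ => a + (i:ℝ) * lam ∈ Set.Ioo u v) with hT
  rcases T.eq_empty_or_nonempty with h | h
  · simp [h]
  · have hsub : T ⊆ Finset.Icc (T.min' h) (T.min' h + (m - 1)) := by
      intro j hj
      have hj0 : T.min' h ≤ j := T.min'_le j hj
      have hjm : a + (j : ℝ) * lam < v := by
        have := (Finset.mem_filter.mp hj).2
        exact this.2
      have hi0 : u < a + (T.min' h : ℝ) * lam := by
        have := (Finset.mem_filter.mp (T.min'_mem h)).2
        exact this.1
      have hcast : ((j : ℝ) - (T.min' h : ℝ)) * lam < (m : ℝ) * lam := by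
        nlinarith
      have : (j : ℝ) - (T.min' h : ℝ) < (m : ℝ) := by
        exact lt_of_mul_lt_mul_right (by nlinarith) hlam.le
      have hjlt : j < T.min' h + m := by
        have : (j : ℝ) < (T.min' h : ℝ) + m := by linarith
        exact_mod_cast this
      simp only [Finset.mem_Icc]
      omega
    calc T.card ≤ (Finset.Icc (T.min' h) (T.min' h + (m - 1))).card := Finset.card_le_card hsub
      _ = (m - 1) + 1 := by rw [Nat.card_Icc]; omega
      _ = m := by omega

theorem exists_free (k m : ℕ) (hm : 1 ≤ m) (h2m : 2 * m + 1 ≤ k) (a lam : ℝ)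
    (hlam : 0 < lam) (u1 v1 u2 v2 : ℝ) (h1 : v1 - u1 ≤ m * lam) (h2 : v2 - u2 ≤ m * lam) :
    ∃ i, i < k ∧ a + (i:ℝ) * lam ∉ Set.Ioo u1 v1 ∧ a + (i:ℝ) * lam ∉ Set.Ioo u2 v2 := by
  set S := (Finset.range k).filter
    (fun i : ℕ => a + (i:ℝ) * lam ∈ Set.Ioo u1 v1 ∨ a + i * lam ∈ Set.Ioo u2 v2) with hS
  have hcard : S.card ≤ 2 * m := by
    have : S ⊆ ((Finset.range k).filter (fun i : ℕ => a + (i:ℝ) * lam ∈ Set.Ioo u1 v1)) ∪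
        ((Finset.range k).filter (fun i : ℕ => a + (i:ℝ) * lam ∈ Set.Ioo u2 v2)) := by
      intro i hi
      rcases Finset.mem_filter.mp hi with ⟨hik, h | h⟩
      · exact Finset.mem_union_left _ (Finset.mem_filter.mpr ⟨hik, h⟩)
      · exact Finset.mem_union_right _ (Finset.mem_filter.mpr ⟨hik, h⟩)
    calc S.card ≤ _ := Finset.card_le_card this
      _ ≤ _ + _ := Finset.card_union_le _ _
      _ ≤ m + m := add_le_add (count_in_interval a lam hlam k m hm u1 v1 h1)
            (count_in_interval a lam hlam k m hm u2 v2 h2)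
      _ = 2 * m := by ring
  have : ¬ (Finset.range k ⊆ S) := by
    intro hsub
    have := Finset.card_le_card hsub
    rw [Finset.card_range] at this
    omega
  obtain ⟨i, hik, hiS⟩ := Finset.not_subset.mp this
  refine ⟨i, Finset.mem_range.mp hik, ?_, ?_⟩ <;>
  · intro hmem
    exact hiS (Finset.mem_filter.mpr ⟨hik, by tauto⟩)

theorem accpt_pair {F : Set ℝ} {x : ℝ} (h : AccPt x (𝓟 F)) {δ : ℝ} (hδ : 0 < δ) :
    ∃ e1 e2, e1 ∈ F ∧ e2 ∈ F ∧ x - δ < e1 ∧ e1 < e2 ∧ e2 < x + δ := by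
  rw [accPt_iff_nhds] at h
  obtain ⟨y1, ⟨hy1b, hy1F⟩, hy1x⟩ := h (Metric.ball x δ) (Metric.ball_mem_nhds x hδ)
  have hd1 : 0 < |y1 - x| := by
    rw [abs_pos, sub_ne_zero]; exact hy1x
  obtain ⟨y2, ⟨hy2b, hy2F⟩, hy2x⟩ := h (Metric.ball x (min δ (|y1 - x|)))
    (Metric.ball_mem_nhds x (lt_min hδ hd1))
  have hb1 : |y1 - x| < δ := by
    rw [Metric.mem_ball, Real.dist_eq] at hy1b; exact hy1b
  have hb2 : |y2 - x| < min δ (|y1 - x|) := by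
    rw [Metric.mem_ball, Real.dist_eq] at hy2b; exact hy2b
  have hne : y1 ≠ y2 := by
    intro hcontra
    rw [hcontra] at hb2
    exact absurd (lt_min_iff.mp hb2).2 (lt_irrefl _)
  have h1 := abs_lt.mp hb1
  have h2 := abs_lt.mp (lt_of_lt_of_le hb2 (min_le_left _ _))
  rcases lt_or_gt_of_ne hne with hlt | hgt
  · exact ⟨y1, y2, hy1F, hy2F, by linarith [h1.1], hlt, by linarith [h2.2]⟩
  · exact ⟨y2, y1, hy2F, hy1F, by linarith [h2.1], hgt, by linarith [h1.2]⟩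

theorem accPts_subsingleton {k : ℕ} {ε : ℝ} {F : Set ℝ} (hk : 3 ≤ k) (hk4 : k ≤ 4)
    (hε2 : 1/2 ≤ ε) (hA : Avoids k ε F) : {x : ℝ | AccPt x (𝓟 F)}.Subsingleton := by
  have key : ∀ x y : ℝ, AccPt x (𝓟 F) → AccPt y (𝓟 F) → x < y → False := by
    intro x y hx hy hxy
    have hδ : 0 < (y - x) / 8 := by linarith
    obtain ⟨e1, e2, he1, he2, hl1, hl2, hl3⟩ := accpt_pair hx hδ
    obtain ⟨e3, e4, he3, he4, hm1, hm2, hm3⟩ := accpt_pair hy hδ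
    set δ := (y - x) / 8 with hδdef
    interval_cases k
    · -- k = 3
      have hlam : 0 < 2 * (e3 - (e1 + e2) / 2) / 3 := by linarith
      set lam := 2 * (e3 - (e1 + e2) / 2) / 3 with hlam_def
      have hεlam : lam / 2 ≤ ε * lam := by
        have := mul_le_mul_of_nonneg_right hε2 hlam.le
        linarith
      obtain ⟨i, hik, hi⟩ := hA ((e1 + e2) / 2 - lam/2) lam hlam
      have hgBlam : e2 - e1 < lam := by rw [hlam_def]; linarith
      interval_cases i
      · have h1 := hi e1 he1
        have habs : |e1 - ((e1 + e2) / 2 - lam/2 + (0:ℕ) * lam)| < ε * lam := by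
          push_cast
          rw [abs_lt]
          constructor <;> linarith
        linarith
      · have h1 := hi e2 he2
        have habs : |e2 - ((e1 + e2) / 2 - lam/2 + (1:ℕ) * lam)| < ε * lam := by
          push_cast
          rw [abs_lt]
          constructor <;> linarith
        linarith
      · have h1 := hi e3 he3
        have habs : |e3 - ((e1 + e2) / 2 - lam/2 + (2:ℕ) * lam)| < ε * lam := by
          push_cast
          have h0 : e3 - ((e1 + e2) / 2 - lam/2 + 2 * lam) = 0 := by
            rw [hlam_def]; ring
          rw [h0, abs_zero]
          positivity
        linarith
    · -- k = 4
      have hlam : 0 < ((e3 + e4) / 2 - (e1 + e2) / 2) / 2 := by linarith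
      set lam := ((e3 + e4) / 2 - (e1 + e2) / 2) / 2 with hlam_def
      have hεlam : lam / 2 ≤ ε * lam := by
        have := mul_le_mul_of_nonneg_right hε2 hlam.le
        linarith
      obtain ⟨i, hik, hi⟩ := hA ((e1 + e2) / 2 - lam/2) lam hlam
      have hgBlam : e2 - e1 < lam := by rw [hlam_def]; linarith
      have hgAlam : e4 - e3 < lam := by rw [hlam_def]; linarith
      have hAB : (e1 + e2) / 2 + 2 * lam = (e3 + e4) / 2 := by rw [hlam_def]; ring
      interval_cases i
      · have h1 := hi e1 he1
        have habs : |e1 - ((e1 + e2) / 2 - lam/2 + (0:ℕ) * lam)| < ε * lam := by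
          push_cast
          rw [abs_lt]
          constructor <;> linarith
        linarith
      · have h1 := hi e2 he2
        have habs : |e2 - ((e1 + e2) / 2 - lam/2 + (1:ℕ) * lam)| < ε * lam := by
          push_cast
          rw [abs_lt]
          constructor <;> linarith
        linarith
      · have h1 := hi e3 he3
        have habs : |e3 - ((e1 + e2) / 2 - lam/2 + (2:ℕ) * lam)| < ε * lam := by
          push_cast
          rw [abs_lt]
          constructor <;> linarith
        linarith
      · have h1 := hi e4 he4
        have habs : |e4 - ((e1 + e2) / 2 - lam/2 + (3:ℕ) * lam)| < ε * lam := by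
          push_cast
          rw [abs_lt]
          constructor <;> linarith
        linarith
  intro x hx y hy
  by_contra hne
  rcases lt_or_gt_of_ne hne with h | h
  · exact key x y hx hy h
  · exact key y x hy hx h

theorem finite_of_no_accPt {S : Set ℝ} (hb : IsBounded S)
    (h : ∀ z : ℝ, ¬ AccPt z (𝓟 S)) : S.Finite := by
  by_contra hinf
  have hinf' : S.Infinite := hinf
  obtain ⟨z, _, hz⟩ := hinf'.exists_accPt_of_subset_isCompact
    (Metric.isCompact_of_isClosed_isBounded isClosed_closure hb.closure) subset_closure
  exact h z hz

theorem countable_of_accPts_subsingleton {F : Set ℝ} (hb : IsBounded F)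
    (hsub : {x : ℝ | AccPt x (𝓟 F)}.Subsingleton) : F.Countable := by
  by_cases hA : ∃ x₀, AccPt x₀ (𝓟 F)
  · obtain ⟨x₀, hx₀⟩ := hA
    have hFsub : F ⊆ {x₀} ∪ ⋃ n : ℕ, {z ∈ F | 1 / ((n:ℝ) + 1) ≤ |z - x₀|} := by
      intro z hz
      by_cases hzx : z = x₀
      · exact Or.inl hzx
      · have hpos : 0 < |z - x₀| := by rw [abs_pos, sub_ne_zero]; exact hzx
        obtain ⟨n, hn⟩ := exists_nat_one_div_lt hpos
        exact Or.inr (mem_iUnion.mpr ⟨n, hz, hn.le⟩)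
    refine Set.Countable.mono hFsub ?_
    refine (countable_singleton x₀).union (countable_iUnion fun n => Set.Finite.countable ?_)
    apply finite_of_no_accPt (hb.subset (sep_subset _ _))
    intro z hz
    have hzF : AccPt z (𝓟 F) := hz.mono (principal_mono.mpr (sep_subset _ _))
    have hzx₀ : z = x₀ := hsub hzF hx₀
    have hclos : z ∈ closure {z : ℝ | z ∈ F ∧ 1 / ((n:ℝ) + 1) ≤ |z - x₀|} :=
      mem_closure_iff_clusterPt.mpr (hz.clusterPt)
    have hclosed : IsClosed {w : ℝ | 1 / ((n:ℝ) + 1) ≤ |w - x₀|} := by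
      apply isClosed_le continuous_const
      exact (continuous_id.sub continuous_const).abs
    have : z ∈ {w : ℝ | 1 / ((n:ℝ) + 1) ≤ |w - x₀|} := by
      apply hclosed.closure_subset_iff.mpr (fun w hw => hw.2) hclos
    rw [hzx₀] at this
    simp only [mem_setOf_eq, sub_self, abs_zero] at this
    have : (0:ℝ) < 1 / ((n:ℝ) + 1) := by positivity
    linarith [this]
  · push_neg at hA
    exact (finite_of_no_accPt hb hA).countable

theorem exists_normal {k : ℕ} {ε : ℝ} {S : Set ℝ} (hb : IsBounded S) (hA : Avoids k ε S) :
    ∃ G : Set ℝ, IsClosed G ∧ G ⊆ Icc 0 1 ∧ Avoids k ε G ∧ dimH S ≤ dimH G := by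
  obtain ⟨r, hr⟩ := hb.subset_closedBall (0 : ℝ)
  set R := max r 1 with hR
  have hR1 : (1:ℝ) ≤ R := le_max_right _ _
  have hR0 : (0:ℝ) < R := by linarith
  have hsub : closure S ⊆ Icc (-R) R := by
    have : closure S ⊆ Metric.closedBall 0 R := by
      apply closure_minimal (hr.trans (Metric.closedBall_subset_closedBall (le_max_left _ _)))
        Metric.isClosed_closedBall
    simpa [Real.closedBall_eq_Icc] using this
  set c := 1 / (2 * R) with hc
  have hc0 : 0 < c := by positivity
  refine ⟨(fun x => c * x + 1/2) '' closure S, ?_, ?_, avoids_affine (avoids_closure hA) hc0,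
    (dimH_mono subset_closure).trans (dimH_affine (closure S) hc0).ge⟩
  · have hK : IsCompact (closure S) :=
      Metric.isCompact_of_isClosed_isBounded isClosed_closure hb.closure
    exact (hK.image (by continuity)).isClosed
  · rintro y ⟨x, hx, rfl⟩
    have h1 := (hsub hx).1
    have h2 := (hsub hx).2
    have hcx1 : c * x ≤ 1/2 := by
      rw [hc]
      rw [div_mul_eq_mul_div, div_le_iff₀ (by positivity)]
      nlinarith
    have hcx2 : -(1/2) ≤ c * x := by
      rw [hc, div_mul_eq_mul_div, le_div_iff₀ (by positivity)]
      nlinarith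
    constructor <;> simp <;> linarith


theorem exists_free1 (k m : ℕ) (hm : 1 ≤ m) (hmk : m + 1 ≤ k) (a lam : ℝ)
    (hlam : 0 < lam) (u v : ℝ) (h1 : v - u ≤ m * lam) :
    ∃ i, i < k ∧ a + (i:ℝ) * lam ∉ Set.Ioo u v := by
  have hcard := count_in_interval a lam hlam k m hm u v h1
  have : ¬ (Finset.range k ⊆ (Finset.range k).filter
      (fun i : ℕ => a + (i:ℝ) * lam ∈ Set.Ioo u v)) := by
    intro hsub
    have := Finset.card_le_card hsub
    rw [Finset.card_range] at this
    omega
  obtain ⟨i, hik, hiS⟩ := Finset.not_subset.mp this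
  refine ⟨i, Finset.mem_range.mp hik, fun hmem => hiS (Finset.mem_filter.mpr ⟨hik, hmem⟩)⟩

theorem avoids_union (k m : ℕ) (ε : ℝ) (hε0 : 0 < ε) (hε1 : ε < 1) (hk : 3 ≤ k)
    (hm1 : 1 ≤ m) (h2m : 2 * m + 1 ≤ k) (hm2ε : 2 * ε < (m:ℝ))
    (K : ℕ → Set ℝ) (b c : ℕ → ℝ)
    (hb0 : ∀ n, 0 < b n) (hc0 : ∀ n, 0 < c n)
    (hKav : ∀ n, Avoids k ε (K n))
    (hKIcc : ∀ n, K n ⊆ Icc (b n) (b n + c n))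
    (H1 : ∀ n, c n * (2*((k:ℝ)+1)) ≤ ((m:ℝ) - 2*ε) * b n)
    (H2 : ∀ n m', n < m' → (b m' + c m') * (2*((k:ℝ)+1)) ≤ ((m:ℝ) - 2*ε) * b n)
    (H3 : ∀ n m', n < m' → b m' + c m' ≤ b n / 2) :
    Avoids k ε ({0} ∪ ⋃ n, K n) := by
  classical
  intro a lam hlam
  have hεlam : ε * lam < lam := mul_lt_of_lt_one_left hlam hε1
  have hεlam0 : 0 < ε * lam := by positivity
  have hk0 : (0:ℝ) < 2*((k:ℝ)+1) := by positivity
  have hmε0 : (0:ℝ) ≤ (m:ℝ) - 2*ε := by linarith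
  -- distance bound between progression points
  have hdij : ∀ i j : ℕ, i < k → j < k →
      |(a + (j:ℝ)*lam) - (a + (i:ℝ)*lam)| ≤ ((k:ℝ) - 1) * lam := by
    intro i j hik hjk
    have hi' : (i:ℝ) ≤ (k:ℝ) - 1 := by
      have : (i:ℝ) + 1 ≤ (k:ℝ) := by exact_mod_cast hik
      linarith
    have hj' : (j:ℝ) ≤ (k:ℝ) - 1 := by
      have : (j:ℝ) + 1 ≤ (k:ℝ) := by exact_mod_cast hjk
      linarith
    have hi0 : (0:ℝ) ≤ (i:ℝ) := Nat.cast_nonneg i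
    have hj0 : (0:ℝ) ≤ (j:ℝ) := Nat.cast_nonneg j
    rw [show (a + (j:ℝ)*lam) - (a + (i:ℝ)*lam) = ((j:ℝ) - (i:ℝ)) * lam by ring,
      abs_mul, abs_of_pos hlam]
    apply mul_le_mul_of_nonneg_right _ hlam.le
    rw [abs_le]
    constructor <;> linarith
  by_cases hW : ∃ n, ∃ x ∈ K n, ∃ j, j < k ∧ |x - (a + (j:ℝ)*lam)| < ε*lam
  · -- some copy is near the progression
    set n := Nat.find hW with hndef
    obtain ⟨w₀, hw₀K, j₀, hj₀k, hw₀lt⟩ := Nat.find_spec hW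
    have hmin : ∀ m', m' < n → ¬ (∃ x ∈ K m', ∃ j, j < k ∧ |x - (a + (j:ℝ)*lam)| < ε*lam) :=
      fun m' hm' => Nat.find_min hW hm'
    have hw₀I := hKIcc n hw₀K
    by_cases hA : ((k:ℝ)+1) * lam < b n / 2
    · -- small lam : use the avoidance of K n itself
      obtain ⟨i, hik, hi⟩ := hKav n a lam hlam
      refine ⟨i, hik, fun x hx => ?_⟩
      by_contra hcon
      push_neg at hcon
      have habs := abs_lt.mp hcon
      have hd := hdij i j₀ hik hj₀k
      have habs0 := abs_lt.mp hw₀lt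
      -- main chain given 0 ≤ x ≤ b n / 2
      have chain : ∀ x' : ℝ, 0 ≤ x' → x' ≤ b n / 2 → |x' - (a + (i:ℝ)*lam)| < ε*lam → False := by
        intro x' hx'0 hx'b hx'lt
        have htri : |w₀ - x'| ≤ |w₀ - (a + (j₀:ℝ)*lam)| + |(a + (j₀:ℝ)*lam) - (a + (i:ℝ)*lam)|
            + |(a + (i:ℝ)*lam) - x'| := by
          calc |w₀ - x'| ≤ |w₀ - (a + (j₀:ℝ)*lam)| + |(a + (j₀:ℝ)*lam) - x'| := abs_sub_le _ _ _
            _ ≤ _ := by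
                have := abs_sub_le (a + (j₀:ℝ)*lam) (a + (i:ℝ)*lam) x'
                linarith
        have h1 : |(a + (i:ℝ)*lam) - x'| < ε * lam := by
          rw [abs_sub_comm]; exact hx'lt
        have h2 : w₀ - x' ≤ |w₀ - x'| := le_abs_self _
        have h3 : b n ≤ w₀ := hw₀I.1
        linarith
      rcases hx with hx0 | hxU
      · rw [mem_singleton_iff] at hx0
        subst hx0
        exact chain 0 le_rfl (by linarith [hb0 n]) hcon
      · rw [mem_iUnion] at hxU
        obtain ⟨m', hxm⟩ := hxU
        rcases lt_trichotomy m' n with h | h | h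
        · exact hmin m' h ⟨x, hxm, i, hik, hcon⟩
        · subst h
          exact absurd (hi x hxm) (by push_neg; exact hcon)
        · have hxI := hKIcc m' hxm
          exact chain x (by linarith [hxI.1, hb0 m']) ((hxI.2).trans (H3 n m' h)) hcon
    · -- large lam : two clusters, counting argument
      push_neg at hA
      have hBn : b n ≤ 2*((k:ℝ)+1) * lam := by linarith
      have hcnlam : c n ≤ ((m:ℝ) - 2*ε) * lam := by
        have h1 := H1 n
        have h2 : ((m:ℝ) - 2*ε) * b n ≤ ((m:ℝ) - 2*ε) * (2*((k:ℝ)+1)*lam) :=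
          mul_le_mul_of_nonneg_left hBn hmε0
        have h3 : c n * (2*((k:ℝ)+1)) ≤ ((m:ℝ) - 2*ε) * lam * (2*((k:ℝ)+1)) := by nlinarith
        exact le_of_mul_le_mul_right h3 hk0
      have htail : ∀ m', n < m' → b m' + c m' ≤ ((m:ℝ) - 2*ε) * lam := by
        intro m' h
        have h1 := H2 n m' h
        have h3 : (b m' + c m') * (2*((k:ℝ)+1)) ≤ ((m:ℝ) - 2*ε) * lam * (2*((k:ℝ)+1)) := by
          nlinarith [mul_le_mul_of_nonneg_left hBn hmε0]
        exact le_of_mul_le_mul_right h3 hk0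
      obtain ⟨i, hik, hfree1, hfree2⟩ := exists_free k m hm1 h2m a lam hlam
        (b n - ε*lam) (b n + c n + ε*lam) (-(ε*lam)) (((m:ℝ) - 2*ε) * lam + ε*lam)
        (by linarith) (by linarith)
      refine ⟨i, hik, fun x hx => ?_⟩
      by_contra hcon
      push_neg at hcon
      have habs := abs_lt.mp hcon
      rcases hx with hx0 | hxU
      · rw [mem_singleton_iff] at hx0
        subst hx0
        exact hfree2 ⟨by linarith, by nlinarith⟩
      · rw [mem_iUnion] at hxU
        obtain ⟨m', hxm⟩ := hxU
        have hxI := hKIcc m' hxm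
        rcases lt_trichotomy m' n with h | h | h
        · exact hmin m' h ⟨x, hxm, i, hik, hcon⟩
        · subst h
          exact hfree1 ⟨by linarith [hxI.1], by linarith [hxI.2]⟩
        · have hxle := (hxI.2).trans (htail m' h)
          have hx0' : 0 ≤ x := by linarith [hxI.1, (hb0 m').le]
          exact hfree2 ⟨by linarith, by linarith⟩
  · -- no copy is near the progression
    push_neg at hW
    obtain ⟨i, hik, hfree⟩ := exists_free1 k 2 (by omega) (by omega) a lam hlam
      (-(ε*lam)) (ε*lam) (by push_cast; linarith)
    refine ⟨i, hik, fun x hx => ?_⟩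
    by_contra hcon
    push_neg at hcon
    rcases hx with hx0 | hxU
    · rw [mem_singleton_iff] at hx0
      subst hx0
      have habs := abs_lt.mp hcon
      exact hfree ⟨by linarith, by linarith⟩
    · rw [mem_iUnion] at hxU
      obtain ⟨m', hxm⟩ := hxU
      exact absurd hcon (not_lt.mpr (hW m' x hxm i hik))

theorem main_construction (k : ℕ) (ε : ℝ) (hk : 3 ≤ k) (hε0 : 0 < ε) (hε1 : ε < 1)
    (hcase : ε < 1/2 ∨ 5 ≤ k) (G : ℕ → Set ℝ) (hGcl : ∀ n, IsClosed (G n))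
    (hGsub : ∀ n, G n ⊆ Icc 0 1) (hGav : ∀ n, Avoids k ε (G n)) :
    ∃ E : Set ℝ, IsCompact E ∧ E ⊆ Icc 0 1 ∧ Avoids k ε E ∧
      dimH E = ⨆ n, dimH (G n) := by
  classical
  -- parameters
  set m : ℕ := if ε < 1/2 then 1 else 2 with hm
  have hm1 : 1 ≤ m := by rw [hm]; split <;> omega
  have h2m : 2 * m + 1 ≤ k := by
    rw [hm]; split
    · omega
    · rcases hcase with h | h
      · tauto
      · omega
  have hm2ε : 2 * ε < (m : ℝ) := by
    rw [hm]; split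
    · push_cast; linarith
    · push_cast; linarith
  set t : ℝ := min (1/2 : ℝ) (((m : ℝ) - 2*ε)/(4*((k:ℝ)+1))) with ht
  have hk0 : (0:ℝ) < (k:ℝ) + 1 := by positivity
  have ht0 : 0 < t := by
    apply lt_min (by norm_num)
    apply div_pos (by linarith) (by positivity)
  have ht12 : t ≤ 1/2 := min_le_left _ _
  have ht1 : t < 1 := by linarith
  have htB : t ≤ ((m : ℝ) - 2*ε)/(4*((k:ℝ)+1)) := min_le_right _ _
  have htkey : 2*t*((k:ℝ)+1) + 2*ε ≤ (m:ℝ) := by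
    have hq : ((m:ℝ)-2*ε)/(4*((k:ℝ)+1)) * (4*((k:ℝ)+1)) = (m:ℝ)-2*ε :=
      div_mul_cancel₀ _ (by positivity)
    have h2 := mul_le_mul_of_nonneg_right htB (show (0:ℝ) ≤ 4*((k:ℝ)+1) by positivity)
    rw [hq] at h2
    linarith
  set b : ℕ → ℝ := fun n => t ^ (2*n+2) with hbdef
  set c : ℕ → ℝ := fun n => t ^ (2*n+3) with hcdef
  set K : ℕ → Set ℝ := fun n => (fun x : ℝ => c n * x + b n) '' G n with hKdef
  have hb0 : ∀ n, 0 < b n := fun n => pow_pos ht0 _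
  have hc0 : ∀ n, 0 < c n := fun n => pow_pos ht0 _
  have hcb : ∀ n, c n = b n * t := by
    intro n
    show t ^ (2*n+3) = t ^ (2*n+2) * t
    rw [← pow_succ]
  have hb2 : ∀ n m', n < m' → b m' ≤ b n * t^2 ∧ c m' ≤ b n * t^2 := by
    intro n m' h
    have he : b n * t^2 = t ^ (2*n+4) := by
      show t ^ (2*n+2) * t^2 = t ^ (2*n+4)
      rw [← pow_add]
    constructor
    · rw [he]
      exact pow_le_pow_of_le_one ht0.le ht1.le (by omega)
    · rw [he]
      exact pow_le_pow_of_le_one ht0.le ht1.le (by omega)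
  have hKIcc : ∀ n, K n ⊆ Icc (b n) (b n + c n) := by
    intro n x hx
    obtain ⟨g, hg, rfl⟩ := hx
    obtain ⟨hg0, hg1⟩ := hGsub n hg
    have hmul1 : 0 ≤ c n * g := mul_nonneg (hc0 n).le hg0
    have hmul2 : c n * g ≤ c n := by nlinarith [hc0 n]
    constructor
    · dsimp only
      linarith
    · dsimp only
      linarith
  have hKav : ∀ n, Avoids k ε (K n) := fun n => avoids_affine (hGav n) (hc0 n)
  have H1 : ∀ n, c n * (2*((k:ℝ)+1)) ≤ ((m:ℝ) - 2*ε) * b n := by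
    intro n
    rw [hcb n]
    nlinarith [hb0 n]
  have hsq : t^2 ≤ 1/4 := by nlinarith
  have H3 : ∀ n m', n < m' → b m' + c m' ≤ b n / 2 := by
    intro n m' h
    obtain ⟨h1, h2⟩ := hb2 n m' h
    have := mul_le_mul_of_nonneg_left hsq (hb0 n).le
    linarith
  have H2 : ∀ n m', n < m' → (b m' + c m') * (2*((k:ℝ)+1)) ≤ ((m:ℝ) - 2*ε) * b n := by
    intro n m' h
    obtain ⟨h1, h2⟩ := hb2 n m' h
    have hs1 : b m' + c m' ≤ 2*(b n * t^2) := by linarith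
    have hs2 : (b m' + c m') * (2*((k:ℝ)+1)) ≤ 2*(b n * t^2) * (2*((k:ℝ)+1)) :=
      mul_le_mul_of_nonneg_right hs1 (by positivity)
    have hs3 : 2*(b n * t^2) * (2*((k:ℝ)+1)) = ((2*t*((k:ℝ)+1)) * (2*t)) * b n := by ring
    have hs4 : (2*t*((k:ℝ)+1)) * (2*t) ≤ ((m:ℝ) - 2*ε) * 1 := by
      apply mul_le_mul (by linarith) (by linarith) (by linarith) (by linarith)
    have hs5 : ((2*t*((k:ℝ)+1)) * (2*t)) * b n ≤ (((m:ℝ) - 2*ε) * 1) * b n :=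
      mul_le_mul_of_nonneg_right hs4 (hb0 n).le
    calc (b m' + c m') * (2*((k:ℝ)+1)) ≤ _ := hs2
      _ = _ := hs3
      _ ≤ (((m:ℝ) - 2*ε) * 1) * b n := hs5
      _ = ((m:ℝ) - 2*ε) * b n := by ring
  have hAv : Avoids k ε ({0} ∪ ⋃ n, K n) :=
    avoids_union k m ε hε0 hε1 hk hm1 h2m hm2ε K b c hb0 hc0 hKav hKIcc H1 H2 H3
  have hKsub01 : ∀ n, K n ⊆ Icc 0 1 := by
    intro n
    refine (hKIcc n).trans (Icc_subset_Icc (hb0 n).le ?_)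
    have h1 : b n ≤ t^2 := by
      show t ^ (2*n+2) ≤ t^2
      exact pow_le_pow_of_le_one ht0.le ht1.le (by omega)
    have h2 : c n ≤ t^2 := by
      show t ^ (2*n+3) ≤ t^2
      exact pow_le_pow_of_le_one ht0.le ht1.le (by omega)
    nlinarith
  have hEsub : ({0} ∪ ⋃ n, K n) ⊆ Icc 0 1 := by
    apply union_subset
    · intro x hx
      rw [mem_singleton_iff] at hx
      subst hx
      exact ⟨le_rfl, zero_le_one⟩
    · exact iUnion_subset hKsub01
  have hKcl : ∀ n, IsClosed (K n) := by
    intro n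
    have hcomp : IsCompact (G n) :=
      Metric.isCompact_of_isClosed_isBounded (hGcl n) ((Metric.isBounded_Icc 0 1).subset (hGsub n))
    exact (hcomp.image ((continuous_const.mul continuous_id).add continuous_const)).isClosed
  have hrep : ({0} ∪ ⋃ n, K n) =
      ⋂ N : ℕ, ((⋃ n ∈ Finset.range N, K n) ∪ Icc 0 (b N + c N)) := by
    ext x
    constructor
    · intro hx
      rw [mem_iInter]
      intro N
      rcases hx with hx0 | hxU
      · rw [mem_singleton_iff] at hx0
        subst hx0
        exact Or.inr ⟨le_rfl, by positivity⟩
      · rw [mem_iUnion] at hxU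
        obtain ⟨n, hxn⟩ := hxU
        by_cases hnN : n < N
        · exact Or.inl (mem_biUnion (Finset.mem_range.mpr hnN) hxn)
        · push_neg at hnN
          have hxI := hKIcc n hxn
          refine Or.inr ⟨by linarith [hxI.1, (hb0 n).le], ?_⟩
          rcases eq_or_lt_of_le hnN with h | h
          · subst h
            exact hxI.2
          · have := H3 N n h
            have := hxI.2
            have := hc0 N
            have := hb0 N
            linarith
    · intro hx
      rw [mem_iInter] at hx
      by_cases hxK : ∃ n, x ∈ K n
      · obtain ⟨n, hn⟩ := hxK
        exact Or.inr (mem_iUnion.mpr ⟨n, hn⟩)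
      · push_neg at hxK
        have hxb : ∀ N, x ∈ Icc 0 (b N + c N) := by
          intro N
          rcases hx N with h | h
          · rw [mem_iUnion₂] at h
            obtain ⟨n, _, hn⟩ := h
            exact absurd hn (hxK n)
          · exact h
        have hxle : ∀ N : ℕ, x ≤ 2 * t^N := by
          intro N
          have h1 : b N ≤ t^N := by
            show t ^ (2*N+2) ≤ t^N
            exact pow_le_pow_of_le_one ht0.le ht1.le (by omega)
          have h2 : c N ≤ t^N := by
            show t ^ (2*N+3) ≤ t^N
            exact pow_le_pow_of_le_one ht0.le ht1.le (by omega)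
          have := (hxb N).2
          linarith
        have hx0 : x ≤ 0 := by
          have htend : Tendsto (fun N : ℕ => 2 * t^N) atTop (𝓝 0) := by
            have := tendsto_pow_atTop_nhds_zero_of_lt_one ht0.le ht1
            simpa using this.const_mul 2
          exact ge_of_tendsto' htend hxle
        have hx0' : 0 ≤ x := (hxb 0).1
        left
        rw [mem_singleton_iff]
        linarith
  have hEcl : IsClosed ({0} ∪ ⋃ n, K n) := by
    rw [hrep]
    exact isClosed_iInter fun N =>
      ((Set.Finite.isClosed_biUnion (Finset.range N).finite_toSet (fun n _ => hKcl n)).union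
        isClosed_Icc)
  have hdim : dimH ({0} ∪ ⋃ n, K n) = ⨆ n, dimH (G n) := by
    rw [dimH_union, dimH_iUnion]
    have heach : ∀ n, dimH (K n) = dimH (G n) := fun n => dimH_affine (G n) (hc0 n)
    simp_rw [heach]
    rw [dimH_singleton, max_eq_right zero_le]
  exact ⟨{0} ∪ ⋃ n, K n,
    Metric.isCompact_of_isClosed_isBounded hEcl ((Metric.isBounded_Icc 0 1).subset hEsub),
    hEsub, hAv, hdim⟩


theorem dAvoid_le_one (k : ℕ) (ε : ℝ) : dAvoid k ε ≤ 1 := by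
  refine iSup₂_le fun E _ => ?_
  exact (dimH_mono (subset_univ E)).trans_eq Real.dimH_univ

theorem stmt9 (k : ℕ) (hk : 3 ≤ k) (ε : ℝ) (hε0 : 0 < ε) (hε1 : ε < 1) :
    ∃ E : Set ℝ, IsCompact E ∧ E ⊆ Set.Icc 0 1 ∧ Avoids k ε E ∧ dimH E = dAvoid k ε := by
  by_cases hd0 : dAvoid k ε = 0
  · refine ⟨∅, isCompact_empty, empty_subset _, fun a lam hlam => ⟨0, by omega, by simp⟩,
      by rw [dimH_empty, hd0]⟩
  · have hdle : dAvoid k ε ≤ 1 := dAvoid_le_one k ε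
    have hdtop : dAvoid k ε ≠ ⊤ := by
      intro h
      rw [h] at hdle
      simp at hdle
    have hcase : ε < 1/2 ∨ 5 ≤ k := by
      by_contra hcon
      push_neg at hcon
      obtain ⟨h1, h2⟩ := hcon
      apply hd0
      refine le_antisymm (iSup₂_le fun F hF => ?_) zero_le
      have hcnt := countable_of_accPts_subsingleton hF.1
        (accPts_subsingleton hk (by omega) h1 hF.2)
      rw [hcnt.dimH_zero]
    have hGex : ∀ n : ℕ, ∃ Gn : Set ℝ, IsClosed Gn ∧ Gn ⊆ Icc 0 1 ∧ Avoids k ε Gn ∧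
        dAvoid k ε - ((n:ℝ≥0∞) + 1)⁻¹ < dimH Gn := by
      intro n
      have hlt : dAvoid k ε - ((n:ℝ≥0∞) + 1)⁻¹ < dAvoid k ε :=
        ENNReal.sub_lt_self hdtop hd0 (by simp)
      conv_rhs at hlt => rw [dAvoid]
      obtain ⟨F, hF⟩ := lt_iSup_iff.mp hlt
      by_cases hPF : Bornology.IsBounded F ∧ Avoids k ε F
      · rw [iSup_pos hPF] at hF
        obtain ⟨Gn, hg1, hg2, hg3, hg4⟩ := exists_normal hPF.1 hPF.2
        exact ⟨Gn, hg1, hg2, hg3, hF.trans_le hg4⟩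
      · rw [iSup_neg hPF] at hF
        exact absurd hF (by simp)
    choose G hGcl hGsub hGav hGdim using hGex
    obtain ⟨E, hEc, hEsub, hEav, hEdim⟩ :=
      main_construction k ε hk hε0 hε1 hcase G hGcl hGsub hGav
    refine ⟨E, hEc, hEsub, hEav, ?_⟩
    rw [hEdim]
    apply le_antisymm
    · refine iSup_le fun n => ?_
      have hb : Bornology.IsBounded (G n) := (Metric.isBounded_Icc (0:ℝ) 1).subset (hGsub n)
      exact le_iSup₂ (f := fun (F : Set ℝ) (_ : Bornology.IsBounded F ∧ Avoids k ε F) => dimH F)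
        (G n) ⟨hb, hGav n⟩
    · apply le_of_forall_lt
      intro q hq
      have hq' : dAvoid k ε - q ≠ 0 := (tsub_pos_iff_lt.mpr hq).ne'
      obtain ⟨n, hn⟩ := ENNReal.exists_inv_nat_lt hq'
      have hqtop : q ≠ ⊤ := (lt_of_lt_of_le hq hdle).trans ENNReal.one_lt_top |>.ne
      have hmono : ((n:ℝ≥0∞)+1)⁻¹ ≤ (n:ℝ≥0∞)⁻¹ :=
        ENNReal.inv_le_inv.mpr le_self_add
      have hlt2 : q + ((n:ℝ≥0∞)+1)⁻¹ < dAvoid k ε := by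
        calc q + ((n:ℝ≥0∞)+1)⁻¹ ≤ q + (n:ℝ≥0∞)⁻¹ := add_le_add_right hmono q
          _ < q + (dAvoid k ε - q) := ENNReal.add_lt_add_left hqtop hn
          _ = dAvoid k ε := add_tsub_cancel_of_le hq.le
      have hinvtop : ((n:ℝ≥0∞)+1)⁻¹ ≠ ⊤ := by
        simp [ENNReal.inv_ne_top]
      have hlt3 : q < dAvoid k ε - ((n:ℝ≥0∞)+1)⁻¹ :=
        (ENNReal.cancel_of_ne hinvtop).lt_tsub_iff_right.mpr hlt2
      exact lt_of_lt_of_le (hlt3.trans (hGdim n)) (le_iSup (fun n => dimH (G n)) n)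
end

section
/- Let M ≥ 1 and n ≥ 1 be integers with n ≤ M, let α ∈ (0,1), and let p_1, ..., p_n ∈ (0,1) satisfy p_1 + ⋯ + p_n ≤ α. If s ≥ 0 satisfies p_1^s + ⋯ + p_n^s = 1, then s ≤ log M / (log M − log α). Moreover, equality is attained when n = M and p_1 = ⋯ = p_M = α/M. -/
theorem stmt13 (M n : ℕ) (hM : 1 ≤ M) (hn : 1 ≤ n) (hnM : n ≤ M)
    (α : ℝ) (hα : α ∈ Set.Ioo (0 : ℝ) 1) :
    (∀ p : Fin n → ℝ, (∀ i, p i ∈ Set.Ioo (0 : ℝ) 1) → (∑ i, p i) ≤ α →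
      ∀ s : ℝ, 0 ≤ s → (∑ i, p i ^ s) = 1 →
        s ≤ Real.log M / (Real.log M - Real.log α)) ∧
    (∀ s : ℝ, 0 ≤ s → (∑ _i : Fin M, (α / M) ^ s) = 1 →
        s = Real.log M / (Real.log M - Real.log α)) := by
  obtain ⟨hα0, hα1⟩ := hα
  have hMpos : (0:ℝ) < (M:ℝ) := by exact_mod_cast hM
  have hnpos : (0:ℝ) < (n:ℝ) := by exact_mod_cast hn
  have hlogM : 0 ≤ Real.log M := Real.log_nonneg (by exact_mod_cast hM)
  have hlogα : Real.log α < 0 := Real.log_neg hα0 hα1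
  have hD : 0 < Real.log M - Real.log α := by linarith
  constructor
  · intro p hp hsum s hs hval
    -- key: show 1 ≤ M^(1-s) * α^s, after ruling out s ≥ 1 and s = 0
    rcases eq_or_lt_of_le hs with rfl | hs0
    · -- s = 0 : trivial bound
      exact div_nonneg hlogM hD.le
    have hplt : s < 1 := by
      by_contra h
      push_neg at h
      have : (∑ i, p i ^ s) ≤ ∑ i, p i := by
        apply Finset.sum_le_sum
        intro i _
        have := Real.rpow_le_rpow_of_exponent_ge (hp i).1 (hp i).2.le h
        simpa using this
      linarith [hval, hsum, hα1, this]
    -- Jensen with equal weights 1/n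
    have hconc := Real.concaveOn_rpow hs hplt.le
    have hw : ∑ _i : Fin n, ((n:ℝ)⁻¹) = 1 := by
      simp [Finset.sum_const, Finset.card_univ]
      field_simp
    have hjen := hconc.le_map_sum (t := Finset.univ) (w := fun _ : Fin n => (n:ℝ)⁻¹)
      (p := p) (fun i _ => by positivity) hw (fun i _ => (hp i).1.le)
    simp only [smul_eq_mul, ← Finset.mul_sum] at hjen
    -- hjen : (n)⁻¹ * ∑ p_i^s ≤ ((n)⁻¹ * ∑ p_i)^s
    rw [hval, mul_one] at hjen
    have hsum0 : 0 ≤ ∑ i, p i := Finset.sum_nonneg fun i _ => (hp i).1.le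
    have h2 : ((n:ℝ)⁻¹ * ∑ i, p i) ^ s ≤ ((n:ℝ)⁻¹ * α) ^ s :=
      Real.rpow_le_rpow (by positivity)
        (mul_le_mul_of_nonneg_left hsum (by positivity)) hs
    have h3 : (n:ℝ)⁻¹ ≤ ((n:ℝ) ^ s)⁻¹ * α ^ s := by
      have e : ((n:ℝ)⁻¹ * α) ^ s = ((n:ℝ) ^ s)⁻¹ * α ^ s := by
        rw [Real.mul_rpow (by positivity) hα0.le, Real.inv_rpow hnpos.le]
      rw [← e]
      exact hjen.trans h2
    have h4 : (1:ℝ) ≤ (n:ℝ) ^ (1-s) * α ^ s := by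
      have := mul_le_mul_of_nonneg_left h3 hnpos.le
      rw [mul_inv_cancel₀ hnpos.ne'] at this
      have e2 : (n:ℝ) ^ (1-s) = (n:ℝ) / (n:ℝ) ^ s := by
        rw [Real.rpow_sub hnpos, Real.rpow_one]
      rw [e2]
      calc (1:ℝ) ≤ (n:ℝ) * (((n:ℝ) ^ s)⁻¹ * α ^ s) := this
        _ = (n:ℝ) / (n:ℝ) ^ s * α ^ s := by ring
    have h5 : (1:ℝ) ≤ (M:ℝ) ^ (1-s) * α ^ s :=
      h4.trans (mul_le_mul_of_nonneg_right
        (Real.rpow_le_rpow hnpos.le (by exact_mod_cast hnM) (by linarith))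
        (Real.rpow_nonneg hα0.le s))
    have h6 : 0 ≤ (1-s) * Real.log M + s * Real.log α := by
      have := Real.log_nonneg h5
      rwa [Real.log_mul (by positivity) (by positivity), Real.log_rpow hMpos,
        Real.log_rpow hα0] at this
    rw [le_div_iff₀ hD]
    nlinarith [h6]
  · intro s hs hval
    have hc : (0:ℝ) < α / M := by positivity
    rw [Finset.sum_const, Finset.card_univ, Fintype.card_fin, nsmul_eq_mul] at hval
    have := congrArg Real.log hval
    rw [Real.log_mul (by positivity) (by positivity), Real.log_rpow hc,
      Real.log_div (ne_of_gt hα0) (ne_of_gt hMpos), Real.log_one] at this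
    field_simp
    linarith [this]
end
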